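/- arXiv:1410.3540 — 9 statements merged into one kernel-verified Lean document; each statement's English description precedes it below -/
import Mathlib

section
/- Let F be a finite field with q elements and for each d ≥ 1 let N(d) denote the number of monic irreducible polynomials of degree d over F. Then for every n ≥ 1, the coefficient of X^n in the formal power series ∏_{d=1}^{n} ((1 − X^d)⁻¹)^{N(d)} (equivalently, in ∏_{d≥1} (1 − X^d)^{−N(d)}, since only factors with d ≤ n contribute) is equal to q^n; equivalently, this product agrees with the power series (1 − qX)⁻¹ in all coefficients. -/
open Polynomial PowerSeries UniqueFactorizationMonoid

section Aux

variable (F : Type*) [Field F] [Fintype F] [DecidableEq F]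


lemma constCoeff_Xpow (d : ℕ) (hd : 1 ≤ d) :
    PowerSeries.constantCoeff ((X : ℚ⟦X⟧) ^ d) = 0 := by
  rw [← coeff_zero_eq_constantCoeff, PowerSeries.coeff_X_pow, if_neg (by omega)]

lemma coeff_inv_one_sub_Xpow (d : ℕ) (hd : 1 ≤ d) (m : ℕ) :
    PowerSeries.coeff m ((1 - (PowerSeries.X : PowerSeries ℚ) ^ d)⁻¹)
      = if d ∣ m then 1 else 0 := by
  have h1 : PowerSeries.constantCoeff (1 - (X : ℚ⟦X⟧) ^ d) ≠ 0 := by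
    simp [constCoeff_Xpow d hd]
  have key : ((1 - (X : ℚ⟦X⟧) ^ d)⁻¹)
      = PowerSeries.mk (fun m => if d ∣ m then 1 else 0) := by
    rw [PowerSeries.inv_eq_iff_mul_eq_one h1]
    ext k
    rw [mul_sub, mul_one, map_sub]
    rcases Nat.eq_zero_or_pos k with rfl | hk
    · simp [PowerSeries.coeff_zero_eq_constantCoeff, map_mul, constCoeff_Xpow d hd]
    · rw [PowerSeries.coeff_mul_X_pow', PowerSeries.coeff_mk, PowerSeries.coeff_one,
        if_neg (show ¬ k = 0 by omega)]
      by_cases hdk : d ≤ k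
      · rw [if_pos hdk, PowerSeries.coeff_mk]
        have hiff : d ∣ k ↔ d ∣ k - d := by
          constructor
          · intro h; exact (Nat.dvd_sub h dvd_rfl)
          · intro h; have := Nat.dvd_add h (dvd_refl d); rwa [Nat.sub_add_cancel hdk] at this
        simp only [hiff]; ring
      · rw [if_neg hdk, sub_zero, if_neg (fun h => hdk (Nat.le_of_dvd hk h))]
  rw [key, PowerSeries.coeff_mk]

lemma degree_sum_lt (n : ℕ) (f : Fin n → F) :
    (∑ i : Fin n, Polynomial.C (f i) * Polynomial.X ^ (i : ℕ)).degree < (n : WithBot ℕ) := by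
  apply lt_of_le_of_lt (degree_sum_le _ _)
  rw [Finset.sup_lt_iff (by exact_mod_cast WithBot.bot_lt_coe n)]
  intro i _
  exact lt_of_le_of_lt (degree_C_mul_X_pow_le _ _) (by exact_mod_cast i.2)

noncomputable def monicEquiv (n : ℕ) :
    {p : F[X] // p.Monic ∧ p.natDegree = n} ≃ (Fin n → F) where
  toFun p i := p.1.coeff i
  invFun f := ⟨Polynomial.X ^ n + ∑ i : Fin n, Polynomial.C (f i) * Polynomial.X ^ (i : ℕ),
    monic_X_pow_add (degree_sum_lt F n f),
    by
      rw [natDegree_eq_of_degree_eq_some (p := _)]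
      rw [degree_add_eq_left_of_degree_lt (by rw [degree_X_pow]; exact degree_sum_lt F n f),
        degree_X_pow]⟩
  left_inv p := by
    obtain ⟨p, hm, hd⟩ := p
    ext1
    dsimp only
    conv_rhs => rw [hm.as_sum]
    rw [hd, Fin.sum_univ_eq_sum_range (fun i => Polynomial.C (p.coeff i) * Polynomial.X ^ i)]
  right_inv f := by
    funext i
    dsimp only
    rw [coeff_add, Polynomial.coeff_X_pow, if_neg (by exact_mod_cast i.2.ne),
      finset_sum_coeff, zero_add]
    rw [Finset.sum_eq_single i]
    · simp
    · intro j _ hj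
      rw [Polynomial.coeff_C_mul, Polynomial.coeff_X_pow,
        if_neg (fun h => hj (Fin.val_inj.mp h.symm)), mul_zero]
    · intro h; exact absurd (Finset.mem_univ i) h

lemma card_monic (q : ℕ) (hq : q = Fintype.card F) (n : ℕ) :
    Nat.card {p : F[X] // p.Monic ∧ p.natDegree = n} = q ^ n := by
  rw [Nat.card_congr (monicEquiv F n), Nat.card_eq_fintype_card, Fintype.card_fun,
    Fintype.card_fin, hq]

lemma finite_monic_deg (d : ℕ) : {p : F[X] | p.Monic ∧ p.natDegree = d}.Finite := by
  have : Finite {p : F[X] // p.Monic ∧ p.natDegree = d} :=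
    Finite.of_equiv _ (monicEquiv F d).symm
  exact Set.finite_coe_iff.mp this

lemma finite_irr (n : ℕ) :
    {p : F[X] | (p.Monic ∧ Irreducible p) ∧ p.natDegree ≤ n}.Finite := by
  apply Set.Finite.subset (Set.Finite.biUnion (Set.finite_Iic n)
    (fun d _ => finite_monic_deg F d))
  intro p hp
  exact Set.mem_biUnion (Set.mem_Iic.mpr hp.2) ⟨hp.1.1, rfl⟩

noncomputable def T (n : ℕ) : Finset F[X] := (finite_irr F n).toFinset

lemma mem_T (n : ℕ) (p : F[X]) :
    p ∈ T F n ↔ (p.Monic ∧ Irreducible p) ∧ p.natDegree ≤ n := by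
  simp [T, Set.Finite.mem_toFinset]

lemma card_filter_T (N : ℕ → ℕ)
    (hN : ∀ d, N d = Nat.card {p : F[X] // p.Monic ∧ Irreducible p ∧ p.natDegree = d})
    (n d : ℕ) (hd : d ≤ n) :
    ((T F n).filter (fun π => π.natDegree = d)).card = N d := by
  have hfin : {p : F[X] | p.Monic ∧ Irreducible p ∧ p.natDegree = d}.Finite := by
    apply Set.Finite.subset (finite_monic_deg F d)
    exact fun p hp => ⟨hp.1, hp.2.2⟩
  have : (T F n).filter (fun π => π.natDegree = d) = hfin.toFinset := by
    ext p
    simp only [Finset.mem_filter, mem_T, Set.Finite.mem_toFinset, Set.mem_setOf_eq]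
    constructor
    · rintro ⟨⟨⟨h1, h2⟩, _⟩, h4⟩; exact ⟨h1, h2, h4⟩
    · rintro ⟨h1, h2, h3⟩; exact ⟨⟨⟨h1, h2⟩, h3 ▸ hd⟩, h3⟩
  rw [this, hN d]
  rw [← Set.ncard_eq_toFinset_card _ hfin, ← Nat.card_coe_set_eq]
  rfl

lemma nf_monic {p : F[X]} (π : F[X]) (hπ : π ∈ normalizedFactors p) : π.Monic := by
  have h1 := normalize_normalized_factor π hπ
  have h2 := irreducible_of_normalized_factor π hπ
  have := monic_normalize (p := π) (fun h => h2.ne_zero h)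
  rwa [h1] at this

lemma prod_nf {p : F[X]} (hp : p.Monic) : (normalizedFactors p).prod = p := by
  apply eq_of_monic_of_associated _ hp (prod_normalizedFactors hp.ne_zero)
  have := monic_multiset_prod_of_monic (normalizedFactors p) id (fun i hi => nf_monic F i hi)
  simpa using this

lemma nf_prod_pow (s : Finset F[X]) (k : F[X] → ℕ)
    (hs : ∀ π ∈ s, π.Monic ∧ Irreducible π) :
    normalizedFactors (∏ π ∈ s, π ^ k π) = ∑ π ∈ s, k π • ({π} : Multiset F[X]) := by
  classical
  induction s using Finset.induction_on with
  | empty => simpa using normalizedFactors_one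
  | @insert a s ha ih =>
    have hane : (a : F[X]) ≠ 0 := (hs a (Finset.mem_insert_self a s)).2.ne_zero
    have hprodne : (∏ π ∈ s, π ^ k π) ≠ 0 := by
      apply Finset.prod_ne_zero_iff.mpr
      intro π hπ
      exact pow_ne_zero _ (hs π (Finset.mem_insert_of_mem hπ)).2.ne_zero
    rw [Finset.prod_insert ha, Finset.sum_insert ha,
      normalizedFactors_mul (pow_ne_zero _ hane) hprodne,
      normalizedFactors_pow,
      normalizedFactors_irreducible (hs a (Finset.mem_insert_self a s)).2,
      (hs a (Finset.mem_insert_self a s)).1.normalize_eq_self,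
      ih (fun π hπ => hs π (Finset.mem_insert_of_mem hπ))]

set_option maxHeartbeats 2000000 in
lemma card_A (n : ℕ) :
    ((Finset.finsuppAntidiag (T F n) n).filter
        (fun l => ∀ π ∈ T F n, π.natDegree ∣ l π)).card
      = ((finite_monic_deg F n).toFinset).card := by
  refine Finset.card_bij'
    (s := (Finset.finsuppAntidiag (T F n) n).filter
        (fun l => ∀ π ∈ T F n, π.natDegree ∣ l π))
    (t := (finite_monic_deg F n).toFinset)
    (fun l _ => ∏ π ∈ T F n, π ^ (l π / π.natDegree))
    (fun p hp => Finsupp.onFinset (T F n)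
      (fun π => π.natDegree * (normalizedFactors p).count π)
      (by
        intro π hπ
        have hcount : π ∈ normalizedFactors p := by
          by_contra hmem
          exact hπ (by simp [Multiset.count_eq_zero_of_notMem hmem])
        have hp0 : p ≠ 0 := by
          rintro rfl
          simp [normalizedFactors_zero] at hcount
        have hpn : p.natDegree = n := ((finite_monic_deg F n).mem_toFinset.mp hp).2
        refine (mem_T F n π).mpr ⟨⟨nf_monic F π hcount, irreducible_of_normalized_factor π hcount⟩, ?_⟩
        rw [← hpn]
        exact natDegree_le_of_dvd (dvd_of_mem_normalizedFactors hcount) hp0))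
    ?hi ?hj ?left_inv ?right_inv
  -- hi
  · intro l hl
    simp only [Finset.mem_filter, Finset.mem_finsuppAntidiag] at hl
    obtain ⟨⟨hsum, hsupp⟩, hdvd⟩ := hl
    rw [Set.Finite.mem_toFinset]
    have hmem : ∀ π ∈ T F n, π.Monic ∧ Irreducible π :=
      fun π hπ => ((mem_T F n π).mp hπ).1
    constructor
    · exact monic_prod_of_monic _ _ (fun π hπ => ((hmem π hπ).1).pow _)
    · rw [natDegree_prod _ _ (fun π hπ => pow_ne_zero _ (hmem π hπ).1.ne_zero)]
      have hterm : ∀ π ∈ T F n, (π ^ (l π / π.natDegree)).natDegree = l π := by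
        intro π hπ
        rw [natDegree_pow, mul_comm]
        exact Nat.mul_div_cancel' (hdvd π hπ)
      rw [Finset.sum_congr rfl hterm]
      exact hsum
  case hj =>
    intro p hp
    have hpm : p.Monic := ((finite_monic_deg F n).mem_toFinset.mp hp).1
    have hpn : p.natDegree = n := ((finite_monic_deg F n).mem_toFinset.mp hp).2
    simp only [Finset.mem_filter, Finset.mem_finsuppAntidiag]
    refine ⟨⟨?_, Finsupp.support_onFinset_subset⟩, ?_⟩
    · -- sum over T = n
      have hsub : (normalizedFactors p).toFinset ⊆ T F n := by
        intro π hπ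
        rw [Multiset.mem_toFinset] at hπ
        refine (mem_T F n π).mpr ⟨⟨nf_monic F π hπ, irreducible_of_normalized_factor π hπ⟩, ?_⟩
        rw [← hpn]
        exact natDegree_le_of_dvd (dvd_of_mem_normalizedFactors hπ) hpm.ne_zero
      have hzero : ∀ π ∈ T F n, π ∉ (normalizedFactors p).toFinset →
          π.natDegree * (normalizedFactors p).count π = 0 := by
        intro π _ hπ
        rw [Multiset.count_eq_zero_of_notMem (fun h => hπ (Multiset.mem_toFinset.mpr h)),
          mul_zero]
      show ∑ π ∈ T F n, π.natDegree * Multiset.count π (normalizedFactors p) = n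
      rw [← Finset.sum_subset hsub hzero]
      have hcongr : ∀ π ∈ (normalizedFactors p).toFinset,
          π.natDegree * (normalizedFactors p).count π
            = (normalizedFactors p).count π • π.natDegree := by
        intro π _
        simp [mul_comm]
      rw [Finset.sum_congr rfl hcongr, ← Finset.sum_multiset_map_count,
        ← natDegree_multiset_prod_of_monic _ (fun π hπ => nf_monic F π hπ), prod_nf F hpm]
      exact hpn
    · intro π hπ
      simp only [Finsupp.onFinset_apply]
      exact dvd_mul_right _ _
  case left_inv =>
    intro l hl
    simp only [Finset.mem_filter, Finset.mem_finsuppAntidiag] at hl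
    obtain ⟨⟨hsum, hsupp⟩, hdvd⟩ := hl
    have hmem : ∀ π ∈ T F n, π.Monic ∧ Irreducible π :=
      fun π hπ => ((mem_T F n π).mp hπ).1
    ext π
    simp only [Finsupp.onFinset_apply]
    rw [nf_prod_pow F _ _ hmem, Multiset.count_sum']
    have : ∀ π' ∈ T F n, Multiset.count π ((l π' / π'.natDegree) • ({π'} : Multiset F[X]))
        = if π = π' then l π' / π'.natDegree else 0 := by
      intro π' _
      rw [Multiset.count_nsmul, Multiset.count_singleton]
      split_ifs <;> simp
    rw [Finset.sum_congr rfl this, Finset.sum_ite_eq]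
    by_cases hπT : π ∈ T F n
    · rw [if_pos hπT, Nat.mul_div_cancel' (hdvd π hπT)]
    · rw [if_neg hπT, mul_zero, eq_comm, ← Finsupp.notMem_support_iff]
      exact fun h => hπT (hsupp h)
  case right_inv =>
    intro p hp
    have hpm : p.Monic := ((finite_monic_deg F n).mem_toFinset.mp hp).1
    have hpn : p.natDegree = n := ((finite_monic_deg F n).mem_toFinset.mp hp).2
    have hsub : (normalizedFactors p).toFinset ⊆ T F n := by
      intro π hπ
      rw [Multiset.mem_toFinset] at hπ
      refine (mem_T F n π).mpr ⟨⟨nf_monic F π hπ, irreducible_of_normalized_factor π hπ⟩, ?_⟩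
      rw [← hpn]
      exact natDegree_le_of_dvd (dvd_of_mem_normalizedFactors hπ) hpm.ne_zero
    simp only [Finsupp.onFinset_apply]
    have hstep : ∀ π ∈ T F n,
        π ^ (π.natDegree * (normalizedFactors p).count π / π.natDegree)
        = π ^ (normalizedFactors p).count π := by
      intro π hπ
      rw [Nat.mul_div_cancel_left _ ((mem_T F n π).mp hπ).1.2.natDegree_pos]
    rw [Finset.prod_congr rfl hstep]
    rw [← Finset.prod_subset hsub (by
      intro π _ hπ
      rw [Multiset.count_eq_zero_of_notMem (fun h => hπ (Multiset.mem_toFinset.mpr h)),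
        pow_zero])]
    rw [← Finset.prod_multiset_count, prod_nf F hpm]

end Aux

/-- The coefficient of `X^n` in `∏_{d=1}^{n} ((1 - X^d)⁻¹)^{N(d)}` equals `q^n`,
where `N(d)` is the number of monic irreducible degree-`d` polynomials over the
finite field `F` with `q` elements. -/
theorem coeff_prod_inv_one_sub_pow (F : Type*) [Field F] [Fintype F]
    (q : ℕ) (hq : q = Fintype.card F)
    (N : ℕ → ℕ)
    (hN : ∀ d, N d = Nat.card {p : F[X] // p.Monic ∧ Irreducible p ∧ p.natDegree = d})
    (n : ℕ) (hn : 1 ≤ n) :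
    PowerSeries.coeff n
      (∏ d ∈ Finset.Icc 1 n, ((1 - (PowerSeries.X : PowerSeries ℚ) ^ d)⁻¹) ^ N d)
      = (q : ℚ) ^ n := by
  classical
  -- regroup the product over irreducible polynomials
  have hmaps : ∀ π ∈ T F n, π.natDegree ∈ Finset.Icc 1 n := by
    intro π hπ
    obtain ⟨⟨hm, hirr⟩, hle⟩ := (mem_T F n π).mp hπ
    exact Finset.mem_Icc.mpr ⟨hirr.natDegree_pos, hle⟩
  have hregroup :
      (∏ d ∈ Finset.Icc 1 n, ((1 - (PowerSeries.X : PowerSeries ℚ) ^ d)⁻¹) ^ N d)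
      = ∏ π ∈ T F n, (1 - (PowerSeries.X : PowerSeries ℚ) ^ π.natDegree)⁻¹ := by
    rw [← Finset.prod_fiberwise_of_maps_to hmaps
      (fun π => (1 - (PowerSeries.X : PowerSeries ℚ) ^ π.natDegree)⁻¹)]
    apply Finset.prod_congr rfl
    intro d hd
    have : ∀ π ∈ (T F n).filter (fun π => π.natDegree = d),
        (1 - (PowerSeries.X : PowerSeries ℚ) ^ π.natDegree)⁻¹
        = (1 - (PowerSeries.X : PowerSeries ℚ) ^ d)⁻¹ := by
      intro π hπ
      rw [(Finset.mem_filter.mp hπ).2]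
    rw [Finset.prod_congr rfl this, Finset.prod_const,
      card_filter_T F N hN n d (Finset.mem_Icc.mp hd).2]
  rw [hregroup, PowerSeries.coeff_prod]
  have hcoeff : ∀ l ∈ Finset.finsuppAntidiag (T F n) n,
      (∏ π ∈ T F n, PowerSeries.coeff (l π)
        ((1 - (PowerSeries.X : PowerSeries ℚ) ^ π.natDegree)⁻¹))
      = if (∀ π ∈ T F n, π.natDegree ∣ l π) then (1 : ℚ) else 0 := by
    intro l _
    rw [← Finset.prod_boole]
    apply Finset.prod_congr rfl
    intro π hπ
    exact coeff_inv_one_sub_Xpow π.natDegree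
      ((Finset.mem_Icc.mp (hmaps π hπ)).1) (l π)
  rw [Finset.sum_congr rfl hcoeff, Finset.sum_boole, card_A F n]
  have := card_monic F q hq n
  rw [← Set.ncard_eq_toFinset_card _ (finite_monic_deg F n), ← Nat.card_coe_set_eq]
  have hcard : Nat.card ({p : F[X] | p.Monic ∧ p.natDegree = n} : Set F[X]) = q ^ n := this
  rw [hcard]
  push_cast
  ring
end

section
/- Let F be a finite field with q elements. For every n ≥ 2, the number of monic square-free polynomials of degree n in F[X] is exactly q^n − q^{n−1}. -/
open Polynomial UniqueFactorizationMonoid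

open scoped Classical in
noncomputable instance fieldNormalizationMonoid (F : Type*) [Field F] :
    NormalizationMonoid F where
  normUnit x := if h : x = 0 then 1 else (Units.mk0 x h)⁻¹
  normUnit_zero := by simp
  normUnit_one := by
    ext
    simp
  normUnit_mul_units := by
    intro a u ha
    ext
    simp [ha, u.ne_zero, mul_comm]

section Decomp

variable {F : Type*} [Field F]

/-- Existence of the decomposition `f = g * h ^ 2` with `g` squarefree. -/
private lemma exists_decomp : ∀ (n : ℕ) (f : F[X]), f.Monic → f.natDegree = n →
    ∃ g h : F[X], g.Monic ∧ Squarefree g ∧ h.Monic ∧ f = g * h ^ 2 := by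
  intro n
  induction n using Nat.strong_induction_on with
  | _ n ih =>
    intro f hf hdeg
    by_cases hsq : Squarefree f
    · exact ⟨f, 1, hf, hsq, monic_one, by ring⟩
    · rw [Squarefree] at hsq
      push_neg at hsq
      obtain ⟨x, hxdvd, hxu⟩ := hsq
      have hx0 : x ≠ 0 := by
        rintro rfl
        simp only [mul_zero, zero_dvd_iff] at hxdvd
        exact hf.ne_zero hxdvd
      set p : F[X] := x * C x.leadingCoeff⁻¹ with hp
      have hpm : p.Monic := monic_mul_leadingCoeff_inv hx0
      have hpx : p ∣ x := by
        refine ⟨C x.leadingCoeff, ?_⟩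
        rw [hp, mul_assoc, ← C_mul, inv_mul_cancel₀ (leadingCoeff_ne_zero.mpr hx0), C_1, mul_one]
      have hpd : p * p ∣ f := dvd_trans (mul_dvd_mul hpx hpx) hxdvd
      have hpu : ¬ IsUnit p := by
        intro h
        exact hxu (isUnit_of_mul_isUnit_left (by rwa [hp] at h))
      have hpdeg : 1 ≤ p.natDegree := by
        rcases Nat.eq_zero_or_pos p.natDegree with h | h
        · exact absurd (hpm.natDegree_eq_zero.mp h ▸ isUnit_one) hpu
        · exact h
      obtain ⟨m, hm⟩ := hpd
      have hmm : m.Monic := (hpm.mul hpm).of_mul_monic_left (hm ▸ hf)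
      have hmdeg : m.natDegree < n := by
        rw [← hdeg, hm, (hpm.mul hpm).natDegree_mul hmm, hpm.natDegree_mul hpm]
        omega
      obtain ⟨g, h', hg, hsg, hh', heq⟩ := ih m.natDegree hmdeg m hmm rfl
      exact ⟨g, p * h', hg, hsg, hpm.mul hh', by rw [hm, heq]; ring⟩

/-- Uniqueness of the decomposition. -/
private lemma decomp_unique {g₁ h₁ g₂ h₂ : F[X]} (hg₁ : g₁.Monic) (hs₁ : Squarefree g₁)
    (hh₁ : h₁.Monic) (hg₂ : g₂.Monic) (hs₂ : Squarefree g₂) (hh₂ : h₂.Monic)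
    (heq : g₁ * h₁ ^ 2 = g₂ * h₂ ^ 2) : g₁ = g₂ ∧ h₁ = h₂ := by
  have hg₁0 := hg₁.ne_zero; have hg₂0 := hg₂.ne_zero
  have hh₁0 := hh₁.ne_zero; have hh₂0 := hh₂.ne_zero
  have hnf : normalizedFactors g₁ + 2 • normalizedFactors h₁
      = normalizedFactors g₂ + 2 • normalizedFactors h₂ := by
    rw [← normalizedFactors_pow, ← normalizedFactors_pow,
      ← normalizedFactors_mul hg₁0 (pow_ne_zero 2 hh₁0),
      ← normalizedFactors_mul hg₂0 (pow_ne_zero 2 hh₂0), heq]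
  have hn₁ : (normalizedFactors g₁).Nodup :=
    (squarefree_iff_nodup_normalizedFactors hg₁0).mp hs₁
  have hn₂ : (normalizedFactors g₂).Nodup :=
    (squarefree_iff_nodup_normalizedFactors hg₂0).mp hs₂
  classical
  have hfac : normalizedFactors h₁ = normalizedFactors h₂ := by
    rw [Multiset.ext]
    intro p
    have h1 := Multiset.nodup_iff_count_le_one.mp hn₁ p
    have h2 := Multiset.nodup_iff_count_le_one.mp hn₂ p
    have := congrArg (Multiset.count p) hnf
    simp only [Multiset.count_add, Multiset.count_nsmul] at this
    omega
  have hass : Associated h₁ h₂ :=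
    ((prod_normalizedFactors hh₁0).symm.trans (hfac ▸ prod_normalizedFactors hh₂0))
  have hh : h₁ = h₂ := eq_of_monic_of_associated hh₁ hh₂ hass
  refine ⟨?_, hh⟩
  rw [hh] at heq
  exact mul_right_cancel₀ (pow_ne_zero 2 hh₂0) heq

end Decomp

section Counting

variable {F : Type*} [Field F] [Fintype F]

private lemma card_monic_deg (n : ℕ) :
    Nat.card {f : F[X] // f.Monic ∧ f.natDegree = n} = Fintype.card F ^ n := by
  rw [Nat.card_congr ((monicEquivDegreeLT n).trans (degreeLTEquiv F n).toEquiv)]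
  simp [Nat.card_eq_fintype_card]

instance finM (n : ℕ) : Finite {f : F[X] // f.Monic ∧ f.natDegree = n} :=
  Finite.of_equiv _ ((monicEquivDegreeLT n).trans (degreeLTEquiv F n).toEquiv).symm

instance finS (n : ℕ) : Finite {f : F[X] // f.Monic ∧ Squarefree f ∧ f.natDegree = n} :=
  Finite.of_injective
    (fun f => (⟨f.1, f.2.1, f.2.2.2⟩ : {f : F[X] // f.Monic ∧ f.natDegree = n}))
    (by
      intro a b h
      have : a.1 = b.1 := by simpa using congrArg Subtype.val h
      exact Subtype.ext this)

private lemma nat_card_sigma {ι : Type*} [Fintype ι] (α : ι → Type*) [∀ i, Finite (α i)] :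
    Nat.card (Σ i, α i) = ∑ i, Nat.card (α i) := by
  haveI := fun i => Fintype.ofFinite (α i)
  simp [Nat.card_eq_fintype_card, Fintype.card_sigma]

private lemma card_monic_eq_sum (n : ℕ) :
    (Fintype.card F) ^ n = ∑ k ∈ Finset.range (n / 2 + 1),
      Nat.card {f : F[X] // f.Monic ∧ Squarefree f ∧ f.natDegree = n - 2 * k}
        * Fintype.card F ^ k := by
  have hdm : ∀ (g h : F[X]), g.Monic → h.Monic →
      (g * h ^ 2).natDegree = g.natDegree + 2 * h.natDegree := by
    intro g h hg hh
    rw [hg.natDegree_mul (hh.pow _), natDegree_pow]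
  let Φ : (Σ k : Fin (n / 2 + 1),
        {g : F[X] // g.Monic ∧ Squarefree g ∧ g.natDegree = n - 2 * (k : ℕ)} ×
        {h : F[X] // h.Monic ∧ h.natDegree = (k : ℕ)}) →
      {f : F[X] // f.Monic ∧ f.natDegree = n} := fun t =>
    ⟨t.2.1.1 * t.2.2.1 ^ 2, (t.2.1.2.1).mul ((t.2.2.2.1).pow 2), by
      have hk := t.1.isLt
      rw [hdm _ _ t.2.1.2.1 t.2.2.2.1, t.2.1.2.2.2, t.2.2.2.2]
      omega⟩
  have hbij : Function.Bijective Φ := by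
    constructor
    · rintro ⟨k₁, g₁, h₁⟩ ⟨k₂, g₂, h₂⟩ hEq
      have hv : g₁.1 * h₁.1 ^ 2 = g₂.1 * h₂.1 ^ 2 := by
        simpa [Φ] using congrArg Subtype.val hEq
      obtain ⟨hgeq, hheq⟩ :=
        decomp_unique g₁.2.1 g₁.2.2.1 h₁.2.1 g₂.2.1 g₂.2.2.1 h₂.2.1 hv
      have hk : k₁ = k₂ := Fin.ext (by rw [← h₁.2.2, ← h₂.2.2, hheq])
      subst hk
      exact congrArg _ (Prod.ext (Subtype.ext hgeq) (Subtype.ext hheq))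
    · rintro ⟨f, hf, hdeg⟩
      obtain ⟨g, h, hg, hsg, hh, heq⟩ := exists_decomp n f hf hdeg
      have hd : g.natDegree + 2 * h.natDegree = n := by
        rw [← hdeg, heq, hdm g h hg hh]
      refine ⟨⟨⟨h.natDegree, by omega⟩, ⟨g, hg, hsg, ?_⟩, ⟨h, hh, rfl⟩⟩, ?_⟩
      · simp only [Fin.val_mk]
        omega
      · exact Subtype.ext heq.symm
  have hcard := Nat.card_congr (Equiv.ofBijective Φ hbij)
  rw [← card_monic_deg n, ← hcard, nat_card_sigma]
  have hstep : ∀ i : Fin (n / 2 + 1),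
      Nat.card ({g : F[X] // g.Monic ∧ Squarefree g ∧ g.natDegree = n - 2 * (i : ℕ)} ×
        {h : F[X] // h.Monic ∧ h.natDegree = (i : ℕ)})
      = Nat.card {f : F[X] // f.Monic ∧ Squarefree f ∧ f.natDegree = n - 2 * (i : ℕ)}
          * Fintype.card F ^ (i : ℕ) := by
    intro i
    rw [Nat.card_prod, card_monic_deg]
  rw [Finset.sum_congr rfl fun i _ => hstep i]
  exact Fin.sum_univ_eq_sum_range
    (fun k => Nat.card {f : F[X] // f.Monic ∧ Squarefree f ∧ f.natDegree = n - 2 * k}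
      * Fintype.card F ^ k) (n / 2 + 1)

end Counting

/-- For `n ≥ 2`, the number of monic square-free polynomials of degree `n` over a
finite field `F` with `q` elements is `q^n - q^(n-1)`. -/
theorem card_monic_squarefree (F : Type*) [Field F] [Fintype F]
    (q : ℕ) (hq : q = Fintype.card F) (n : ℕ) (hn : 2 ≤ n) :
    Nat.card {f : F[X] // f.Monic ∧ Squarefree f ∧ f.natDegree = n}
      = q ^ n - q ^ (n - 1) := by
  subst hq
  have key1 := card_monic_eq_sum (F := F) n
  have key2 := card_monic_eq_sum (F := F) (n - 2)
  rw [Finset.sum_range_succ'] at key1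
  have hhalf : n / 2 = (n - 2) / 2 + 1 := by omega
  have hshift : ∑ k ∈ Finset.range (n / 2),
      Nat.card {f : F[X] // f.Monic ∧ Squarefree f ∧ f.natDegree = n - 2 * (k + 1)}
        * Fintype.card F ^ (k + 1)
      = Fintype.card F * Fintype.card F ^ (n - 2) := by
    rw [key2, hhalf, Finset.mul_sum]
    refine Finset.sum_congr rfl fun k hk => ?_
    have h1 : n - 2 * (k + 1) = n - 2 - 2 * k := by omega
    rw [h1, pow_succ]
    ring
  rw [hshift] at key1
  have hq1 : Fintype.card F * Fintype.card F ^ (n - 2) = Fintype.card F ^ (n - 1) := by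
    rw [← pow_succ']
    congr 1
    omega
  rw [hq1] at key1
  simp only [mul_zero, Nat.sub_zero, pow_zero, mul_one] at key1
  omega
end

section
/- Let F be a finite field with q elements and n ≥ 2. For a monic square-free polynomial f of degree n over F, let μ(f) = (−1)^{d(f)} where d(f) is the number of monic irreducible factors of f. Then ∑_{f ∈ S_n} μ(f) = 0. -/
open Polynomial UniqueFactorizationMonoid Finset
open scoped Classical

namespace SqfMoebius

variable {F : Type*} [Field F]

lemma monic_of_mem_nf {f p : F[X]} (hp : p ∈ normalizedFactors f) : p.Monic := by
  have h1 := normalize_normalized_factor p hp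
  have h2 : p ≠ 0 := (prime_of_normalized_factor p hp).ne_zero
  have := monic_normalize h2
  rwa [h1] at this

lemma mem_nf {f p : F[X]} (hf : f.Monic) :
    p ∈ normalizedFactors f ↔ p.Monic ∧ Irreducible p ∧ p ∣ f := by
  constructor
  · intro hp
    exact ⟨monic_of_mem_nf hp, irreducible_of_normalized_factor p hp,
      dvd_of_mem_normalizedFactors hp⟩
  · rintro ⟨hm, hirr, hdvd⟩
    have hnf : normalizedFactors p = {p} := by
      rw [normalizedFactors_irreducible hirr, hm.normalize_eq_self]
    have hle := (dvd_iff_normalizedFactors_le_normalizedFactors hirr.ne_zero hf.ne_zero).mp hdvd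
    rw [hnf] at hle
    exact Multiset.mem_of_le hle (Multiset.mem_singleton_self p)

lemma nf_multiset_prod (m : Multiset F[X]) (h : ∀ p ∈ m, p.Monic ∧ Irreducible p) :
    normalizedFactors m.prod = m := by
  have hp : ∀ p ∈ m, Prime p := fun p hp => (irreducible_iff_prime).mp (h p hp).2
  have hne : m.prod ≠ 0 := Multiset.prod_ne_zero fun h0 => (hp 0 h0).ne_zero rfl
  have hrel := prime_factors_unique (fun q hq => prime_of_normalized_factor q hq) hp
    (prod_normalizedFactors hne)
  rw [← Multiset.rel_eq]
  refine hrel.mono fun a ha b hb hab => ?_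
  exact eq_of_monic_of_associated (monic_of_mem_nf ha) (h b hb).1 hab

/-- number of distinct monic irreducible factors -/
noncomputable def om (f : F[X]) : ℕ := (normalizedFactors f).toFinset.card

section PrimeFinset

variable {S : Finset F[X]} (hS : ∀ p ∈ S, p.Monic ∧ Irreducible p)
include hS

lemma prod_monic : (∏ p ∈ S, p).Monic :=
  monic_prod_of_monic _ _ fun p hp => (hS p hp).1

lemma nf_prod : normalizedFactors (∏ p ∈ S, p) = S.val := by
  rw [Finset.prod_eq_multiset_prod, Multiset.map_id']
  exact nf_multiset_prod _ hS

lemma prod_squarefree : Squarefree (∏ p ∈ S, p) := by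
  rw [squarefree_iff_nodup_normalizedFactors (prod_monic hS).ne_zero, nf_prod hS]
  exact S.nodup

lemma om_prod : om (∏ p ∈ S, p) = S.card := by
  rw [om, nf_prod hS, Finset.val_toFinset]

lemma prod_nf_toFinset {g : F[X]} (hg : g.Monic) (hsq : Squarefree g)
    (hSg : S = (normalizedFactors g).toFinset) : (∏ p ∈ S, p) = g := by
  have hnd : (normalizedFactors g).Nodup :=
    (squarefree_iff_nodup_normalizedFactors hg.ne_zero).mp hsq
  have hval : S.val = normalizedFactors g := by
    rw [hSg, Multiset.toFinset_val, Multiset.Nodup.dedup hnd]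
  refine eq_of_monic_of_associated (prod_monic hS) hg ?_
  rw [Finset.prod_eq_multiset_prod, Multiset.map_id', hval]
  exact prod_normalizedFactors hg.ne_zero

end PrimeFinset

section Fin

variable (F) [Fintype F]

lemma finite_degree_lt (n : ℕ) : {f : F[X] | f.degree < (n : ℕ)}.Finite := by
  have h : {f : F[X] | f.degree < (n : ℕ)} = ↑(degreeLT F n) := by
    ext f; simp [Polynomial.mem_degreeLT]
  rw [h]
  haveI : Finite (degreeLT F n) := Finite.of_equiv _ (degreeLTEquiv F n).toEquiv.symm
  exact Set.toFinite _

lemma finite_monic (n : ℕ) : {f : F[X] | f.Monic ∧ f.natDegree = n}.Finite := by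
  apply (finite_degree_lt F (n+1)).subset
  rintro f ⟨hm, hd⟩
  simp only [Set.mem_setOf_eq, degree_eq_natDegree hm.ne_zero, hd]
  exact_mod_cast Nat.lt_succ_self n

lemma finite_sf (n : ℕ) : {f : F[X] | f.Monic ∧ Squarefree f ∧ f.natDegree = n}.Finite :=
  (finite_monic F n).subset (fun f ⟨h1, _, h3⟩ => ⟨h1, h3⟩)

/-- Monic polynomials of degree `n`, as a finset. -/
noncomputable def Mo (n : ℕ) : Finset F[X] := (finite_monic F n).toFinset

/-- Monic squarefree polynomials of degree `n`, as a finset. -/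
noncomputable def Sf (n : ℕ) : Finset F[X] := (finite_sf F n).toFinset

variable {F}

lemma mem_Mo {n : ℕ} {f : F[X]} : f ∈ Mo F n ↔ f.Monic ∧ f.natDegree = n := by
  simp [Mo, Set.Finite.mem_toFinset]

lemma mem_Sf {n : ℕ} {f : F[X]} :
    f ∈ Sf F n ↔ f.Monic ∧ Squarefree f ∧ f.natDegree = n := by
  simp [Sf, Set.Finite.mem_toFinset]

variable (F)

/-- The Möbius sum. -/
noncomputable def M (n : ℕ) : ℤ := ∑ f ∈ Sf F n, (-1 : ℤ) ^ om f

/-- Number of monic polynomials of degree `n`. -/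
noncomputable def N (n : ℕ) : ℤ := ((Mo F n).card : ℤ)

lemma key_recursion (n : ℕ) (hn : 1 ≤ n) :
    (∑ k ∈ range (n + 1), M F k * N F (n - k)) = 0 := by
  -- Step 1: the double sum over (f, S) is zero.
  have hzero : (∑ f ∈ Mo F n,
      ∑ S ∈ (normalizedFactors f).toFinset.powerset, (-1 : ℤ) ^ S.card) = 0 := by
    refine Finset.sum_eq_zero fun f hf => ?_
    obtain ⟨hfm, hfd⟩ := mem_Mo.mp hf
    have hnu : ¬IsUnit f := by
      intro hu
      rw [Polynomial.natDegree_eq_zero_of_isUnit hu] at hfd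
      omega
    obtain ⟨p, hp⟩ := exists_mem_normalizedFactors hfm.ne_zero hnu
    rw [Finset.sum_powerset_neg_one_pow_card, if_neg]
    intro h
    rw [Finset.eq_empty_iff_forall_notMem] at h
    exact h p (Multiset.mem_toFinset.mpr hp)
  -- Step 2: the bijection.
  have hbij : (∑ f ∈ Mo F n,
      ∑ S ∈ (normalizedFactors f).toFinset.powerset, (-1 : ℤ) ^ S.card)
      = ∑ k ∈ range (n + 1), ∑ p ∈ Sf F k ×ˢ Mo F (n - k), (-1 : ℤ) ^ om p.1 := by
    rw [Finset.sum_sigma', Finset.sum_sigma']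
    refine Finset.sum_nbij'
      (fun x => ⟨(∏ p ∈ x.2, p).natDegree, (∏ p ∈ x.2, p, x.1 / ∏ p ∈ x.2, p)⟩)
      (fun y => ⟨y.2.1 * y.2.2, (normalizedFactors y.2.1).toFinset⟩) ?_ ?_ ?_ ?_ ?_
    · -- maps into target
      rintro ⟨f, S⟩ hx
      dsimp only at hx ⊢
      rw [Finset.mem_sigma] at hx
      obtain ⟨hf, hSmem⟩ := hx
      obtain ⟨hfm, hfd⟩ := mem_Mo.mp hf
      have hSsub := Finset.mem_powerset.mp hSmem
      have hS : ∀ p ∈ S, p.Monic ∧ Irreducible p := fun p hp => by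
        have := (mem_nf hfm).mp (Multiset.mem_toFinset.mp (hSsub hp))
        exact ⟨this.1, this.2.1⟩
      have hgm := prod_monic hS
      have hgdvd : (∏ p ∈ S, p) ∣ f := by
        have h1 : S.val ≤ normalizedFactors f := by
          calc S.val ≤ (normalizedFactors f).toFinset.val := Finset.val_le_iff.mpr hSsub
          _ = (normalizedFactors f).dedup := Multiset.toFinset_val _
          _ ≤ normalizedFactors f := Multiset.dedup_le _
        calc (∏ p ∈ S, p) = S.val.prod := by
              rw [Finset.prod_eq_multiset_prod, Multiset.map_id']
        _ ∣ (normalizedFactors f).prod := Multiset.prod_dvd_prod_of_le h1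
        _ ∣ f := (prod_normalizedFactors hfm.ne_zero).dvd
      have hgh : (∏ p ∈ S, p) * (f / ∏ p ∈ S, p) = f :=
        EuclideanDomain.mul_div_cancel' hgm.ne_zero hgdvd
      have hhm : (f / ∏ p ∈ S, p).Monic := hgm.of_mul_monic_left (by rw [hgh]; exact hfm)
      have hdeg : (∏ p ∈ S, p).natDegree + (f / ∏ p ∈ S, p).natDegree = n := by
        rw [← hgm.natDegree_mul hhm, hgh, hfd]
      rw [Finset.mem_sigma]
      dsimp only
      constructor
      · rw [Finset.mem_range]; omega
      · rw [Finset.mem_product]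
        exact ⟨mem_Sf.mpr ⟨hgm, prod_squarefree hS, rfl⟩,
          mem_Mo.mpr ⟨hhm, by
            show (f / ∏ p ∈ S, p).natDegree = n - (∏ p ∈ S, p).natDegree
            omega⟩⟩
    · -- reverse maps into source
      rintro ⟨k, g, h⟩ hy
      dsimp only at hy ⊢
      rw [Finset.mem_sigma, Finset.mem_range, Finset.mem_product] at hy
      obtain ⟨hk, hg, hh⟩ := hy
      obtain ⟨hgm, hgsq, hgd⟩ := mem_Sf.mp hg
      obtain ⟨hhm, hhd⟩ := mem_Mo.mp hh
      rw [Finset.mem_sigma]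
      constructor
      · exact mem_Mo.mpr ⟨hgm.mul hhm, by rw [hgm.natDegree_mul hhm]; omega⟩
      · rw [Finset.mem_powerset]
        intro p hp
        rw [Multiset.mem_toFinset] at hp ⊢
        have hle := (dvd_iff_normalizedFactors_le_normalizedFactors hgm.ne_zero
          (hgm.mul hhm).ne_zero).mp (dvd_mul_right g h)
        exact Multiset.mem_of_le hle hp
    · -- left inverse
      rintro ⟨f, S⟩ hx
      dsimp only at hx ⊢
      rw [Finset.mem_sigma] at hx
      obtain ⟨hf, hSmem⟩ := hx
      obtain ⟨hfm, hfd⟩ := mem_Mo.mp hf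
      have hSsub := Finset.mem_powerset.mp hSmem
      have hS : ∀ p ∈ S, p.Monic ∧ Irreducible p := fun p hp => by
        have := (mem_nf hfm).mp (Multiset.mem_toFinset.mp (hSsub hp))
        exact ⟨this.1, this.2.1⟩
      have hgm := prod_monic hS
      have hgdvd : (∏ p ∈ S, p) ∣ f := by
        have h1 : S.val ≤ normalizedFactors f := by
          calc S.val ≤ (normalizedFactors f).toFinset.val := Finset.val_le_iff.mpr hSsub
          _ = (normalizedFactors f).dedup := Multiset.toFinset_val _
          _ ≤ normalizedFactors f := Multiset.dedup_le _
        calc (∏ p ∈ S, p) = S.val.prod := by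
              rw [Finset.prod_eq_multiset_prod, Multiset.map_id']
        _ ∣ (normalizedFactors f).prod := Multiset.prod_dvd_prod_of_le h1
        _ ∣ f := (prod_normalizedFactors hfm.ne_zero).dvd
      have hgh : (∏ p ∈ S, p) * (f / ∏ p ∈ S, p) = f :=
        EuclideanDomain.mul_div_cancel' hgm.ne_zero hgdvd
      have hnfS : (normalizedFactors (∏ p ∈ S, p)).toFinset = S := by
        rw [nf_prod hS, Finset.val_toFinset]
      exact Sigma.ext hgh (by rw [hnfS])
    · -- right inverse
      rintro ⟨k, g, h⟩ hy
      dsimp only at hy ⊢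
      rw [Finset.mem_sigma, Finset.mem_range, Finset.mem_product] at hy
      obtain ⟨hk, hg, hh⟩ := hy
      obtain ⟨hgm, hgsq, hgd⟩ := mem_Sf.mp hg
      obtain ⟨hhm, hhd⟩ := mem_Mo.mp hh
      have hS : ∀ p ∈ (normalizedFactors g).toFinset, p.Monic ∧ Irreducible p := by
        intro p hp
        have := (mem_nf hgm).mp (Multiset.mem_toFinset.mp hp)
        exact ⟨this.1, this.2.1⟩
      have hprod : (∏ p ∈ (normalizedFactors g).toFinset, p) = g :=
        prod_nf_toFinset hS hgm hgsq rfl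
      refine Sigma.ext ?_ ?_
      · simp only [hprod, hgd]
      · simp only [hprod]
        refine heq_of_eq ?_
        refine Prod.ext rfl ?_
        exact mul_div_cancel_left₀ h hgm.ne_zero
    · -- weights agree
      rintro ⟨f, S⟩ hx
      dsimp only at hx ⊢
      rw [Finset.mem_sigma] at hx
      obtain ⟨hf, hSmem⟩ := hx
      obtain ⟨hfm, _⟩ := mem_Mo.mp hf
      have hSsub := Finset.mem_powerset.mp hSmem
      have hS : ∀ p ∈ S, p.Monic ∧ Irreducible p := fun p hp => by
        have := (mem_nf hfm).mp (Multiset.mem_toFinset.mp (hSsub hp))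
        exact ⟨this.1, this.2.1⟩
      show ((-1 : ℤ)) ^ S.card = (-1 : ℤ) ^ om (∏ p ∈ S, p)
      rw [om_prod hS]
  -- Step 3: evaluate the right-hand side.
  rw [hbij] at hzero
  rw [← hzero]
  refine Finset.sum_congr rfl fun k _ => ?_
  rw [M, N, Finset.sum_product, Finset.sum_mul]
  refine Finset.sum_congr rfl fun g _ => ?_
  have hc : ∀ y ∈ Mo F (n - k), (-1 : ℤ) ^ om (g, y).1 = (-1 : ℤ) ^ om g :=
    fun _ _ => rfl
  rw [Finset.sum_congr rfl hc, Finset.sum_const, nsmul_eq_mul, mul_comm]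


lemma N_zero : N F 0 = 1 := by
  have h : Mo F 0 = {1} := by
    ext f
    rw [mem_Mo, Finset.mem_singleton]
    constructor
    · rintro ⟨hm, hd⟩
      exact hm.natDegree_eq_zero.mp hd
    · rintro rfl
      exact ⟨monic_one, natDegree_one⟩
  unfold N
  rw [h]
  simp

lemma N_succ (n : ℕ) : N F (n + 1) = (Fintype.card F : ℤ) * N F n := by
  have h : (Mo F (n+1)).card = ((Finset.univ : Finset F) ×ˢ Mo F n).card := by
    refine Finset.card_nbij' (fun f => (f.coeff 0, (f - C (f.coeff 0)) / X))
      (fun p => X * p.2 + C p.1) ?_ ?_ ?_ ?_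
    · intro f hf
      obtain ⟨hfm, hfd⟩ := mem_Mo.mp hf
      have hdvd : (X : F[X]) ∣ (f - C (f.coeff 0)) := by
        rw [X_dvd_iff, coeff_sub, coeff_C_zero, sub_self]
      have hXg : (X : F[X]) * ((f - C (f.coeff 0)) / X) = f - C (f.coeff 0) :=
        EuclideanDomain.mul_div_cancel' X_ne_zero hdvd
      have hpm : (f - C (f.coeff 0)).Monic := by
        have hd : (f - C (f.coeff 0)).natDegree = n + 1 := by rw [natDegree_sub_C, hfd]
        rw [Monic, leadingCoeff, hd, coeff_sub, coeff_C, if_neg (Nat.succ_ne_zero n), ← hfd]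
        simp [hfm.coeff_natDegree]
      have hgm : ((f - C (f.coeff 0)) / X).Monic :=
        (monic_X).of_mul_monic_left (by rw [hXg]; exact hpm)
      have hgd : ((f - C (f.coeff 0)) / X).natDegree = n := by
        have h1 : ((X : F[X]) * ((f - C (f.coeff 0)) / X)).natDegree = n + 1 := by
          rw [hXg, natDegree_sub_C, hfd]
        rw [(monic_X).natDegree_mul hgm, natDegree_X] at h1
        omega
      simp only [Finset.mem_coe, Finset.mem_product, Finset.mem_univ, true_and]
      exact mem_Mo.mpr ⟨hgm, hgd⟩
    · rintro ⟨a, g⟩ hp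
      simp only [Finset.mem_coe, Finset.mem_product, Finset.mem_univ, true_and] at hp
      obtain ⟨hgm, hgd⟩ := mem_Mo.mp hp
      have hXgm : ((X : F[X]) * g).Monic := monic_X.mul hgm
      have hXgd : ((X : F[X]) * g).natDegree = n + 1 := by
        rw [monic_X.natDegree_mul hgm, natDegree_X, hgd]
        omega
      refine mem_Mo.mpr ⟨hXgm.add_of_left ?_, ?_⟩
      · refine lt_of_le_of_lt (degree_C_le) ?_
        rw [degree_eq_natDegree hXgm.ne_zero, hXgd]
        exact_mod_cast Nat.succ_pos n
      · rw [natDegree_add_C, hXgd]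
    · intro f hf
      obtain ⟨hfm, hfd⟩ := mem_Mo.mp hf
      have hdvd : (X : F[X]) ∣ (f - C (f.coeff 0)) := by
        rw [X_dvd_iff, coeff_sub, coeff_C_zero, sub_self]
      have hXg : (X : F[X]) * ((f - C (f.coeff 0)) / X) = f - C (f.coeff 0) :=
        EuclideanDomain.mul_div_cancel' X_ne_zero hdvd
      simp only [hXg, sub_add_cancel]
    · rintro ⟨a, g⟩ hp
      have h0 : ((X : F[X]) * g + C a).coeff 0 = a := by
        rw [coeff_add, mul_coeff_zero, coeff_X_zero, zero_mul, coeff_C_zero, zero_add]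
      simp only [h0, add_sub_cancel_right]
      rw [mul_div_cancel_left₀ g X_ne_zero]
  unfold N
  rw [h, Finset.card_product, Finset.card_univ, Nat.cast_mul]

lemma M_eq_zero (n : ℕ) (hn : 2 ≤ n) : M F n = 0 := by
  have h1 := key_recursion F n (by omega)
  have h2 := key_recursion F (n - 1) (by omega)
  rw [Finset.sum_range_succ, Nat.sub_self, N_zero, mul_one] at h1
  have h3 : (∑ k ∈ range n, M F k * N F (n - k))
      = (Fintype.card F : ℤ) * ∑ k ∈ range n, M F k * N F (n - 1 - k) := by
    rw [Finset.mul_sum]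
    refine Finset.sum_congr rfl fun k hk => ?_
    rw [Finset.mem_range] at hk
    have : n - k = (n - 1 - k) + 1 := by omega
    rw [this, N_succ]
    ring
  have h4 : n - 1 + 1 = n := by omega
  rw [h4] at h2
  rw [h3, h2, mul_zero, zero_add] at h1
  exact h1

lemma card_subtype {f : F[X]} (hf : f.Monic) :
    Nat.card {g : F[X] // g.Monic ∧ Irreducible g ∧ g ∣ f} = om f := by
  have e : {g : F[X] // g.Monic ∧ Irreducible g ∧ g ∣ f}
      ≃ {g : F[X] // g ∈ (normalizedFactors f).toFinset} :=
    Equiv.subtypeEquivRight fun g => by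
      rw [Multiset.mem_toFinset, mem_nf hf]
  rw [Nat.card_congr e, Nat.card_eq_finsetCard]
  rfl

end Fin

end SqfMoebius

open SqfMoebius

/-- For `n ≥ 2`, the sum over monic square-free degree-`n` polynomials `f` of
`(-1)^(d f)`, where `d f` is the number of monic irreducible factors of `f`, is `0`. -/
theorem sum_moebius_squarefree (F : Type*) [Field F] [Fintype F]
    (q : ℕ) (hq : q = Fintype.card F) (n : ℕ) (hn : 2 ≤ n) :
    (∑ᶠ f ∈ {f : F[X] | f.Monic ∧ Squarefree f ∧ f.natDegree = n},
        ((-1 : ℤ) ^ Nat.card {g : F[X] // g.Monic ∧ Irreducible g ∧ g ∣ f}))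
      = 0 := by
  have hset : {f : F[X] | f.Monic ∧ Squarefree f ∧ f.natDegree = n} = ↑(Sf F n) :=
    (Set.Finite.coe_toFinset _).symm
  rw [hset, finsum_mem_coe_finset]
  have hsum : (∑ f ∈ Sf F n,
      ((-1 : ℤ) ^ Nat.card {g : F[X] // g.Monic ∧ Irreducible g ∧ g ∣ f})) = M F n := by
    refine Finset.sum_congr rfl fun f hf => ?_
    obtain ⟨hfm, _, _⟩ := mem_Sf.mp hf
    rw [SqfMoebius.card_subtype F hfm]
  rw [hsum]
  exact M_eq_zero F n hn
end

section
/- Let F be a finite field with q elements and n ≥ 2. Then the number of monic square-free degree-n polynomials over F with an even number of monic irreducible factors equals the number with an odd number of monic irreducible factors; each count equals (q^n − q^{n−1})/2. -/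
open Polynomial

namespace SqfCount

variable {F : Type*} [Field F]

/-- Number of monic irreducible divisors. -/
noncomputable def omegaP (f : F[X]) : ℕ :=
  Nat.card {g : F[X] // g.Monic ∧ Irreducible g ∧ g ∣ f}

lemma finite_of_natDegree_le [Fintype F] (N : ℕ) {P : F[X] → Prop}
    (h : ∀ f, P f → f.natDegree ≤ N) : Finite {f : F[X] // P f} := by
  refine Finite.of_injective (fun x => fun i : Fin (N + 1) => x.1.coeff i) ?_
  intro a b hab
  apply Subtype.ext
  apply Polynomial.ext
  intro k
  by_cases hk : k ≤ N
  · exact congrFun hab ⟨k, by omega⟩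
  · rw [coeff_eq_zero_of_natDegree_lt (by have := h _ a.2; omega),
      coeff_eq_zero_of_natDegree_lt (by have := h _ b.2; omega)]

lemma finite_pair [Fintype F] (N : ℕ) {P : F[X] × F[X] → Prop}
    (h : ∀ x, P x → x.1.natDegree ≤ N ∧ x.2.natDegree ≤ N) :
    Finite {x : F[X] × F[X] // P x} := by
  have f1 : Finite {f : F[X] // f.natDegree ≤ N} :=
    finite_of_natDegree_le N (fun _ hf => hf)
  refine Finite.of_injective (fun x =>
    ((⟨x.1.1, (h _ x.2).1⟩ : {f : F[X] // f.natDegree ≤ N}),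
     (⟨x.1.2, (h _ x.2).2⟩ : {f : F[X] // f.natDegree ≤ N}))) ?_
  intro a b hab
  apply Subtype.ext
  have h1 := congrArg (fun y => y.1.1) hab
  have h2 := congrArg (fun y => y.2.1) hab
  exact Prod.ext h1 h2

lemma omega_finite [Fintype F] {f : F[X]} (hf : f ≠ 0) :
    Finite {g : F[X] // g.Monic ∧ Irreducible g ∧ g ∣ f} :=
  finite_of_natDegree_le f.natDegree (fun g hg => natDegree_le_of_dvd hg.2.2 hf)

lemma omegaP_one : omegaP (1 : F[X]) = 0 := by
  have : IsEmpty {g : F[X] // g.Monic ∧ Irreducible g ∧ g ∣ 1} :=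
    ⟨fun g => g.2.2.1.not_isUnit (isUnit_of_dvd_one g.2.2.2)⟩
  simp [omegaP]

lemma eq_of_monic_irr_dvd {g p : F[X]} (hgm : g.Monic) (hgi : Irreducible g)
    (hpm : p.Monic) (hpi : Irreducible p) (h : g ∣ p) : g = p :=
  eq_of_monic_of_associated hgm hpm (hgi.associated_of_dvd hpi h)

lemma omegaP_irreducible {p : F[X]} (hm : p.Monic) (hi : Irreducible p) :
    omegaP p = 1 := by
  rw [omegaP, Nat.card_eq_one_iff_unique]
  constructor
  · constructor
    intro a b
    apply Subtype.ext
    rw [eq_of_monic_irr_dvd a.2.1 a.2.2.1 hm hi a.2.2.2,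
      eq_of_monic_irr_dvd b.2.1 b.2.2.1 hm hi b.2.2.2]
  · exact ⟨⟨p, hm, hi, dvd_rfl⟩⟩

lemma omegaP_mul [Fintype F] {p d : F[X]} (hm : p.Monic) (hi : Irreducible p)
    (hd0 : d ≠ 0) (hpd : ¬ p ∣ d) : omegaP (p * d) = omegaP d + 1 := by
  classical
  have hset : {g : F[X] | g.Monic ∧ Irreducible g ∧ g ∣ p * d}
      = insert p {g : F[X] | g.Monic ∧ Irreducible g ∧ g ∣ d} := by
    ext g
    constructor
    · rintro ⟨hgm, hgi, hgd⟩
      have hgp : Prime g := (UniqueFactorizationMonoid.irreducible_iff_prime).mp hgi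
      rcases hgp.2.2 p d hgd with h | h
      · exact Or.inl (eq_of_monic_irr_dvd hgm hgi hm hi h)
      · exact Or.inr ⟨hgm, hgi, h⟩
    · rintro (rfl | ⟨hgm, hgi, hgd⟩)
      · exact ⟨hm, hi, dvd_mul_right _ _⟩
      · exact ⟨hgm, hgi, hgd.mul_left p⟩
  have hfin : {g : F[X] | g.Monic ∧ Irreducible g ∧ g ∣ d}.Finite := by
    have := omega_finite (F := F) hd0
    exact Set.finite_coe_iff.mp this
  have h1 : omegaP (p * d) = {g : F[X] | g.Monic ∧ Irreducible g ∧ g ∣ p * d}.ncard :=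
    Nat.card_coe_set_eq _
  have h2 : omegaP d = {g : F[X] | g.Monic ∧ Irreducible g ∧ g ∣ d}.ncard :=
    Nat.card_coe_set_eq _
  rw [h1, h2, hset, Set.ncard_insert_of_notMem (fun h => hpd h.2.2) hfin]

open scoped Classical in
/-- toggle a prime factor -/
noncomputable def tog (p d : F[X]) : F[X] := if h : p ∣ d then h.choose else p * d

open scoped Classical in
lemma tog_of_dvd {p d : F[X]} (h : p ∣ d) : p * tog p d = d := by
  rw [tog, dif_pos h]; exact h.choose_spec.symm

open scoped Classical in
lemma tog_of_not_dvd {p d : F[X]} (h : ¬ p ∣ d) : tog p d = p * d := dif_neg h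

lemma tog_dvd_self {p d : F[X]} (h : p ∣ d) : tog p d ∣ d :=
  Dvd.intro_left p (tog_of_dvd h)

section Tog
variable [Fintype F] {p d : F[X]} (hpm : p.Monic) (hpi : Irreducible p)
  (hdm : d.Monic) (hsf : Squarefree d)

include hpm hpi hdm hsf

lemma tog_monic : (tog p d).Monic := by
  by_cases h : p ∣ d
  · exact hpm.of_mul_monic_left (by rw [tog_of_dvd h]; exact hdm)
  · rw [tog_of_not_dvd h]; exact hpm.mul hdm

lemma tog_squarefree : Squarefree (tog p d) := by
  by_cases h : p ∣ d
  · exact hsf.squarefree_of_dvd (tog_dvd_self h)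
  · rw [tog_of_not_dvd h]
    rcases EuclideanDomain.dvd_or_coprime p d hpi with h' | h'
    · exact absurd h' h
    · exact squarefree_mul_iff.mpr ⟨h'.isRelPrime, hpi.squarefree, hsf⟩

lemma tog_not_dvd_of_dvd (h : p ∣ d) : ¬ p ∣ tog p d := by
  intro hc
  have : p * p ∣ d := by
    rcases hc with ⟨c, hc⟩
    refine ⟨c, ?_⟩
    calc d = p * tog p d := (tog_of_dvd h).symm
    _ = p * p * c := by rw [hc, mul_assoc]
  exact hpi.not_isUnit (hsf p this)

lemma tog_tog : tog p (tog p d) = d := by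
  by_cases h : p ∣ d
  · rw [tog_of_not_dvd (tog_not_dvd_of_dvd hpm hpi hdm hsf h), tog_of_dvd h]
  · rw [tog_of_not_dvd h]
    exact mul_left_cancel₀ hpm.ne_zero (tog_of_dvd (dvd_mul_right p d))

lemma tog_parity : Even (omegaP (tog p d)) ↔ ¬ Even (omegaP d) := by
  by_cases h : p ∣ d
  · have hnd : ¬ p ∣ tog p d := tog_not_dvd_of_dvd hpm hpi hdm hsf h
    have htm : (tog p d).Monic := tog_monic hpm hpi hdm hsf
    have : omegaP d = omegaP (tog p d) + 1 := by
      conv_lhs => rw [← tog_of_dvd h]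
      exact omegaP_mul hpm hpi htm.ne_zero hnd
    rw [this]
    simp [Nat.even_add_one]
  · rw [tog_of_not_dvd h, omegaP_mul hpm hpi hdm.ne_zero h]
    simp [Nat.even_add_one]

lemma tog_dvd_one {f : F[X]} (hdf : d ∣ f) (hpf : p ∣ f) : tog p d ∣ f := by
  by_cases h : p ∣ d
  · exact dvd_trans (tog_dvd_self h) hdf
  · rw [tog_of_not_dvd h]
    rcases hdf with ⟨g, hg⟩
    have hpp : Prime p := (UniqueFactorizationMonoid.irreducible_iff_prime).mp hpi
    rcases hpp.2.2 d g (hg ▸ hpf) with h' | h'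
    · exact absurd h' h
    · rcases h' with ⟨c, hc⟩
      exact ⟨c, by rw [hg, hc]; ring⟩

lemma tog_dvd_two {f : F[X]} (hdf : d ^ 2 ∣ f) (hpf : p ^ 2 ∣ f) : (tog p d) ^ 2 ∣ f := by
  by_cases h : p ∣ d
  · exact dvd_trans (pow_dvd_pow_of_dvd (tog_dvd_self h) 2) hdf
  · rw [tog_of_not_dvd h, mul_pow]
    rcases EuclideanDomain.dvd_or_coprime p d hpi with h' | h'
    · exact absurd h' h
    · exact (h'.pow).mul_dvd hpf hdf

end Tog

open scoped Classical in
noncomputable def pickp (j : ℕ) (f : F[X]) : F[X] :=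
  if h : ∃ p : F[X], p.Monic ∧ Irreducible p ∧ p ^ j ∣ f then h.choose else 1

lemma pickp_spec {j : ℕ} {f : F[X]} (h : ∃ p : F[X], p.Monic ∧ Irreducible p ∧ p ^ j ∣ f) :
    (pickp j f).Monic ∧ Irreducible (pickp j f) ∧ (pickp j f) ^ j ∣ f := by
  classical
  rw [pickp, dif_pos h]; exact h.choose_spec

lemma monic_assoc_factor {x f : F[X]} (j : ℕ) (hx : x ≠ 0) (hxu : ¬ IsUnit x)
    (hxf : x ^ j ∣ f) : ∃ p : F[X], p.Monic ∧ Irreducible p ∧ p ^ j ∣ f := by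
  classical
  obtain ⟨i, hi, hix⟩ := WfDvdMonoid.exists_irreducible_factor hxu hx
  refine ⟨normalize i, monic_normalize hi.ne_zero, (associated_normalize i).irreducible hi, ?_⟩
  have h1 : Associated ((normalize i) ^ j) (i ^ j) := (normalize_associated i).pow_pow
  exact h1.dvd.trans ((pow_dvd_pow_of_dvd hix j).trans hxf)

lemma exists_pick_one {f : F[X]} (hf : f.Monic) (h1 : f.natDegree ≠ 0) :
    ∃ p : F[X], p.Monic ∧ Irreducible p ∧ p ^ 1 ∣ f := by
  have hu : ¬ IsUnit f := by
    rw [hf.isUnit_iff]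
    intro h
    rw [h, natDegree_one] at h1
    exact h1 rfl
  exact monic_assoc_factor 1 hf.ne_zero hu (by rw [pow_one])

lemma exists_pick_two {f : F[X]} (h0 : f ≠ 0) (hnsf : ¬ Squarefree f) :
    ∃ p : F[X], p.Monic ∧ Irreducible p ∧ p ^ 2 ∣ f := by
  rw [Squarefree] at hnsf
  push_neg at hnsf
  obtain ⟨x, hxf, hxu⟩ := hnsf
  have hx : x ≠ 0 := by
    rintro rfl
    exact h0 (zero_dvd_iff.mp (by simpa using hxf))
  exact monic_assoc_factor 2 hx hxu (by rwa [pow_two])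
/-! ### Generic splitting of a count -/

lemma card_split {α : Type*} (P Q : α → Prop) [Finite {x // P x}] :
    Nat.card {x // P x} = Nat.card {x // P x ∧ Q x} + Nat.card {x // P x ∧ ¬ Q x} := by
  classical
  haveI f1 : Finite {x // P x ∧ Q x} :=
    Finite.of_injective (fun y => (⟨y.1, y.2.1⟩ : {x // P x}))
      (by intro a b h; simp only [Subtype.mk.injEq] at h; exact Subtype.ext h)
  haveI f2 : Finite {x // P x ∧ ¬ Q x} :=
    Finite.of_injective (fun y => (⟨y.1, y.2.1⟩ : {x // P x}))
      (by intro a b h; simp only [Subtype.mk.injEq] at h; exact Subtype.ext h)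
  rw [← Nat.card_sum]
  refine Nat.card_congr ⟨fun x => if h : Q x.1 then .inl ⟨x.1, x.2, h⟩ else .inr ⟨x.1, x.2, h⟩,
    fun y => Sum.elim (fun a => ⟨a.1, a.2.1⟩) (fun a => ⟨a.1, a.2.1⟩) y, ?_, ?_⟩
  · intro x; by_cases h : Q x.1 <;> simp [h]
  · rintro (⟨x, hP, hQ⟩ | ⟨x, hP, hQ⟩) <;> simp [hQ]

lemma monic_mul_X_add_C {g : F[X]} (hg : g.Monic) (c : F) : (g * X + C c).Monic := by
  refine (hg.mul monic_X).add_of_left (lt_of_le_of_lt degree_C_le ?_)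
  rw [degree_mul, degree_X, degree_eq_natDegree hg.ne_zero]
  exact_mod_cast Nat.succ_pos g.natDegree

lemma natDegree_mul_X_add_C {g : F[X]} (hg : g ≠ 0) (c : F) :
    (g * X + C c).natDegree = g.natDegree + 1 := by
  rw [natDegree_add_C, natDegree_mul_X hg]

lemma monic_divX {e : F[X]} (he : e.Monic) (h0 : e.natDegree ≠ 0) : e.divX.Monic := by
  have : e.divX.coeff (e.divX.natDegree) = 1 := by
    rw [natDegree_divX_eq_natDegree_tsub_one, coeff_divX, Nat.sub_add_cancel (by omega)]
    exact he
  exact this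

lemma divX_mul_X_add' (g : F[X]) (c : F) : (g * X + C c).divX = g := by
  rw [divX_add, divX_C, add_zero]
  exact Polynomial.ext fun k => by rw [coeff_divX, coeff_mul_X]

lemma coeff_zero_mul_X_add_C (g : F[X]) (c : F) : (g * X + C c).coeff 0 = c := by
  simp [coeff_add, coeff_mul_X_zero]

variable [Fintype F]

/-- condition for pairs `(d, f)`: `d` monic squarefree with parity, `d^j ∣ f`, `deg f = n` -/
def Acond (j n : ℕ) (par : ℕ → Prop) (x : F[X] × F[X]) : Prop :=
  x.1.Monic ∧ Squarefree x.1 ∧ par (omegaP x.1) ∧ x.2.Monic ∧ x.2.natDegree = n ∧ x.1 ^ j ∣ x.2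

/-- condition for pairs `(d, e)`: `f = d^j * e` form -/
def Wcond (j n : ℕ) (par : ℕ → Prop) (x : F[X] × F[X]) : Prop :=
  x.1.Monic ∧ Squarefree x.1 ∧ par (omegaP x.1) ∧ x.2.Monic ∧ j * x.1.natDegree + x.2.natDegree = n

lemma Acond_finite (j n : ℕ) (par : ℕ → Prop) (hj : j ≠ 0) :
    Finite {x : F[X] × F[X] // Acond j n par x} := by
  refine finite_pair n (fun x hx => ?_)
  obtain ⟨h1, _, _, h4, h5, h6⟩ := hx
  have hf0 : x.2 ≠ 0 := h4.ne_zero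
  have hd : x.1 ∣ x.2 := (dvd_pow_self x.1 hj).trans h6
  exact ⟨h5 ▸ natDegree_le_of_dvd hd hf0, h5.le⟩

lemma Wcond_finite (j n : ℕ) (par : ℕ → Prop) (hj : j ≠ 0) :
    Finite {x : F[X] × F[X] // Wcond j n par x} := by
  refine finite_pair n (fun x hx => ?_)
  obtain ⟨_, _, _, _, h5⟩ := hx
  have : x.1.natDegree ≤ j * x.1.natDegree := Nat.le_mul_of_pos_left _ (by omega)
  omega

lemma card_A_eq_W (j n : ℕ) (par : ℕ → Prop) :
    Nat.card {x : F[X] × F[X] // Acond j n par x}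
      = Nat.card {x : F[X] × F[X] // Wcond j n par x} := by
  refine (Nat.card_congr (Equiv.ofBijective (fun y =>
    (⟨(y.1.1, y.1.1 ^ j * y.1.2), y.2.1, y.2.2.1, y.2.2.2.1, (y.2.1.pow j).mul y.2.2.2.2.1,
      by
        rw [natDegree_mul (y.2.1.pow j).ne_zero y.2.2.2.2.1.ne_zero, natDegree_pow]
        exact y.2.2.2.2.2,
      by dsimp only; exact dvd_mul_right _ _⟩ :
      {x : F[X] × F[X] // Acond j n par x})) ⟨?_, ?_⟩)).symm
  · rintro ⟨⟨d, e⟩, hd⟩ ⟨⟨d', e'⟩, hd'⟩ h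
    have h1 : d = d' := congrArg (fun y => y.1.1) h
    subst h1
    have h2 : d ^ j * e = d ^ j * e' := congrArg (fun y => y.1.2) h
    exact Subtype.ext (Prod.ext rfl (mul_left_cancel₀ (pow_ne_zero j hd.1.ne_zero) h2))
  · rintro ⟨⟨d, f⟩, hm, hsf, hpar, hfm, hdeg, e, hef⟩
    have hem : e.Monic := (hm.pow j).of_mul_monic_left (hef ▸ hfm)
    refine ⟨⟨(d, e), hm, hsf, hpar, hem, ?_⟩, ?_⟩
    · have hef' : f = d ^ j * e := hef
      have hdeg' : f.natDegree = n := hdeg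
      have : f.natDegree = j * d.natDegree + e.natDegree := by
        rw [hef', natDegree_mul (pow_ne_zero j hm.ne_zero) hem.ne_zero, natDegree_pow]
      dsimp only
      omega
    · exact Subtype.ext (Prod.ext rfl hef.symm)

lemma card_W_succ (j n : ℕ) (par : ℕ → Prop) (hj : j ≠ 0) (hn : n ≠ 0) :
    Nat.card {x : F[X] × F[X] // Wcond j n par x}
      = Nat.card {d : F[X] // d.Monic ∧ Squarefree d ∧ par (omegaP d) ∧ j * d.natDegree = n}
        + Fintype.card F * Nat.card {x : F[X] × F[X] // Wcond j (n - 1) par x} := by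
  classical
  haveI := Wcond_finite (F := F) j n par hj
  rw [card_split (Wcond j n par) (fun x => x.2.natDegree = 0)]
  congr 1
  · refine Nat.card_congr ⟨fun y => ⟨y.1.1, y.2.1.1, y.2.1.2.1, y.2.1.2.2.1, ?_⟩,
      fun d => ⟨(d.1, 1), ⟨d.2.1, d.2.2.1, d.2.2.2.1, monic_one, ?_⟩, natDegree_one⟩, ?_, ?_⟩
    · have h5 := y.2.1.2.2.2.2
      have h0 := y.2.2
      omega
    · dsimp only
      rw [natDegree_one, add_zero]
      exact d.2.2.2.2
    · rintro ⟨⟨d, e⟩, ⟨h1, h2, h3, h4, h5⟩, h0⟩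
      exact Subtype.ext (Prod.ext rfl ((Polynomial.Monic.natDegree_eq_zero h4).mp h0).symm)
    · rintro ⟨d, hd⟩; rfl
  · rw [← Nat.card_eq_fintype_card (α := F), ← Nat.card_prod]
    refine Nat.card_congr ⟨fun y => (y.1.2.coeff 0, ⟨(y.1.1, y.1.2.divX),
      y.2.1.1, y.2.1.2.1, y.2.1.2.2.1, monic_divX y.2.1.2.2.2.1 y.2.2, ?_⟩),
      fun z => ⟨(z.2.1.1, z.2.1.2 * X + C z.1),
        ⟨z.2.2.1, z.2.2.2.1, z.2.2.2.2.1, monic_mul_X_add_C z.2.2.2.2.2.1 z.1, ?_⟩, ?_⟩,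
      ?_, ?_⟩
    · have h5 := y.2.1.2.2.2.2
      have h0 := y.2.2
      dsimp only
      rw [natDegree_divX_eq_natDegree_tsub_one]
      omega
    · have h5 := z.2.2.2.2.2.2
      dsimp only
      rw [natDegree_mul_X_add_C z.2.2.2.2.2.1.ne_zero]
      omega
    · dsimp only
      rw [natDegree_mul_X_add_C z.2.2.2.2.2.1.ne_zero]
      omega
    · rintro ⟨⟨d, e⟩, ⟨h1, h2, h3, h4, h5⟩, h0⟩
      exact Subtype.ext (Prod.ext rfl (divX_mul_X_add e))
    · rintro ⟨c, ⟨⟨d, g⟩, h1, h2, h3, h4, h5⟩⟩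
      refine Prod.ext ?_ (Subtype.ext (Prod.ext rfl ?_))
      · exact coeff_zero_mul_X_add_C g c
      · exact divX_mul_X_add' g c
/-! ### Involutions -/

lemma step1 {n : ℕ} (hn : n ≠ 0) {d f : F[X]} (hd : d.Monic) (hsf : Squarefree d)
    (hf : f.Monic) (hdeg : f.natDegree = n) (hdvd : d ∣ f) :
    (tog (pickp 1 f) d).Monic ∧ Squarefree (tog (pickp 1 f) d) ∧ tog (pickp 1 f) d ∣ f ∧
      (Even (omegaP (tog (pickp 1 f) d)) ↔ ¬ Even (omegaP d)) ∧
      tog (pickp 1 f) (tog (pickp 1 f) d) = d := by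
  obtain ⟨hpm, hpi, hpf⟩ := pickp_spec (exists_pick_one hf (by rw [hdeg]; exact hn))
  rw [pow_one] at hpf
  exact ⟨tog_monic hpm hpi hd hsf, tog_squarefree hpm hpi hd hsf,
    tog_dvd_one hpm hpi hd hsf hdvd hpf, tog_parity hpm hpi hd hsf, tog_tog hpm hpi hd hsf⟩

lemma step2 {d f : F[X]} (hd : d.Monic) (hsf : Squarefree d)
    (hf0 : f ≠ 0) (hnsf : ¬ Squarefree f) (hdvd : d ^ 2 ∣ f) :
    (tog (pickp 2 f) d).Monic ∧ Squarefree (tog (pickp 2 f) d) ∧ (tog (pickp 2 f) d) ^ 2 ∣ f ∧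
      (Even (omegaP (tog (pickp 2 f) d)) ↔ ¬ Even (omegaP d)) ∧
      tog (pickp 2 f) (tog (pickp 2 f) d) = d := by
  obtain ⟨hpm, hpi, hpf⟩ := pickp_spec (exists_pick_two hf0 hnsf)
  exact ⟨tog_monic hpm hpi hd hsf, tog_squarefree hpm hpi hd hsf,
    tog_dvd_two hpm hpi hd hsf hdvd hpf, tog_parity hpm hpi hd hsf, tog_tog hpm hpi hd hsf⟩

lemma card_A1_even_odd (n : ℕ) (hn : n ≠ 0) :
    Nat.card {x : F[X] × F[X] // Acond 1 n Even x}
      = Nat.card {x : F[X] × F[X] // Acond 1 n Odd x} := by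
  refine Nat.card_congr ⟨fun y => ⟨(tog (pickp 1 y.1.2) y.1.1, y.1.2), ?_⟩,
    fun y => ⟨(tog (pickp 1 y.1.2) y.1.1, y.1.2), ?_⟩, ?_, ?_⟩
  · obtain ⟨⟨d, f⟩, hm, hsf, hpar, hfm, hdeg, hpow⟩ := y
    obtain ⟨t1, t2, t3, t4, _⟩ := step1 hn hm hsf hfm hdeg ((pow_one d) ▸ hpow)
    exact ⟨t1, t2, Nat.not_even_iff_odd.mp (fun hEt => (t4.mp hEt) hpar), hfm, hdeg,
      by rw [pow_one]; exact t3⟩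
  · obtain ⟨⟨d, f⟩, hm, hsf, hpar, hfm, hdeg, hpow⟩ := y
    obtain ⟨t1, t2, t3, t4, _⟩ := step1 hn hm hsf hfm hdeg ((pow_one d) ▸ hpow)
    exact ⟨t1, t2, t4.mpr (Nat.not_even_iff_odd.mpr hpar), hfm, hdeg,
      by rw [pow_one]; exact t3⟩
  · rintro ⟨⟨d, f⟩, hm, hsf, hpar, hfm, hdeg, hpow⟩
    obtain ⟨_, _, _, _, t5⟩ := step1 hn hm hsf hfm hdeg ((pow_one d) ▸ hpow)
    exact Subtype.ext (Prod.ext t5 rfl)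
  · rintro ⟨⟨d, f⟩, hm, hsf, hpar, hfm, hdeg, hpow⟩
    obtain ⟨_, _, _, _, t5⟩ := step1 hn hm hsf hfm hdeg ((pow_one d) ▸ hpow)
    exact Subtype.ext (Prod.ext t5 rfl)

lemma card_A2_mixed (n : ℕ) :
    Nat.card {x : F[X] × F[X] // Acond 2 n Even x ∧ ¬ Squarefree x.2}
      = Nat.card {x : F[X] × F[X] // Acond 2 n Odd x ∧ ¬ Squarefree x.2} := by
  refine Nat.card_congr ⟨fun y => ⟨(tog (pickp 2 y.1.2) y.1.1, y.1.2), ?_⟩,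
    fun y => ⟨(tog (pickp 2 y.1.2) y.1.1, y.1.2), ?_⟩, ?_, ?_⟩
  · obtain ⟨⟨d, f⟩, ⟨hm, hsf, hpar, hfm, hdeg, hpow⟩, hnsf⟩ := y
    obtain ⟨t1, t2, t3, t4, _⟩ := step2 hm hsf hfm.ne_zero hnsf hpow
    exact ⟨⟨t1, t2, Nat.not_even_iff_odd.mp (fun hEt => (t4.mp hEt) hpar), hfm, hdeg, t3⟩, hnsf⟩
  · obtain ⟨⟨d, f⟩, ⟨hm, hsf, hpar, hfm, hdeg, hpow⟩, hnsf⟩ := y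
    obtain ⟨t1, t2, t3, t4, _⟩ := step2 hm hsf hfm.ne_zero hnsf hpow
    exact ⟨⟨t1, t2, t4.mpr (Nat.not_even_iff_odd.mpr hpar), hfm, hdeg, t3⟩, hnsf⟩
  · rintro ⟨⟨d, f⟩, ⟨hm, hsf, hpar, hfm, hdeg, hpow⟩, hnsf⟩
    obtain ⟨_, _, _, _, t5⟩ := step2 hm hsf hfm.ne_zero hnsf hpow
    exact Subtype.ext (Prod.ext t5 rfl)
  · rintro ⟨⟨d, f⟩, ⟨hm, hsf, hpar, hfm, hdeg, hpow⟩, hnsf⟩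
    obtain ⟨_, _, _, _, t5⟩ := step2 hm hsf hfm.ne_zero hnsf hpow
    exact Subtype.ext (Prod.ext t5 rfl)

/-! ### The squarefree part of the `j = 2` count -/

lemma d_eq_one_of_sqf {d f : F[X]} (hd : d.Monic) (hsq : Squarefree f) (hdvd : d ^ 2 ∣ f) :
    d = 1 :=
  hd.eq_one_of_isUnit (hsq d (by rw [← pow_two]; exact hdvd))

lemma card_A2_sqf_even (n : ℕ) :
    Nat.card {x : F[X] × F[X] // Acond 2 n Even x ∧ Squarefree x.2}
      = Nat.card {f : F[X] // f.Monic ∧ Squarefree f ∧ f.natDegree = n} := by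
  refine Nat.card_congr ⟨fun y => ⟨y.1.2, y.2.1.2.2.2.1, y.2.2, y.2.1.2.2.2.2.1⟩,
    fun f => ⟨((1 : F[X]), f.1), ⟨monic_one, squarefree_one,
      by rw [omegaP_one]; exact Even.zero, f.2.1, f.2.2.2, by rw [one_pow]; exact one_dvd _⟩, f.2.2.1⟩, ?_, ?_⟩
  · rintro ⟨⟨d, f⟩, ⟨hm, hsf, hpar, hfm, hdeg, hpow⟩, hsq⟩
    exact Subtype.ext (Prod.ext (d_eq_one_of_sqf hm hsq hpow).symm rfl)
  · rintro ⟨f, hf⟩; rfl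

lemma card_A2_sqf_odd (n : ℕ) :
    Nat.card {x : F[X] × F[X] // Acond 2 n Odd x ∧ Squarefree x.2} = 0 := by
  have : IsEmpty {x : F[X] × F[X] // Acond 2 n Odd x ∧ Squarefree x.2} := by
    refine ⟨?_⟩
    rintro ⟨⟨d, f⟩, ⟨hm, hsf, hpar, hfm, hdeg, hpow⟩, hsq⟩
    rw [d_eq_one_of_sqf hm hsq hpow, omegaP_one] at hpar
    exact (Nat.not_even_iff_odd.mpr hpar) Even.zero
  simp

/-! ### Base cases -/

lemma Acond_two_zero {par : ℕ → Prop} {x : F[X] × F[X]} (h : Acond 2 0 par x) :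
    x = (1, 1) := by
  obtain ⟨hm, hsf, hpar, hfm, hdeg, hpow⟩ := h
  have hf1 : x.2 = 1 := (Polynomial.Monic.natDegree_eq_zero hfm).mp hdeg
  have hd1 : x.1 = 1 := hm.eq_one_of_isUnit
    (isUnit_of_dvd_one ((dvd_pow_self x.1 (two_ne_zero)).trans (hf1 ▸ hpow)))
  exact Prod.ext hd1 hf1

lemma card_A2_zero_even :
    Nat.card {x : F[X] × F[X] // Acond 2 0 Even x} = 1 := by
  rw [Nat.card_eq_one_iff_unique]
  constructor
  · exact ⟨fun a b => Subtype.ext ((Acond_two_zero a.2).trans (Acond_two_zero b.2).symm)⟩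
  · refine ⟨⟨(1, 1), monic_one, squarefree_one, ?_, monic_one, natDegree_one, by rw [one_pow]⟩⟩
    rw [omegaP_one]; exact Even.zero

lemma card_A2_zero_odd :
    Nat.card {x : F[X] × F[X] // Acond 2 0 Odd x} = 0 := by
  have : IsEmpty {x : F[X] × F[X] // Acond 2 0 Odd x} := by
    refine ⟨?_⟩
    rintro ⟨x, hx⟩
    have h1 := Acond_two_zero hx
    have := hx.2.2.1
    rw [h1, omegaP_one] at this
    exact (Nat.not_even_iff_odd.mpr this) Even.zero
  simp

/-! ### Degree one counts -/

lemma irred_of_monic_deg_one {f : F[X]} (hm : f.Monic) (h : f.natDegree = 1) :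
    Irreducible f := by
  have hdeg : f.degree = 1 := by
    rw [degree_eq_natDegree hm.ne_zero, h]; rfl
  exact irreducible_of_degree_eq_one hdeg

lemma card_monic_deg_one :
    Nat.card {f : F[X] // f.Monic ∧ f.natDegree = 1} = Fintype.card F := by
  rw [← Nat.card_eq_fintype_card (α := F)]
  refine Nat.card_congr ⟨fun f => f.1.coeff 0,
    fun c => ⟨X + C c, monic_X_add_C c, natDegree_X_add_C c⟩, ?_, ?_⟩
  · rintro ⟨f, hm, h1⟩
    apply Subtype.ext
    have hdeg : f.degree ≤ 1 := by
      rw [degree_eq_natDegree hm.ne_zero, h1]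
      exact le_refl _
    have heq := eq_X_add_C_of_degree_le_one hdeg
    have hc1 : f.coeff 1 = 1 := by
      have := hm
      rwa [Monic, leadingCoeff, h1] at this
    rw [hc1, map_one, one_mul] at heq
    exact heq.symm
  · intro c
    simp

lemma cE_one_even :
    Nat.card {f : F[X] // f.Monic ∧ Squarefree f ∧ f.natDegree = 1 ∧ Even (omegaP f)} = 0 := by
  have : IsEmpty {f : F[X] // f.Monic ∧ Squarefree f ∧ f.natDegree = 1 ∧ Even (omegaP f)} := by
    refine ⟨?_⟩
    rintro ⟨f, hm, hsf, h1, hev⟩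
    rw [omegaP_irreducible hm (irred_of_monic_deg_one hm h1)] at hev
    exact (Nat.not_even_iff_odd.mpr odd_one) hev
  simp

lemma cE_one_odd :
    Nat.card {f : F[X] // f.Monic ∧ Squarefree f ∧ f.natDegree = 1 ∧ Odd (omegaP f)}
      = Fintype.card F := by
  rw [← card_monic_deg_one]
  refine Nat.card_congr (Equiv.subtypeEquivRight (fun f => ?_))
  constructor
  · rintro ⟨h1, _, h3, _⟩; exact ⟨h1, h3⟩
  · rintro ⟨h1, h3⟩
    have hirr := irred_of_monic_deg_one h1 h3
    exact ⟨h1, hirr.squarefree, h3, by rw [omegaP_irreducible h1 hirr]; exact odd_one⟩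

/-! ### D-term conversions -/

lemma D_one (par : ℕ → Prop) (m : ℕ) :
    Nat.card {d : F[X] // d.Monic ∧ Squarefree d ∧ par (omegaP d) ∧ 1 * d.natDegree = m}
      = Nat.card {f : F[X] // f.Monic ∧ Squarefree f ∧ f.natDegree = m ∧ par (omegaP f)} := by
  refine Nat.card_congr (Equiv.subtypeEquivRight (fun f => ?_))
  constructor
  · rintro ⟨h1, h2, h3, h4⟩; exact ⟨h1, h2, by omega, h3⟩
  · rintro ⟨h1, h2, h3, h4⟩; exact ⟨h1, h2, h4, by omega⟩

lemma D_two_even_deg (par : ℕ → Prop) (k : ℕ) :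
    Nat.card {d : F[X] // d.Monic ∧ Squarefree d ∧ par (omegaP d) ∧ 2 * d.natDegree = 2 * k}
      = Nat.card {f : F[X] // f.Monic ∧ Squarefree f ∧ f.natDegree = k ∧ par (omegaP f)} := by
  refine Nat.card_congr (Equiv.subtypeEquivRight (fun f => ?_))
  constructor
  · rintro ⟨h1, h2, h3, h4⟩; exact ⟨h1, h2, by omega, h3⟩
  · rintro ⟨h1, h2, h3, h4⟩; exact ⟨h1, h2, h4, by omega⟩

lemma D_two_odd_deg (par : ℕ → Prop) (m : ℕ) (hm : ¬ 2 ∣ m) :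
    Nat.card {d : F[X] // d.Monic ∧ Squarefree d ∧ par (omegaP d) ∧ 2 * d.natDegree = m}
      = 0 := by
  have : IsEmpty {d : F[X] // d.Monic ∧ Squarefree d ∧ par (omegaP d) ∧ 2 * d.natDegree = m} := by
    refine ⟨?_⟩
    rintro ⟨d, _, _, _, h4⟩
    exact hm ⟨d.natDegree, h4.symm⟩
  simp
lemma D_two (par : ℕ → Prop) (m k : ℕ) (hk : m = 2 * k) :
    Nat.card {d : F[X] // d.Monic ∧ Squarefree d ∧ par (omegaP d) ∧ 2 * d.natDegree = m}
      = Nat.card {f : F[X] // f.Monic ∧ Squarefree f ∧ f.natDegree = k ∧ par (omegaP f)} := by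
  refine Nat.card_congr (Equiv.subtypeEquivRight (fun f => ?_))
  constructor
  · rintro ⟨h1, h2, h3, h4⟩; exact ⟨h1, h2, by omega, h3⟩
  · rintro ⟨h1, h2, h3, h4⟩; exact ⟨h1, h2, h4, by omega⟩

/-! ### Assembly -/

variable (F)

noncomputable def cA (j n : ℕ) (par : ℕ → Prop) : ℕ :=
  Nat.card {x : F[X] × F[X] // Acond j n par x}

noncomputable def cE (m : ℕ) (par : ℕ → Prop) : ℕ :=
  Nat.card {f : F[X] // f.Monic ∧ Squarefree f ∧ f.natDegree = m ∧ par (omegaP f)}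

noncomputable def cS (m : ℕ) : ℕ :=
  Nat.card {f : F[X] // f.Monic ∧ Squarefree f ∧ f.natDegree = m}

lemma rec1 (n : ℕ) (par : ℕ → Prop) (hn : n ≠ 0) :
    cA F 1 n par = cE F n par + Fintype.card F * cA F 1 (n - 1) par := by
  rw [cA, card_A_eq_W, card_W_succ 1 n par one_ne_zero hn, D_one, cA, card_A_eq_W, cE]

lemma rec2 (n : ℕ) (par : ℕ → Prop) (hn : n ≠ 0) :
    cA F 2 n par
      = Nat.card {d : F[X] // d.Monic ∧ Squarefree d ∧ par (omegaP d) ∧ 2 * d.natDegree = n}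
        + Fintype.card F * cA F 2 (n - 1) par := by
  rw [cA, card_A_eq_W, card_W_succ 2 n par two_ne_zero hn, cA, card_A_eq_W]

lemma EO (m : ℕ) (hm : 2 ≤ m) : cE F m Even = cE F m Odd := by
  have h1' : cA F 1 m Even = cA F 1 m Odd := card_A1_even_odd m (by omega)
  have h2' : cA F 1 (m - 1) Even = cA F 1 (m - 1) Odd :=
    card_A1_even_odd (m - 1) (by omega)
  rw [rec1 F m Even (by omega), rec1 F m Odd (by omega), h2'] at h1'
  exact Nat.add_right_cancel h1'

lemma claim2 (m : ℕ) (hm : 2 ≤ m) :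
    cA F 2 m Even + (Fintype.card F) ^ (m - 1) = cA F 2 m Odd + (Fintype.card F) ^ m := by
  set q := Fintype.card F with hq
  induction m, hm using Nat.le_induction with
  | base =>
    have e0 : cA F 2 0 Even = 1 := card_A2_zero_even
    have o0 : cA F 2 0 Odd = 0 := card_A2_zero_odd
    have e1 : cA F 2 1 Even = q := by
      rw [rec2 F 1 Even one_ne_zero, D_two_odd_deg Even 1 (by omega)]
      norm_num [e0]
      exact hq.symm
    have o1 : cA F 2 1 Odd = 0 := by
      rw [rec2 F 1 Odd one_ne_zero, D_two_odd_deg Odd 1 (by omega)]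
      norm_num [o0]
    rw [rec2 F 2 Even two_ne_zero, rec2 F 2 Odd two_ne_zero,
      D_two Even 2 1 (by norm_num), D_two Odd 2 1 (by norm_num), cE_one_even, cE_one_odd]
    norm_num [e1, o1]
    ring
  | succ m hm ih =>
    have hrecE := rec2 F (m + 1) Even (by omega)
    have hrecO := rec2 F (m + 1) Odd (by omega)
    rw [Nat.add_sub_cancel] at hrecE hrecO
    have hD : Nat.card {d : F[X] // d.Monic ∧ Squarefree d ∧ Even (omegaP d)
          ∧ 2 * d.natDegree = m + 1}
        = Nat.card {d : F[X] // d.Monic ∧ Squarefree d ∧ Odd (omegaP d)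
          ∧ 2 * d.natDegree = m + 1} := by
      by_cases h2 : 2 ∣ (m + 1)
      · obtain ⟨k, hk⟩ := h2
        rw [D_two Even (m + 1) k hk, D_two Odd (m + 1) k hk]
        exact EO F k (by omega)
      · rw [D_two_odd_deg Even (m + 1) h2, D_two_odd_deg Odd (m + 1) h2]
    have e1 : q * q ^ (m - 1) = q ^ m := by
      rw [← pow_succ']
      congr 1
      omega
    have e2 : q * q ^ m = q ^ (m + 1) := (pow_succ' q m).symm
    have key : q * cA F 2 m Even + q ^ m = q * cA F 2 m Odd + q ^ (m + 1) := by
      calc q * cA F 2 m Even + q ^ m = q * (cA F 2 m Even + q ^ (m - 1)) := by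
            rw [mul_add, e1]
        _ = q * (cA F 2 m Odd + q ^ m) := by rw [ih]
        _ = q * cA F 2 m Odd + q ^ (m + 1) := by rw [mul_add, e2]
    rw [hrecE, hrecO, hD, Nat.add_sub_cancel]
    set a := q * cA F 2 m Even
    set b := q * cA F 2 m Odd
    set c := q ^ m
    set e := q ^ (m + 1)
    omega

lemma A2_split (n : ℕ) : cA F 2 n Even = cS F n + cA F 2 n Odd := by
  haveI hE := Acond_finite (F := F) 2 n Even two_ne_zero
  haveI hO := Acond_finite (F := F) 2 n Odd two_ne_zero
  rw [cA, card_split (Acond 2 n Even) (fun x => Squarefree x.2), cA,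
    card_split (Acond 2 n Odd) (fun x => Squarefree x.2), card_A2_sqf_odd, zero_add,
    card_A2_sqf_even, card_A2_mixed, cS]

lemma Scount (n : ℕ) (hn : 2 ≤ n) :
    cS F n + (Fintype.card F) ^ (n - 1) = (Fintype.card F) ^ n := by
  have c := claim2 F n hn
  rw [A2_split F n] at c
  set a := cA F 2 n Odd
  set b := (Fintype.card F) ^ (n - 1)
  set d := (Fintype.card F) ^ n
  omega

lemma S_partition (n : ℕ) : cS F n = cE F n Even + cE F n Odd := by
  haveI : Finite {f : F[X] // f.Monic ∧ Squarefree f ∧ f.natDegree = n} :=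
    finite_of_natDegree_le n (fun f hf => hf.2.2.le)
  rw [cS, card_split (fun f : F[X] => f.Monic ∧ Squarefree f ∧ f.natDegree = n)
    (fun f => Even (omegaP f)), cE, cE]
  congr 1
  · refine Nat.card_congr (Equiv.subtypeEquivRight fun f => ?_)
    constructor
    · rintro ⟨⟨h1, h2, h3⟩, h4⟩; exact ⟨h1, h2, h3, h4⟩
    · rintro ⟨h1, h2, h3, h4⟩; exact ⟨⟨h1, h2, h3⟩, h4⟩
  · refine Nat.card_congr (Equiv.subtypeEquivRight fun f => ?_)
    constructor
    · rintro ⟨⟨h1, h2, h3⟩, h4⟩; exact ⟨h1, h2, h3, Nat.not_even_iff_odd.mp h4⟩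
    · rintro ⟨h1, h2, h3, h4⟩; exact ⟨⟨h1, h2, h3⟩, Nat.not_even_iff_odd.mpr h4⟩

end SqfCount

/-- For `n ≥ 2`, the number of monic square-free degree-`n` polynomials with an even
number of monic irreducible factors equals the number with an odd number of monic
irreducible factors, and each count equals `(q^n - q^(n-1))/2`. -/
theorem card_even_eq_card_odd_factors (F : Type*) [Field F] [Fintype F]
    (q : ℕ) (hq : q = Fintype.card F) (n : ℕ) (hn : 2 ≤ n) :
    Nat.card {f : F[X] // f.Monic ∧ Squarefree f ∧ f.natDegree = n ∧
        Even (Nat.card {g : F[X] // g.Monic ∧ Irreducible g ∧ g ∣ f})}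
      = Nat.card {f : F[X] // f.Monic ∧ Squarefree f ∧ f.natDegree = n ∧
        Odd (Nat.card {g : F[X] // g.Monic ∧ Irreducible g ∧ g ∣ f})}
    ∧ 2 * Nat.card {f : F[X] // f.Monic ∧ Squarefree f ∧ f.natDegree = n ∧
        Even (Nat.card {g : F[X] // g.Monic ∧ Irreducible g ∧ g ∣ f})}
      = q ^ n - q ^ (n - 1) := by
  subst hq
  have hEO : SqfCount.cE F n Even = SqfCount.cE F n Odd := SqfCount.EO F n hn
  have hS := SqfCount.Scount F n hn
  have hP := SqfCount.S_partition F n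
  have h2 : 2 * SqfCount.cE F n Even = SqfCount.cS F n := by
    rw [hP, hEO, two_mul]
  constructor
  · exact hEO
  · show 2 * SqfCount.cE F n Even
      = (Fintype.card F) ^ n - (Fintype.card F) ^ (n - 1)
    set b := (Fintype.card F) ^ (n - 1)
    set d := (Fintype.card F) ^ n
    omega
end

section
/- Let q ≥ 2 be an integer (e.g. a prime power) and n ≥ 1. Then ∑_{λ ⊢ n} |GL_n(q)| / w_q(λ) = q^{n²−n}, as an identity in ℚ, where the sum is over all partitions λ of n, |GL_n(q)| = ∏_{i=0}^{n−1} (q^n − q^i), and w_q(λ) = ∏_i i^{m_i(λ)} · m_i(λ)! · (q^i − 1)^{m_i(λ)}. (By Lemma 3.1 of the paper, |GL_n(q)|/w_q(λ) is the number of F-stable maximal tori of GL_n(F̄_q) of type λ, so this is Steinberg's theorem that the total number of F-stable maximal tori is q^{n²−n}.) -/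
open Finset

namespace SteinbergAux

variable (q : ℕ)

/-- single factor of the weight -/
def fct (j c : ℕ) : ℚ := (j:ℚ)^c * (Nat.factorial c : ℚ) * ((q:ℚ)^j - 1)^c

/-- the weight of a multiset of parts -/
def W (s : Multiset ℕ) : ℚ := ∏ j ∈ s.toFinset, fct q j (s.count j)

/-- the q-analogue target -/
def G : ℕ → ℚ
  | 0 => 1
  | (n+1) => G n * (q:ℚ)^n / ((q:ℚ)^(n+1) - 1)

def F (n : ℕ) : ℚ := ∑ P : Nat.Partition n, (W q P.parts)⁻¹

variable {q}

lemma one_lt_pow' (hq : 2 ≤ q) {i : ℕ} (hi : 1 ≤ i) : (1:ℚ) < (q:ℚ)^i := by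
  apply one_lt_pow₀ _ (by omega)
  exact_mod_cast hq

lemma pow_sub_one_ne (hq : 2 ≤ q) {i : ℕ} (hi : 1 ≤ i) : ((q:ℚ)^i - 1) ≠ 0 :=
  ne_of_gt (by linarith [one_lt_pow' hq hi])

@[simp] lemma fct_zero (j : ℕ) : fct q j 0 = 1 := by simp [fct]

lemma fct_succ (j c : ℕ) : fct q j (c+1) = (j:ℚ) * (c+1) * ((q:ℚ)^j - 1) * fct q j c := by
  simp only [fct, Nat.factorial_succ, pow_succ]
  push_cast
  ring

lemma fct_ne_zero (hq : 2 ≤ q) {j : ℕ} (hj : 1 ≤ j) (c : ℕ) : fct q j c ≠ 0 := by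
  have h1 : ((q:ℚ)^j - 1) ≠ 0 := pow_sub_one_ne hq hj
  have h2 : (j:ℚ) ≠ 0 := Nat.cast_ne_zero.mpr (by omega)
  have h3 : (Nat.factorial c : ℚ) ≠ 0 := Nat.cast_ne_zero.mpr (Nat.factorial_ne_zero c)
  simp [fct, pow_ne_zero, h1, h2, h3]

lemma W_ne_zero (hq : 2 ≤ q) {s : Multiset ℕ} (hs : ∀ j ∈ s, 1 ≤ j) : W q s ≠ 0 := by
  apply Finset.prod_ne_zero_iff.mpr
  intro j hj
  exact fct_ne_zero hq (hs j (Multiset.mem_toFinset.mp hj)) _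

lemma W_cons {j : ℕ} (s : Multiset ℕ) :
    W q (j ::ₘ s) = (j:ℚ) * (s.count j + 1) * ((q:ℚ)^j - 1) * W q s := by
  classical
  have hT : (j ::ₘ s).toFinset = insert j s.toFinset := Multiset.toFinset_cons j s
  have hWs : W q s = ∏ k ∈ insert j s.toFinset, fct q k (s.count k) := by
    apply Finset.prod_subset (Finset.subset_insert _ _)
    intro x _ hx
    rw [Multiset.count_eq_zero_of_notMem (by simpa using hx)]
    simp
  have hmem : j ∈ insert j s.toFinset := Finset.mem_insert_self _ _
  rw [W, hT, ← Finset.mul_prod_erase _ _ hmem, hWs, ← Finset.mul_prod_erase _ _ hmem]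
  have hcount : ∀ k ∈ (insert j s.toFinset).erase j,
      (j ::ₘ s).count k = s.count k := by
    intro k hk
    exact Multiset.count_cons_of_ne (Finset.ne_of_mem_erase hk) s
  rw [Finset.prod_congr rfl fun k hk => congrArg (fct q k) (hcount k hk),
    Multiset.count_cons_self, fct_succ]
  push_cast
  ring


lemma G_succ (hq : 2 ≤ q) (n : ℕ) :
    ((q:ℚ)^(n+1) - 1) * G q (n+1) = (q:ℚ)^n * G q n := by
  have hne : ((q:ℚ)^(n+1) - 1) ≠ 0 := pow_sub_one_ne hq (by omega)
  rw [G]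
  field_simp

lemma G_ne_zero (hq : 2 ≤ q) (n : ℕ) : G q n ≠ 0 := by
  induction n with
  | zero => simp [G]
  | succ n ih =>
      rw [G]
      exact div_ne_zero (mul_ne_zero ih (pow_ne_zero _ (by positivity)))
        (pow_sub_one_ne hq (by omega))

lemma G_sum (hq : 2 ≤ q) (n : ℕ) :
    ((q:ℚ)^n - 1) * G q n = ∑ m ∈ range n, G q m := by
  induction n with
  | zero => simp
  | succ n ih =>
      rw [G_succ hq n, Finset.sum_range_succ, ← ih]
      ring

lemma G_rec (hq : 2 ≤ q) (n : ℕ) :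
    (n:ℚ) * G q n = ∑ i ∈ Icc 1 n, G q (n-i) / ((q:ℚ)^i - 1) := by
  induction n with
  | zero => simp
  | succ n ih =>
      have hne : ((q:ℚ)^(n+1) - 1) ≠ 0 := pow_sub_one_ne hq (by omega)
      have hIcc : Icc 1 (n+1) = insert (n+1) (Icc 1 n) := by
        ext x; simp [Finset.mem_Icc]; omega
      have term : ∀ i ∈ Icc 1 n, ((q:ℚ)^(n+1)-1) * (G q (n+1-i)/((q:ℚ)^i-1))
          = (q:ℚ)^n * (G q (n-i)/((q:ℚ)^i-1)) + G q (n+1-i) := by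
        intro i hi
        obtain ⟨hi1, hin⟩ := Finset.mem_Icc.mp hi
        have h2 : ((q:ℚ)^i - 1) ≠ 0 := pow_sub_one_ne hq hi1
        have h1 : n + 1 - i = (n - i) + 1 := by omega
        have h3 : (q:ℚ)^i * (q:ℚ)^(n-i) = (q:ℚ)^n := by rw [← pow_add]; congr 1; omega
        have h4 := G_succ hq (n-i)
        rw [pow_succ] at h4
        rw [h1, pow_succ]
        have hM : (((q:ℚ)^n * (q:ℚ) - 1) * G q (n-i+1))
            = ((q:ℚ)^n * G q (n-i)) + ((q:ℚ)^i - 1) * G q (n-i+1) := by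
          linear_combination (q:ℚ)^i * h4 - ((q:ℚ) * G q (n-i+1) - G q (n-i)) * h3
        field_simp
        linear_combination hM
      have key : ((q:ℚ)^(n+1) - 1) * ∑ i ∈ Icc 1 (n+1), G q (n+1-i) / ((q:ℚ)^i - 1)
          = (q:ℚ)^n * ((n:ℚ) * G q n) + ∑ i ∈ Icc 1 (n+1), G q (n+1-i) := by
        have h0 : ((q:ℚ)^(n+1)-1) * (G q 0 / ((q:ℚ)^(n+1) - 1)) = G q 0 := by
          field_simp
        rw [Finset.mul_sum, hIcc, Finset.sum_insert (by simp),
          Finset.sum_insert (by simp), Nat.sub_self, h0,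
          Finset.sum_congr rfl term, Finset.sum_add_distrib,
          ← Finset.mul_sum, ← ih]
        ring
      have key2 : ∑ i ∈ Icc 1 (n+1), G q (n+1-i) = ∑ m ∈ range (n+1), G q m := by
        apply Finset.sum_nbij' (fun i => n + 1 - i) (fun m => n + 1 - m)
        · intro i hi; simp only [Finset.mem_Icc, Finset.mem_range] at hi ⊢; omega
        · intro m hm; simp only [Finset.mem_Icc, Finset.mem_range] at hm ⊢; omega
        · intro i hi; simp only [Finset.mem_Icc] at hi; omega
        · intro m hm; simp only [Finset.mem_range] at hm; omega
        · intro i hi; rfl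
      have final : ((q:ℚ)^(n+1)-1) * (((n:ℚ)+1) * G q (n+1))
          = ((q:ℚ)^(n+1)-1) * ∑ i ∈ Icc 1 (n+1), G q (n+1-i) / ((q:ℚ)^i - 1) := by
        rw [key, key2, ← G_sum hq]
        linear_combination (n:ℚ) * G_succ hq n
      have := mul_left_cancel₀ hne final
      push_cast
      exact this


lemma parts_mem_Icc {n : ℕ} (P : Nat.Partition n) {i : ℕ} (hi : i ∈ P.parts) :
    i ∈ Icc 1 n := by
  rw [Finset.mem_Icc]
  exact ⟨P.parts_pos hi, (Multiset.le_sum_of_mem hi).trans_eq P.parts_sum⟩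

lemma toFinset_subset_Icc {n : ℕ} (P : Nat.Partition n) : P.parts.toFinset ⊆ Icc 1 n :=
  fun i hi => parts_mem_Icc P (Multiset.mem_toFinset.mp hi)

lemma W_nonzero_partition (hq : 2 ≤ q) {n : ℕ} (P : Nat.Partition n) : W q P.parts ≠ 0 :=
  W_ne_zero hq fun j hj => P.parts_pos hj

lemma sum_count_eq {n : ℕ} (P : Nat.Partition n) :
    (n:ℚ) = ∑ i ∈ Icc 1 n, (P.parts.count i : ℚ) * (i : ℚ) := by
  have h := Finset.sum_multiset_count_of_subset P.parts (Icc 1 n) (toFinset_subset_Icc P)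
  rw [P.parts_sum] at h
  have h' : n = ∑ i ∈ Icc 1 n, P.parts.count i * i := by simpa [smul_eq_mul] using h
  conv_lhs => rw [h']
  push_cast
  rfl

lemma F_rec (hq : 2 ≤ q) (n : ℕ) :
    (n:ℚ) * F q n = ∑ i ∈ Icc 1 n, F q (n-i) / ((q:ℚ)^i - 1) := by
  classical
  have step1 : (n:ℚ) * F q n
      = ∑ i ∈ Icc 1 n, ∑ P : Nat.Partition n,
          (i:ℚ) * (P.parts.count i : ℚ) * (W q P.parts)⁻¹ := by
    rw [F, Finset.mul_sum, Finset.sum_comm]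
    apply Finset.sum_congr rfl
    intro P _
    rw [sum_count_eq P, Finset.sum_mul]
    apply Finset.sum_congr rfl
    intro i _
    ring
  rw [step1]
  apply Finset.sum_congr rfl
  intro i hi
  obtain ⟨hi1, hin⟩ := Finset.mem_Icc.mp hi
  -- restrict to partitions containing i
  have step2 : ∑ P : Nat.Partition n, (i:ℚ) * (P.parts.count i : ℚ) * (W q P.parts)⁻¹
      = ∑ P ∈ Finset.univ.filter (fun P : Nat.Partition n => i ∈ P.parts),
          (i:ℚ) * (P.parts.count i : ℚ) * (W q P.parts)⁻¹ := by
    symm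
    apply Finset.sum_filter_of_ne
    intro P _ hP
    by_contra hmem
    rw [Multiset.count_eq_zero_of_notMem hmem] at hP
    simp at hP
  rw [step2]
  have step3 : ∑ P ∈ Finset.univ.filter (fun P : Nat.Partition n => i ∈ P.parts),
          (i:ℚ) * (P.parts.count i : ℚ) * (W q P.parts)⁻¹
      = ∑ Q : Nat.Partition (n - i), (W q Q.parts)⁻¹ * ((q:ℚ)^i - 1)⁻¹ := by
    refine Finset.sum_bij'
      (fun (P : Nat.Partition n) (hP : P ∈ _) =>
        (⟨P.parts.erase i,
          fun hj => P.parts_pos (Multiset.mem_of_mem_erase hj),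
          by
            have hPmem : i ∈ P.parts := by simpa using hP
            have h := Multiset.cons_erase hPmem
            have h2 : (i ::ₘ P.parts.erase i).sum = n := by rw [h]; exact P.parts_sum
            rw [Multiset.sum_cons] at h2
            omega⟩ : Nat.Partition (n - i)))
      (fun (Q : Nat.Partition (n - i)) (_ : Q ∈ _) =>
        (⟨i ::ₘ Q.parts,
          fun hj => by
            rcases Multiset.mem_cons.mp hj with h | h
            · subst h; omega
            · exact Q.parts_pos h,
          by rw [Multiset.sum_cons, Q.parts_sum]; omega⟩ : Nat.Partition n))
      ?_ ?_ ?_ ?_ ?_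
    · intro P hP; exact Finset.mem_univ _
    · intro Q hQ
      simp only [Finset.mem_filter, Finset.mem_univ, true_and]
      exact Multiset.mem_cons_self i _
    · intro P hP
      apply Nat.Partition.ext
      exact Multiset.cons_erase (by simpa using hP)
    · intro Q hQ
      apply Nat.Partition.ext
      exact Multiset.erase_cons_head i _
    · intro P hP
      have hPmem : i ∈ P.parts := by simpa using hP
      have h := (Multiset.cons_erase hPmem).symm
      set e := P.parts.erase i with he
      have hcount : P.parts.count i = e.count i + 1 := by
        rw [h, Multiset.count_cons_self]
      have hW : W q P.parts = (i:ℚ) * (e.count i + 1) * ((q:ℚ)^i - 1) * W q e := by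
        rw [h, W_cons]
      rw [hcount, hW]
      have h1 : (i:ℚ) ≠ 0 := Nat.cast_ne_zero.mpr (by omega)
      have h2 : ((e.count i : ℚ) + 1) ≠ 0 := by positivity
      have h3 : ((q:ℚ)^i - 1) ≠ 0 := pow_sub_one_ne hq hi1
      have h4 : W q e ≠ 0 := W_ne_zero hq fun j hj =>
        P.parts_pos (Multiset.mem_of_mem_erase hj)
      push_cast
      field_simp
      ring_nf
      rw [← he, mul_inv_cancel₀ h4]
  rw [step3, ← Finset.sum_mul, ← F, div_eq_mul_inv]

lemma F_zero : F q 0 = 1 := by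
  rw [F, Fintype.sum_unique]
  simp [W]


lemma F_eq_G (hq : 2 ≤ q) : ∀ n, F q n = G q n := by
  intro n
  induction n using Nat.strong_induction_on with
  | _ n ih =>
    match n with
    | 0 => rw [F_zero]; rfl
    | (m+1) =>
      have h1 := F_rec hq (m+1)
      have h2 := G_rec hq (m+1)
      have hsum : ∑ i ∈ Icc 1 (m+1), F q (m+1-i) / ((q:ℚ)^i - 1)
          = ∑ i ∈ Icc 1 (m+1), G q (m+1-i) / ((q:ℚ)^i - 1) := by
        apply Finset.sum_congr rfl
        intro i hi
        obtain ⟨hi1, _⟩ := Finset.mem_Icc.mp hi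
        rw [ih (m+1-i) (by omega)]
      rw [hsum, ← h2] at h1
      have hm : ((m+1 : ℕ) : ℚ) ≠ 0 := Nat.cast_ne_zero.mpr (by omega)
      exact mul_left_cancel₀ hm h1

lemma prodGL (hq : 2 ≤ q) (n : ℕ) :
    ∏ i ∈ range n, ((q:ℚ)^n - (q:ℚ)^i)
      = (q:ℚ)^(∑ i ∈ range n, i) * ∏ i ∈ range n, ((q:ℚ)^(i+1) - 1) := by
  have h1 : ∏ i ∈ range n, ((q:ℚ)^n - (q:ℚ)^i)
      = ∏ i ∈ range n, ((q:ℚ)^i * ((q:ℚ)^(n-i) - 1)) := by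
    apply Finset.prod_congr rfl
    intro i hi
    rw [Finset.mem_range] at hi
    rw [mul_sub, mul_one, ← pow_add]
    congr 2
    omega
  rw [h1, Finset.prod_mul_distrib, Finset.prod_pow_eq_pow_sum]
  congr 1
  rw [← Finset.prod_range_reflect]
  apply Finset.prod_congr rfl
  intro i hi
  rw [Finset.mem_range] at hi
  congr 2
  omega

lemma prodG (hq : 2 ≤ q) (n : ℕ) :
    (∏ i ∈ range n, ((q:ℚ)^(i+1) - 1)) * G q n = (q:ℚ)^(∑ i ∈ range n, i) := by
  induction n with
  | zero => simp; rfl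
  | succ n ih =>
      rw [Finset.prod_range_succ, mul_assoc, G_succ hq n,
        Finset.sum_range_succ, pow_add, ← ih]
      ring

lemma sum_exp (n : ℕ) : (∑ i ∈ range n, i) + (∑ i ∈ range n, i) = n^2 - n := by
  have h := Finset.sum_range_id_mul_two n
  have h2 : n * (n-1) = n^2 - n := by
    cases n with
    | zero => simp
    | succ m =>
        rw [Nat.succ_sub_one, pow_two, Nat.mul_succ (m+1) m, Nat.add_sub_cancel]
  omega

end SteinbergAux

open SteinbergAux in
/-- Steinberg's theorem via Lemma 3.1: summing the number of `F`-stable maximal tori of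
each type `λ` over all partitions `λ` of `n` gives `q^(n²-n)`. -/
theorem sum_tori_counts (q : ℕ) (hq : 2 ≤ q) (n : ℕ) (hn : 1 ≤ n) :
    ∑ P : Nat.Partition n,
        (∏ i ∈ range n, ((q : ℚ) ^ n - (q : ℚ) ^ i)) /
          (∏ i ∈ Icc 1 n,
            ((i : ℚ) ^ (P.parts.count i) * (Nat.factorial (P.parts.count i) : ℚ) *
              ((q : ℚ) ^ i - 1) ^ (P.parts.count i)))
      = (q : ℚ) ^ (n ^ 2 - n) := by
  have hD : ∀ P : Nat.Partition n,
      ∏ i ∈ Icc 1 n,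
          ((i : ℚ) ^ (P.parts.count i) * (Nat.factorial (P.parts.count i) : ℚ) *
            ((q : ℚ) ^ i - 1) ^ (P.parts.count i)) = W q P.parts := by
    intro P
    rw [W]
    exact (Finset.prod_subset (toFinset_subset_Icc P) (fun x _ hx => by
      rw [show P.parts.count x = 0 from
        Multiset.count_eq_zero_of_notMem (by simpa using hx)]
      simp [fct])).symm
  calc ∑ P : Nat.Partition n,
        (∏ i ∈ range n, ((q : ℚ) ^ n - (q : ℚ) ^ i)) /
          (∏ i ∈ Icc 1 n,
            ((i : ℚ) ^ (P.parts.count i) * (Nat.factorial (P.parts.count i) : ℚ) *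
              ((q : ℚ) ^ i - 1) ^ (P.parts.count i)))
      = (∏ i ∈ range n, ((q : ℚ) ^ n - (q : ℚ) ^ i)) * F q n := by
        rw [F, Finset.mul_sum]
        apply Finset.sum_congr rfl
        intro P _
        rw [hD P, div_eq_mul_inv]
    _ = (q:ℚ) ^ (n^2 - n) := by
        rw [F_eq_G hq, prodGL hq, mul_assoc, prodG hq, ← pow_add, sum_exp]
end

section
/- Let x be a real number with 0 < x < 1 and n ≥ 1. Then ∑_{λ ⊢ n} [∏_{j=1}^{n} (1 − x^j)] / [∏_i i^{m_i(λ)} · m_i(λ)! · (1 − x^i)^{m_i(λ)}] = 1, where the sum is over all partitions λ of n. (This is Cayley's identity; with x = 1/q it says that λ ↦ (number of F-stable maximal tori of GL_n(F̄_q) of type λ)/q^{n²−n} is a probability distribution on partitions of n.) -/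
open Finset

namespace CayleyAux

/-- The weight factor for part size `i` with multiplicity `m`. -/
noncomputable def w (x : ℝ) (i m : ℕ) : ℝ :=
  ((i : ℝ) ^ m * (Nat.factorial m : ℝ) * (1 - x ^ i) ^ m)⁻¹

/-- The weight of a multiset of parts. -/
noncomputable def f (x : ℝ) (s : Multiset ℕ) : ℝ := ∏ i ∈ s.toFinset, w x i (s.count i)

noncomputable def S (x : ℝ) (m : ℕ) : ℝ := ∑ P : Nat.Partition m, f x P.parts

noncomputable def T (x : ℝ) (m : ℕ) : ℝ := ∏ j ∈ Ioc 0 m, (1 - x ^ j)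

lemma w_zero (x : ℝ) (i : ℕ) : w x i 0 = 1 := by simp [w]

lemma f_eq_prod (x : ℝ) {s : Multiset ℕ} {A : Finset ℕ} (hA : s.toFinset ⊆ A) :
    f x s = ∏ i ∈ A, w x i (s.count i) := by
  rw [f]
  refine Finset.prod_subset hA fun j _ hj => ?_
  have hc : s.count j = 0 :=
    Multiset.count_eq_zero.mpr (fun h => hj (Multiset.mem_toFinset.mpr h))
  rw [hc, w_zero]

lemma f_cons (x : ℝ) (i : ℕ) (s : Multiset ℕ) :
    f x (i ::ₘ s) = ((i : ℝ) * ((s.count i : ℝ) + 1) * (1 - x ^ i))⁻¹ * f x s := by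
  have h1 : (i ::ₘ s).toFinset = insert i s.toFinset := Multiset.toFinset_cons i s
  have hmem : i ∈ insert i s.toFinset := mem_insert_self i _
  have hsub : s.toFinset ⊆ insert i s.toFinset := subset_insert _ _
  rw [f, h1, ← Finset.mul_prod_erase _ _ hmem, f_eq_prod x hsub,
    ← Finset.mul_prod_erase _ _ hmem]
  have hcount : (i ::ₘ s).count i = s.count i + 1 := Multiset.count_cons_self i s
  have hrest : ∀ j ∈ (insert i s.toFinset).erase i,
      w x j ((i ::ₘ s).count j) = w x j (s.count j) := by
    intro j hj
    rw [Multiset.count_cons_of_ne (Finset.ne_of_mem_erase hj)]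
  rw [Finset.prod_congr rfl hrest, hcount]
  have hw : w x i (s.count i + 1)
      = ((i : ℝ) * ((s.count i : ℝ) + 1) * (1 - x ^ i))⁻¹ * w x i (s.count i) := by
    rw [w, w, ← mul_inv]
    congr 1
    push_cast [pow_succ, Nat.factorial_succ]
    ring
  rw [hw]
  ring

lemma parts_subset {n : ℕ} (P : Nat.Partition n) : P.parts.toFinset ⊆ Icc 1 n := by
  intro j hj
  have hjm := Multiset.mem_toFinset.mp hj
  refine mem_Icc.mpr ⟨P.parts_pos hjm, ?_⟩
  calc j ≤ P.parts.sum := Multiset.single_le_sum (fun y _ => Nat.zero_le y) j hjm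
    _ = n := P.parts_sum

lemma sum_count {n : ℕ} (P : Nat.Partition n) :
    ∑ i ∈ Icc 1 n, i * P.parts.count i = n := by
  rw [← Finset.sum_subset (parts_subset P) (fun j _ hj => by
    rw [Multiset.count_eq_zero.mpr (fun h => hj (Multiset.mem_toFinset.mpr h)), mul_zero])]
  calc ∑ i ∈ P.parts.toFinset, i * P.parts.count i
      = ∑ i ∈ P.parts.toFinset, P.parts.count i • i := by
        refine Finset.sum_congr rfl fun i _ => ?_
        rw [smul_eq_mul, mul_comm]
    _ = P.parts.sum := (Finset.sum_multiset_count P.parts).symm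
    _ = n := P.parts_sum

lemma sum_partition_count (x : ℝ) (n i : ℕ) (h1 : 1 ≤ i) (hin : i ≤ n) :
    ∑ P : Nat.Partition n, ((i : ℝ) * (P.parts.count i : ℝ)) * f x P.parts
      = (1 - x ^ i)⁻¹ * S x (n - i) := by
  rw [S, Finset.mul_sum]
  rw [← Finset.sum_filter_of_ne
    (p := fun P : Nat.Partition n => i ∈ P.parts) (fun P _ hP => by
      by_contra hmem
      apply hP
      rw [Multiset.count_eq_zero.mpr hmem]
      simp)]
  refine (Finset.sum_nbij (i := fun Q : Nat.Partition (n - i) =>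
    (⟨i ::ₘ Q.parts, ?_, ?_⟩ : Nat.Partition n)) ?_ ?_ ?_ ?_).symm
  · intro j hj
    rcases Multiset.mem_cons.mp hj with h | h
    · omega
    · exact Q.parts_pos h
  · rw [Multiset.sum_cons, Q.parts_sum]; omega
  · intro Q _
    simp [Multiset.mem_cons]
  · intro a _ b _ hab
    have : a.parts = b.parts := by
      have := congrArg Nat.Partition.parts hab
      simpa using this
    exact Nat.Partition.ext this
  · intro P hP
    simp only [Finset.coe_filter, Set.mem_setOf_eq, Finset.mem_univ, true_and] at hP
    have hiP : i ∈ P.parts := hP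
    refine ⟨⟨P.parts.erase i, ?_, ?_⟩, by simp, ?_⟩
    · intro j hj
      exact P.parts_pos (Multiset.mem_of_mem_erase hj)
    · have hce : i ::ₘ P.parts.erase i = P.parts := Multiset.cons_erase hiP
      have hsum : i + (P.parts.erase i).sum = n := by
        rw [← Multiset.sum_cons, hce, P.parts_sum]
      omega
    · exact Nat.Partition.ext (Multiset.cons_erase hiP)
  · intro Q _
    have key : ∀ a g : ℝ, a ≠ 0 → a * ((a * (1 - x ^ i))⁻¹ * g) = (1 - x ^ i)⁻¹ * g := by
      intro a g ha
      rw [mul_inv, ← mul_assoc, ← mul_assoc, mul_inv_cancel₀ ha, one_mul]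
    have hc : (i ::ₘ Q.parts).count i = Q.parts.count i + 1 := Multiset.count_cons_self i Q.parts
    rw [f_cons, hc]
    have ha : ((i : ℝ) * ((Q.parts.count i : ℝ) + 1)) ≠ 0 := by positivity
    push_cast
    exact (key _ _ ha).symm

lemma recS (x : ℝ) (n : ℕ) :
    (n : ℝ) * S x n = ∑ i ∈ Icc 1 n, (1 - x ^ i)⁻¹ * S x (n - i) := by
  rw [S, Finset.mul_sum]
  have h1 : ∀ P : Nat.Partition n, (n : ℝ) * f x P.parts
      = ∑ i ∈ Icc 1 n, ((i : ℝ) * (P.parts.count i : ℝ)) * f x P.parts := by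
    intro P
    rw [← Finset.sum_mul]
    congr 1
    have h := sum_count P
    calc ((n : ℝ)) = ((∑ i ∈ Icc 1 n, i * P.parts.count i : ℕ) : ℝ) := by rw [h]
      _ = ∑ i ∈ Icc 1 n, ((i : ℝ) * (P.parts.count i : ℝ)) := by push_cast; rfl
  rw [Finset.sum_congr rfl (fun P _ => h1 P), Finset.sum_comm]
  refine Finset.sum_congr rfl fun i hi => ?_
  obtain ⟨hi1, hin⟩ := mem_Icc.mp hi
  exact sum_partition_count x n i hi1 hin

lemma lemR (x : ℝ) (hne : ∀ i : ℕ, i ≠ 0 → (1 : ℝ) - x ^ i ≠ 0) (n : ℕ) :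
    ∑ i ∈ Icc 1 n, (∏ j ∈ Ioc (n - i) n, (1 - x ^ j)) / (1 - x ^ i) = n := by
  induction n with
  | zero => simp
  | succ n ih =>
    have hterm : ∀ i ∈ Icc 1 (n + 1),
        (∏ j ∈ Ioc (n + 1 - i) (n + 1), (1 - x ^ j)) / (1 - x ^ i)
          = (∏ j ∈ Ioc (n + 1 - i) n, (1 - x ^ j))
            + x ^ i * ((1 - x ^ (n + 1 - i)) * ∏ j ∈ Ioc (n + 1 - i) n, (1 - x ^ j))
              / (1 - x ^ i) := by
      intro i hi
      obtain ⟨hi1, hi2⟩ := mem_Icc.mp hi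
      have hle : n + 1 - i ≤ n := by omega
      rw [Finset.prod_Ioc_succ_top hle]
      have hp : x ^ i * x ^ (n + 1 - i) = x ^ (n + 1) := by
        rw [← pow_add]; congr 1; omega
      have hsplit : (1 : ℝ) - x ^ (n + 1) = (1 - x ^ i) + x ^ i * (1 - x ^ (n + 1 - i)) := by
        rw [mul_sub, hp]; ring
      have hxi := hne i (by omega)
      field_simp
      rw [hsplit]
    rw [Finset.sum_congr rfl hterm, Finset.sum_add_distrib]
    have hB : ∑ i ∈ Icc 1 (n + 1),
        x ^ i * ((1 - x ^ (n + 1 - i)) * ∏ j ∈ Ioc (n + 1 - i) n, (1 - x ^ j)) / (1 - x ^ i)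
        = (n : ℝ) - ∑ i ∈ Icc 1 n, ∏ j ∈ Ioc (n - i) n, (1 - x ^ j) := by
      rw [Finset.sum_Icc_succ_top (by omega : 1 ≤ n + 1)]
      have htop : x ^ (n + 1) * ((1 - x ^ (n + 1 - (n + 1)))
          * ∏ j ∈ Ioc (n + 1 - (n + 1)) n, (1 - x ^ j)) / (1 - x ^ (n + 1)) = 0 := by
        simp
      rw [htop, add_zero]
      have hmid : ∀ i ∈ Icc 1 n,
          x ^ i * ((1 - x ^ (n + 1 - i)) * ∏ j ∈ Ioc (n + 1 - i) n, (1 - x ^ j)) / (1 - x ^ i)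
          = (∏ j ∈ Ioc (n - i) n, (1 - x ^ j)) / (1 - x ^ i)
            - ∏ j ∈ Ioc (n - i) n, (1 - x ^ j) := by
        intro i hi
        obtain ⟨hi1, hi2⟩ := mem_Icc.mp hi
        have hIoc : Ioc (n - i) n = Finset.cons (n + 1 - i) (Ioc (n + 1 - i) n)
            Finset.left_notMem_Ioc := by
          rw [← Finset.Icc_eq_cons_Ioc (by omega : n + 1 - i ≤ n)]
          have h : n - i + 1 = n + 1 - i := by omega
          rw [← Finset.Icc_add_one_left_eq_Ioc, h]
        rw [hIoc, Finset.prod_cons]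
        have hxi := hne i (by omega)
        field_simp
        ring
      rw [Finset.sum_congr rfl hmid, Finset.sum_sub_distrib, ih]
    rw [hB]
    have hA : ∑ i ∈ Icc 1 (n + 1), ∏ j ∈ Ioc (n + 1 - i) n, (1 - x ^ j)
        = 1 + ∑ i ∈ Icc 1 n, ∏ j ∈ Ioc (n - i) n, (1 - x ^ j) := by
      rw [← Finset.Ico_add_one_right_eq_Icc 1 (n + 1), Finset.sum_Ico_eq_sum_range,
        ← Finset.Ico_add_one_right_eq_Icc 1 n, Finset.sum_Ico_eq_sum_range]
      simp only [Nat.add_sub_cancel]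
      rw [Finset.sum_range_succ' (fun k => ∏ j ∈ Ioc (n + 1 - (1 + k)) n, (1 - x ^ j)) n]
      have h0 : ∏ j ∈ Ioc (n + 1 - (1 + 0)) n, (1 - x ^ j) = 1 := by
        rw [show n + 1 - (1 + 0) = n by omega, Finset.Ioc_self, Finset.prod_empty]
      rw [h0, add_comm]
      congr 1
      refine Finset.sum_congr rfl fun k _ => ?_
      have : n + 1 - (1 + (k + 1)) = n - (1 + k) := by omega
      rw [this]
    rw [hA]
    push_cast
    ring

lemma mainS (x : ℝ) (hne : ∀ i : ℕ, i ≠ 0 → (1 : ℝ) - x ^ i ≠ 0) (n : ℕ) :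
    S x n * T x n = 1 := by
  induction n using Nat.strong_induction_on with
  | _ n ih =>
    rcases Nat.eq_zero_or_pos n with h0 | hpos
    · subst h0
      rw [S, T]
      rw [Fintype.sum_eq_single default (fun P hP => absurd (Subsingleton.elim P default) hP)]
      have hparts : (default : Nat.Partition 0).parts = 0 := by
        refine Multiset.eq_zero_of_forall_notMem fun j hj => ?_
        have h1 := (default : Nat.Partition 0).parts_pos hj
        have h2 : j ≤ Multiset.sum (default : Nat.Partition 0).parts :=
          Multiset.single_le_sum (fun y _ => Nat.zero_le y) j hj
        rw [(default : Nat.Partition 0).parts_sum] at h2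
        omega
      rw [f, hparts]
      simp
    · have hn0 : (n : ℝ) ≠ 0 := Nat.cast_ne_zero.mpr (by omega)
      have key : (n : ℝ) * (S x n * T x n) = (n : ℝ) * 1 := by
        calc (n : ℝ) * (S x n * T x n) = ((n : ℝ) * S x n) * T x n := by ring
          _ = (∑ i ∈ Icc 1 n, (1 - x ^ i)⁻¹ * S x (n - i)) * T x n := by rw [recS]
          _ = ∑ i ∈ Icc 1 n, (1 - x ^ i)⁻¹ * S x (n - i) * T x n := by rw [Finset.sum_mul]
          _ = ∑ i ∈ Icc 1 n, (∏ j ∈ Ioc (n - i) n, (1 - x ^ j)) / (1 - x ^ i) := by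
              refine Finset.sum_congr rfl fun i hi => ?_
              obtain ⟨hi1, hi2⟩ := mem_Icc.mp hi
              have hT : T x n = T x (n - i) * ∏ j ∈ Ioc (n - i) n, (1 - x ^ j) := by
                rw [T, T, Finset.prod_Ioc_consecutive _ (Nat.zero_le _) (Nat.sub_le n i)]
              rw [hT]
              have hih := ih (n - i) (by omega)
              calc (1 - x ^ i)⁻¹ * S x (n - i)
                    * (T x (n - i) * ∏ j ∈ Ioc (n - i) n, (1 - x ^ j))
                  = (S x (n - i) * T x (n - i))
                    * ((∏ j ∈ Ioc (n - i) n, (1 - x ^ j)) * (1 - x ^ i)⁻¹) := by ring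
                _ = (∏ j ∈ Ioc (n - i) n, (1 - x ^ j)) / (1 - x ^ i) := by
                    rw [hih, one_mul, div_eq_mul_inv]
          _ = (n : ℝ) * 1 := by rw [lemR x hne n, mul_one]
      exact mul_left_cancel₀ hn0 key

end CayleyAux

/-- Cayley's identity: for `0 < x < 1`,
`∑_{λ ⊢ n} ∏_{j=1}^n (1 - x^j) / ∏_i i^{mᵢ} mᵢ! (1 - x^i)^{mᵢ} = 1`. -/
theorem cayley_identity (x : ℝ) (hx0 : 0 < x) (hx1 : x < 1) (n : ℕ) (hn : 1 ≤ n) :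
    ∑ P : Nat.Partition n,
        (∏ j ∈ Icc 1 n, (1 - x ^ j)) /
          (∏ i ∈ Icc 1 n,
            ((i : ℝ) ^ (P.parts.count i) * (Nat.factorial (P.parts.count i) : ℝ) *
              (1 - x ^ i) ^ (P.parts.count i)))
      = 1 := by
  have hne : ∀ i : ℕ, i ≠ 0 → (1 : ℝ) - x ^ i ≠ 0 := by
    intro i hi
    have : x ^ i < 1 := pow_lt_one₀ hx0.le hx1 hi
    exact ne_of_gt (by linarith)
  have hmain := CayleyAux.mainS x hne n
  have hstep : ∀ P : Nat.Partition n,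
      (∏ j ∈ Icc 1 n, (1 - x ^ j)) /
          (∏ i ∈ Icc 1 n,
            ((i : ℝ) ^ (P.parts.count i) * (Nat.factorial (P.parts.count i) : ℝ) *
              (1 - x ^ i) ^ (P.parts.count i)))
        = CayleyAux.f x P.parts * CayleyAux.T x n := by
    intro P
    rw [CayleyAux.f_eq_prod x (CayleyAux.parts_subset P), CayleyAux.T, ← Finset.Icc_add_one_left_eq_Ioc,
      div_eq_mul_inv, ← Finset.prod_inv_distrib, mul_comm]
    rfl
  rw [Finset.sum_congr rfl (fun P _ => hstep P), ← Finset.sum_mul]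
  exact hmain
end

section
/- Let q ≥ 2 be an integer (e.g. a prime power) and n ≥ 1. Then ∑_{λ ⊢ n} m₁(λ) · |GL_n(q)| / w_q(λ) = q^{n²−n} · (1 + 1/q + 1/q² + ⋯ + 1/q^{n−1}), as an identity in ℚ. (Since |GL_n(q)|/w_q(λ) is the number of F-stable maximal tori of GL_n(F̄_q) of type λ and m₁(λ) is the number of eigenvectors of such a torus, this says the expected number of eigenvectors of a uniformly random F-stable maximal torus of GL_n(F̄_q) is ∑_{i=0}^{n−1} q^{−i}.) -/
open Finset

namespace ToriAux

/-- weight of a multiset of parts -/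
noncomputable def Wt (x : ℚ) (s : Multiset ℕ) : ℚ :=
  ∏ i ∈ s.toFinset,
    ((i : ℚ) ^ (s.count i) * (Nat.factorial (s.count i) : ℚ) * (x ^ i - 1) ^ (s.count i))

noncomputable def Gp (x : ℚ) (m : ℕ) : ℚ := ∑ P : Nat.Partition m, 1 / Wt x P.parts

noncomputable def cc (x : ℚ) (m : ℕ) : ℚ := ∏ k ∈ range m, (x ^ k / (x ^ (k + 1) - 1))

noncomputable def vv (x : ℚ) (m : ℕ) : ℚ := ∏ k ∈ range m, ((x ^ (k + 1) - 1) / x ^ (k + 1))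

variable {x : ℚ}

lemma hx0 (hx : 2 ≤ x) : x ≠ 0 := by intro h; rw [h] at hx; norm_num at hx

lemma hx1 (hx : 2 ≤ x) : x ≠ 1 := by intro h; rw [h] at hx; norm_num at hx

lemma pow_sub_one_ne (hx : 2 ≤ x) (k : ℕ) : x ^ (k + 1) - 1 ≠ 0 := by
  have : (1 : ℚ) < x ^ (k + 1) := one_lt_pow₀ (by linarith) (by omega)
  intro h
  have : x ^ (k+1) = 1 := by linarith [sub_eq_zero.1 h]
  linarith

lemma pow_sub_one_ne' (hx : 2 ≤ x) {i : ℕ} (hi : 1 ≤ i) : x ^ i - 1 ≠ 0 := by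
  obtain ⟨k, rfl⟩ : ∃ k, i = k + 1 := ⟨i - 1, by omega⟩
  exact pow_sub_one_ne hx k

lemma vv_ne (hx : 2 ≤ x) (m : ℕ) : vv x m ≠ 0 := by
  rw [vv]
  exact Finset.prod_ne_zero_iff.2 fun k _ =>
    div_ne_zero (pow_sub_one_ne hx k) (pow_ne_zero _ (hx0 hx))

lemma cc_ne (hx : 2 ≤ x) (m : ℕ) : cc x m ≠ 0 := by
  rw [cc]
  exact Finset.prod_ne_zero_iff.2 fun k _ =>
    div_ne_zero (pow_ne_zero _ (hx0 hx)) (pow_sub_one_ne hx k)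

lemma vv_succ (m : ℕ) : vv x (m + 1) = vv x m * ((x ^ (m + 1) - 1) / x ^ (m + 1)) :=
  Finset.prod_range_succ _ _

lemma cc_succ (m : ℕ) : cc x (m + 1) = cc x m * (x ^ m / (x ^ (m + 1) - 1)) :=
  Finset.prod_range_succ _ _

lemma cc_mul_vv (hx : 2 ≤ x) (m : ℕ) : cc x m * vv x m = (1 / x) ^ m := by
  rw [cc, vv, ← Finset.prod_mul_distrib]
  rw [Finset.prod_congr rfl (g := fun _ => 1 / x) fun k _ => by
    have h1 := pow_sub_one_ne hx k
    have h0 := hx0 hx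
    field_simp
    ring]
  simp

lemma sum_Icc_one (f : ℕ → ℚ) (m : ℕ) : ∑ i ∈ Icc 1 m, f i = ∑ i ∈ range m, f (i + 1) := by
  induction m with
  | zero => simp
  | succ m ih => rw [Finset.sum_Icc_succ_top (by omega), ih, Finset.sum_range_succ]

lemma pascal (hx : 2 ≤ x) (a j : ℕ) :
    vv x (a + j + 2) / (vv x (a + 1) * vv x (j + 1)) =
      vv x (a + j + 1) / (vv x a * vv x (j + 1)) +
        (1 / x) ^ (a + 1) * (vv x (a + j + 1) / (vv x (a + 1) * vv x j)) := by
  have e : vv x (a + j + 2) = vv x (a + j + 1) * ((x ^ (a + j + 2) - 1) / x ^ (a + j + 2)) :=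
    vv_succ (a + j + 1)
  rw [e, vv_succ a, vv_succ j]
  have h0 := hx0 hx
  have h1 := pow_sub_one_ne hx a
  have h2 := pow_sub_one_ne hx j
  have h3 := pow_sub_one_ne hx (a + j + 1)
  have h4 := vv_ne hx a
  have h5 := vv_ne hx j
  have h6 := vv_ne hx (a + j + 1)
  simp only [div_pow, one_pow]
  field_simp
  ring

lemma S_eq (hx : 2 ≤ x) : ∀ m : ℕ,
    ∑ i ∈ range m, vv x m / (vv x (i + 1) * vv x (m - (i + 1))) * vv x i = (m : ℚ) := by
  have h0 := hx0 hx
  intro m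
  induction m with
  | zero => simp
  | succ m ih =>
    simp only [Nat.succ_sub_succ_eq_sub] at ih ⊢
    match m, ih with
    | 0, _ =>
      rw [Finset.sum_range_one]
      have : vv x 0 = 1 := by simp [vv]
      rw [this]
      field_simp [vv_ne hx 1]
      norm_num
    | (k+1 : ℕ), ih =>
      have hv0 : vv x 0 = 1 := by simp [vv]
      have hvne : ∀ r : ℕ, vv x r ≠ 0 := vv_ne hx
      -- peel the last term i = k+1
      rw [Finset.sum_range_succ, show k + 1 - (k + 1) = 0 by omega, hv0]
      have hlast : vv x (k + 1 + 1) / (vv x (k + 1 + 1) * 1) * vv x (k + 1) = vv x (k + 1) := by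
        rw [mul_one, div_self (hvne _), one_mul]
      rw [hlast]
      -- split each remaining term by Pascal
      have hsplit : ∀ i ∈ range (k + 1),
          vv x (k + 1 + 1) / (vv x (i + 1) * vv x (k + 1 - i)) * vv x i
            = vv x (k + 1) / (vv x i * vv x (k + 1 - i)) * vv x i +
              (1 / x) ^ (i + 1) * (vv x (k + 1) / (vv x (i + 1) * vv x (k - i)) * vv x i) := by
        intro i hi
        have hik : i < k + 1 := mem_range.1 hi
        have hp := pascal hx i (k - i)
        have e1 : i + (k - i) + 2 = k + 1 + 1 := by omega
        have e2 : (k - i) + 1 = k + 1 - i := by omega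
        have e3 : i + (k - i) + 1 = k + 1 := by omega
        rw [e1, e2, e3] at hp
        rw [hp]; ring
      rw [Finset.sum_congr rfl hsplit, Finset.sum_add_distrib]
      -- second sum: peel last term
      rw [Finset.sum_range_succ (fun i => (1 / x) ^ (i + 1) *
        (vv x (k + 1) / (vv x (i + 1) * vv x (k - i)) * vv x i))]
      -- first sum: peel first term
      rw [Finset.sum_range_succ' (fun i => vv x (k + 1) / (vv x i * vv x (k + 1 - i)) * vv x i)]
      simp only [show k - k = 0 by omega, Nat.sub_zero, hv0]
      have hfirst : vv x (k + 1) / (1 * vv x (k + 1)) * 1 = 1 := by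
        rw [one_mul, mul_one, div_self (hvne _)]
      have hlast2 : (1 / x) ^ (k + 1) * (vv x (k + 1) / (vv x (k + 1) * 1) * vv x k)
          = (1 / x) ^ (k + 1) * vv x k := by
        rw [mul_one, div_self (hvne _), one_mul]
      rw [hfirst, hlast2]
      -- rewrite shifted first-sum terms
      have hterm : ∀ i ∈ range k,
          vv x (k + 1) / (vv x (i + 1) * vv x (k + 1 - (i + 1))) * vv x (i + 1)
            = vv x (k + 1) / (vv x (i + 1) * vv x (k - i)) * vv x i -
              (1 / x) ^ (i + 1) * (vv x (k + 1) / (vv x (i + 1) * vv x (k - i)) * vv x i) := by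
        intro i hi
        rw [show k + 1 - (i + 1) = k - i by omega, vv_succ i]
        have h1 := pow_sub_one_ne hx i
        have h4 := hvne i
        have h5 := hvne (k - i)
        simp only [div_pow, one_pow]
        field_simp
      rw [Finset.sum_congr rfl hterm, Finset.sum_sub_distrib]
      -- use the induction hypothesis
      rw [Finset.sum_range_succ, show k + 1 - (k + 1) = 0 by omega, hv0] at ih
      have hih2 : vv x (k + 1) / (vv x (k + 1) * 1) * vv x k = vv x k := by
        rw [mul_one, div_self (hvne _), one_mul]
      rw [hih2] at ih
      simp only [Nat.succ_sub_succ_eq_sub] at ih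
      -- final algebraic identity
      have hvv : vv x (k + 1) = vv x k - (1 / x) ^ (k + 1) * vv x k := by
        rw [vv_succ k]
        have h1 := pow_sub_one_ne hx k
        simp only [div_pow, one_pow]
        field_simp
      push_cast
      push_cast at ih
      linarith [ih, hvv]

lemma cc_div (hx : 2 ≤ x) (m : ℕ) : cc x m = (1 / x) ^ m / vv x m := by
  rw [eq_div_iff (vv_ne hx m)]; exact cc_mul_vv hx m

lemma term (hx : 2 ≤ x) (a k : ℕ) :
    cc x k / (x ^ (a + 1) - 1) =
      cc x (a + k + 1) * (vv x (a + k + 1) / (vv x (a + 1) * vv x k)) * vv x a := by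
  have h0 := hx0 hx
  have h1 := pow_sub_one_ne hx a
  have h2 := vv_ne hx k
  have h3 := vv_ne hx a
  have h4 := vv_ne hx (a + k + 1)
  rw [cc_div hx k, cc_div hx (a + k + 1), vv_succ a]
  simp only [div_pow, one_pow]
  field_simp
  ring

lemma key (hx : 2 ≤ x) (m : ℕ) :
    ∑ i ∈ Icc 1 m, cc x (m - i) / (x ^ i - 1) = (m : ℚ) * cc x m := by
  rw [sum_Icc_one (fun i => cc x (m - i) / (x ^ i - 1)) m]
  have h : ∀ i ∈ range m, cc x (m - (i + 1)) / (x ^ (i + 1) - 1)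
      = cc x m * (vv x m / (vv x (i + 1) * vv x (m - (i + 1))) * vv x i) := by
    intro i hi
    have him : i < m := mem_range.1 hi
    obtain ⟨k, rfl⟩ : ∃ k, m = i + k + 1 := ⟨m - i - 1, by omega⟩
    rw [show i + k + 1 - (i + 1) = k by omega, term hx i k]
    ring
  rw [Finset.sum_congr rfl h, ← Finset.mul_sum, S_eq hx m]
  ring

lemma Wt_cons (x : ℚ) (i : ℕ) (s : Multiset ℕ) :
    Wt x (i ::ₘ s) = ((i : ℚ) * ((s.count i : ℚ) + 1) * (x ^ i - 1)) * Wt x s := by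
  classical
  unfold Wt
  rw [Multiset.toFinset_cons]
  by_cases h : i ∈ s.toFinset
  · rw [Finset.insert_eq_self.2 h]
    rw [← Finset.mul_prod_erase _ _ h, ← Finset.mul_prod_erase _ _ h]
    have hcount : ∀ j ∈ s.toFinset.erase i, (i ::ₘ s).count j = s.count j := fun j hj =>
      Multiset.count_cons_of_ne (Finset.ne_of_mem_erase hj) _
    have he : ∏ j ∈ s.toFinset.erase i,
        ((j : ℚ) ^ ((i ::ₘ s).count j) * (Nat.factorial ((i ::ₘ s).count j) : ℚ) *
          (x ^ j - 1) ^ ((i ::ₘ s).count j))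
        = ∏ j ∈ s.toFinset.erase i,
        ((j : ℚ) ^ (s.count j) * (Nat.factorial (s.count j) : ℚ) *
          (x ^ j - 1) ^ (s.count j)) :=
      Finset.prod_congr rfl fun j hj => by rw [hcount j hj]
    rw [he, Multiset.count_cons_self]
    push_cast [Nat.factorial_succ, pow_succ]
    ring
  · rw [Finset.prod_insert h]
    have hc0 : s.count i = 0 := Multiset.count_eq_zero.2 fun hm => h (Multiset.mem_toFinset.2 hm)
    have hcount : ∀ j ∈ s.toFinset, (i ::ₘ s).count j = s.count j := fun j hj =>
      Multiset.count_cons_of_ne (fun hji => h (by rw [← hji]; exact hj)) _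
    have he : ∏ j ∈ s.toFinset,
        ((j : ℚ) ^ ((i ::ₘ s).count j) * (Nat.factorial ((i ::ₘ s).count j) : ℚ) *
          (x ^ j - 1) ^ ((i ::ₘ s).count j))
        = ∏ j ∈ s.toFinset,
        ((j : ℚ) ^ (s.count j) * (Nat.factorial (s.count j) : ℚ) *
          (x ^ j - 1) ^ (s.count j)) :=
      Finset.prod_congr rfl fun j hj => by rw [hcount j hj]
    rw [he, Multiset.count_cons_self, hc0]
    simp [Nat.factorial]

lemma Wt_ne (hx : 2 ≤ x) {s : Multiset ℕ} (hs : ∀ j ∈ s, 0 < j) : Wt x s ≠ 0 := by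
  refine Finset.prod_ne_zero_iff.2 fun i hi => ?_
  have h1 : 1 ≤ i := hs i (Multiset.mem_toFinset.1 hi)
  exact mul_ne_zero
    (mul_ne_zero (pow_ne_zero _ (Nat.cast_ne_zero.2 (by omega)))
      (Nat.cast_ne_zero.2 (Nat.factorial_ne_zero _)))
    (pow_ne_zero _ (pow_sub_one_ne' hx h1))

lemma Gp_zero : Gp x 0 = 1 := by
  rw [Gp]
  have h : ∀ P : Nat.Partition 0, 1 / Wt x P.parts = 1 := fun P => by
    simp [Wt, P.partition_zero_parts]
  rw [Finset.sum_congr rfl fun P _ => h P]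
  simp

lemma toFinset_subset_Icc (m : ℕ) (P : Nat.Partition m) : P.parts.toFinset ⊆ Icc 1 m := by
  intro i hi
  have hmem := Multiset.mem_toFinset.1 hi
  have h1 := P.parts_pos hmem
  have h2 : i ≤ m := by
    have := Multiset.single_le_sum (fun _ _ => Nat.zero_le _) _ hmem
    rwa [P.parts_sum] at this
  exact mem_Icc.2 ⟨h1, h2⟩

lemma parts_sum_eq (m : ℕ) (P : Nat.Partition m) :
    ∑ i ∈ Icc 1 m, ((i : ℚ) * (P.parts.count i : ℚ)) = (m : ℚ) := by
  have hn : ∑ i ∈ Icc 1 m, i * P.parts.count i = m := by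
    rw [← Finset.sum_subset (toFinset_subset_Icc m P) (fun i _ hni => by
      rw [Multiset.count_eq_zero.2 (fun hm' => hni (Multiset.mem_toFinset.2 hm')), mul_zero])]
    conv_rhs => rw [← P.parts_sum]
    rw [Finset.sum_multiset_count]
    exact Finset.sum_congr rfl fun i _ => by rw [smul_eq_mul, mul_comm]
  exact_mod_cast hn

/-- add a part `i` to a partition of `m - i` -/
def addP (i m : ℕ) (hi1 : 1 ≤ i) (him : i ≤ m) (μ : Nat.Partition (m - i)) : Nat.Partition m where
  parts := i ::ₘ μ.parts
  parts_pos := fun {j} hj => by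
    rcases Multiset.mem_cons.1 hj with rfl | h
    · omega
    · exact μ.parts_pos h
  parts_sum := by rw [Multiset.sum_cons, μ.parts_sum]; omega

/-- delete a part `i` from a partition of `m` -/
def delP (i m : ℕ) (P : Nat.Partition m) (h : i ∈ P.parts) : Nat.Partition (m - i) where
  parts := P.parts.erase i
  parts_pos := fun {j} hj => P.parts_pos (Multiset.mem_of_mem_erase hj)
  parts_sum := by
    have h2 : i + (P.parts.erase i).sum = m := by
      rw [← Multiset.sum_cons, Multiset.cons_erase h, P.parts_sum]
    omega

lemma step3 (hx : 2 ≤ x) (m i : ℕ) (hi1 : 1 ≤ i) (him : i ≤ m) :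
    ∑ P : Nat.Partition m, ((i : ℚ) * (P.parts.count i : ℚ)) / Wt x P.parts
      = Gp x (m - i) / (x ^ i - 1) := by
  classical
  have hxne := pow_sub_one_ne' hx hi1
  rw [Gp, Finset.sum_div]
  have hcond : ∀ P ∈ (Finset.univ : Finset (Nat.Partition m)),
      ((i : ℚ) * (P.parts.count i : ℚ)) / Wt x P.parts ≠ 0 → i ∈ P.parts := by
    intro P _ hne
    by_contra hmem
    apply hne
    rw [Multiset.count_eq_zero.2 hmem]
    simp
  rw [← Finset.sum_filter_of_ne hcond]
  refine Finset.sum_bij'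
    (i := fun P hP => delP i m P (Finset.mem_filter.1 hP).2)
    (j := fun μ _ => addP i m hi1 him μ)
    (fun P hP => Finset.mem_univ _)
    (fun μ hμ => Finset.mem_filter.2 ⟨Finset.mem_univ _, Multiset.mem_cons_self _ _⟩)
    ?_ ?_ ?_
  · intro P hP
    apply Nat.Partition.ext
    exact Multiset.cons_erase (Finset.mem_filter.1 hP).2
  · intro μ hμ
    apply Nat.Partition.ext
    exact Multiset.erase_cons_head _ _
  · intro P hP
    have hmem := (Finset.mem_filter.1 hP).2
    have hP' : P.parts = i ::ₘ (P.parts.erase i) := (Multiset.cons_erase hmem).symm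
    have hWne : Wt x (P.parts.erase i) ≠ 0 :=
      Wt_ne hx fun j hj => P.parts_pos (Multiset.mem_of_mem_erase hj)
    have hine : (i : ℚ) ≠ 0 := Nat.cast_ne_zero.2 (by omega)
    have hcne : ((P.parts.erase i).count i : ℚ) + 1 ≠ 0 := by positivity
    rw [show (delP i m P (Finset.mem_filter.1 hP).2).parts = P.parts.erase i from rfl]
    conv_lhs => rw [hP']
    rw [Multiset.count_cons_self, Wt_cons]
    push_cast
    field_simp

lemma recur (hx : 2 ≤ x) (m : ℕ) :
    (m : ℚ) * Gp x m = ∑ i ∈ Icc 1 m, Gp x (m - i) / (x ^ i - 1) := by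
  rw [Gp, Finset.mul_sum]
  have h1 : ∀ P : Nat.Partition m, (m : ℚ) * (1 / Wt x P.parts)
      = ∑ i ∈ Icc 1 m, ((i : ℚ) * (P.parts.count i : ℚ)) / Wt x P.parts := by
    intro P
    rw [mul_one_div, ← parts_sum_eq m P, Finset.sum_div]
  rw [Finset.sum_congr rfl fun P _ => h1 P, Finset.sum_comm]
  exact Finset.sum_congr rfl fun i hi => by
    have h := mem_Icc.1 hi
    exact step3 hx m i h.1 h.2

lemma Gp_eq (hx : 2 ≤ x) : ∀ m, Gp x m = cc x m := by
  intro m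
  induction m using Nat.strong_induction_on with
  | _ m ih =>
    match m, ih with
    | 0, _ => rw [Gp_zero]; simp [cc]
    | (k+1 : ℕ), ih =>
      have hm : ((k+1 : ℕ) : ℚ) ≠ 0 := Nat.cast_ne_zero.2 (by omega)
      have h := recur hx (k+1)
      have h2 : ∑ i ∈ Icc 1 (k+1), Gp x (k+1-i) / (x^i-1)
          = ∑ i ∈ Icc 1 (k+1), cc x (k+1-i) / (x^i-1) :=
        Finset.sum_congr rfl fun i hi => by
          have hii := mem_Icc.1 hi
          rw [ih (k+1-i) (by omega)]
      rw [h2, key hx (k+1)] at h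
      exact mul_left_cancel₀ hm h

end ToriAux

open ToriAux

/-- The expected number of eigenvectors of a random `F`-stable maximal torus of
`GL_n(F̄_q)`: `∑_{λ ⊢ n} m₁(λ) |GL_n(q)| / w_q(λ) = q^(n²-n) (1 + 1/q + ⋯ + 1/q^(n-1))`. -/
theorem sum_tori_eigenvectors (q : ℕ) (hq : 2 ≤ q) (n : ℕ) (hn : 1 ≤ n) :
    ∑ P : Nat.Partition n,
        (P.parts.count 1 : ℚ) *
          ((∏ i ∈ range n, ((q : ℚ) ^ n - (q : ℚ) ^ i)) /
            (∏ i ∈ Icc 1 n,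
              ((i : ℚ) ^ (P.parts.count i) * (Nat.factorial (P.parts.count i) : ℚ) *
                ((q : ℚ) ^ i - 1) ^ (P.parts.count i))))
      = (q : ℚ) ^ (n ^ 2 - n) * ∑ i ∈ range n, 1 / (q : ℚ) ^ i := by
  set x : ℚ := (q : ℚ) with hxdef
  have hx : 2 ≤ x := by rw [hxdef]; exact_mod_cast hq
  have h0 := hx0 hx
  have h1 : x - 1 ≠ 0 := sub_ne_zero.2 (hx1 hx)
  have hW : ∀ P : Nat.Partition n,
      ∏ i ∈ Icc 1 n, ((i : ℚ) ^ (P.parts.count i) * (Nat.factorial (P.parts.count i) : ℚ) *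
          (x ^ i - 1) ^ (P.parts.count i)) = Wt x P.parts := by
    intro P
    rw [Wt]
    refine (Finset.prod_subset (toFinset_subset_Icc n P) fun i _ hni => ?_).symm
    rw [Multiset.count_eq_zero.2 (fun hm' => hni (Multiset.mem_toFinset.2 hm'))]
    simp
  set gl : ℚ := ∏ i ∈ range n, (x ^ n - x ^ i) with hgldef
  have hstep : ∑ P : Nat.Partition n,
      (P.parts.count 1 : ℚ) *
        (gl / (∏ i ∈ Icc 1 n, ((i : ℚ) ^ (P.parts.count i) *
          (Nat.factorial (P.parts.count i) : ℚ) * (x ^ i - 1) ^ (P.parts.count i))))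
      = gl * ∑ P : Nat.Partition n,
          (((1 : ℕ) : ℚ) * (P.parts.count 1 : ℚ)) / Wt x P.parts := by
    rw [Finset.mul_sum]
    refine Finset.sum_congr rfl fun P _ => by rw [hW P]; push_cast; ring
  rw [hstep, step3 hx n 1 le_rfl hn, Gp_eq hx (n - 1), pow_one]
  obtain ⟨t, rfl⟩ : ∃ t, n = t + 1 := ⟨n - 1, by omega⟩
  rw [show t + 1 - 1 = t by omega]
  -- RHS transformation
  have hR : x ^ ((t+1) ^ 2 - (t+1)) * ∑ i ∈ range (t+1), 1 / x ^ i
      = x ^ (t*t) * ∑ i ∈ range (t+1), x ^ i := by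
    have he : (t+1) ^ 2 - (t+1) = t*t + t := by
      have : (t+1) ^ 2 = t*t + t + (t+1) := by ring
      omega
    rw [he, Finset.mul_sum, Finset.mul_sum,
      ← Finset.sum_range_reflect (fun i => x ^ (t*t) * x ^ i) (t+1)]
    refine Finset.sum_congr rfl fun i hi => ?_
    have hit : i ≤ t := by have := mem_range.1 hi; omega
    rw [show t + 1 - 1 - i = t - i by omega, mul_one_div,
      div_eq_iff (pow_ne_zero i h0), mul_assoc, ← pow_add, ← pow_add]
    congr 1
    omega
  rw [hR]
  -- LHS transformation
  have hprod : gl = (∏ i ∈ range (t+1), x ^ i) * ∏ i ∈ range (t+1), (x ^ (i+1) - 1) := by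
    rw [hgldef, ← Finset.prod_range_reflect (fun i => x ^ (i+1) - 1) (t+1),
      ← Finset.prod_mul_distrib]
    refine Finset.prod_congr rfl fun i hi => ?_
    have hit : i ≤ t := by have := mem_range.1 hi; omega
    rw [show t + 1 - 1 - i = t - i by omega, mul_sub, mul_one, ← pow_add,
      show i + (t - i + 1) = t + 1 by omega]
  have hP2 : ∏ i ∈ range t, (x ^ (i+1) - 1) ≠ 0 :=
    Finset.prod_ne_zero_iff.2 fun i _ => pow_sub_one_ne hx i
  have hcc2 : cc x t = (∏ i ∈ range t, x ^ i) / (∏ i ∈ range t, (x ^ (i+1) - 1)) := by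
    rw [cc, Finset.prod_div_distrib]
  have hPQ : (∏ i ∈ range (t+1), x ^ i) * (∏ i ∈ range t, x ^ i) = x ^ (t*t) := by
    rw [Finset.prod_pow_eq_pow_sum, Finset.prod_pow_eq_pow_sum, ← pow_add]
    congr 1
    have g1 := Finset.sum_range_id_mul_two (t+1)
    have g2 := Finset.sum_range_id_mul_two t
    have e1 : (t+1) * ((t+1) - 1) = t*t + t := by
      rw [show (t+1) - 1 = t by omega]; ring
    have e2 : t * (t - 1) + t = t*t := by
      rcases Nat.eq_zero_or_pos t with rfl | ht
      · simp
      · obtain ⟨k, rfl⟩ : ∃ k, t = k + 1 := ⟨t - 1, by omega⟩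
        rw [show k + 1 - 1 = k by omega]; ring
    rw [e1] at g1
    omega
  rw [hprod, hcc2, Finset.prod_range_succ (fun i => x ^ (i+1) - 1),
    geom_sum_eq (hx1 hx) (t+1), ← hPQ]
  field_simp
end

section
/- Let q ≥ 2 be an integer (e.g. a prime power) and n ≥ 2. Then ∑_{λ ⊢ n} m₂(λ) · |GL_n(q)| / w_q(λ) = q^{n²−n} · q²(1 − 1/q^{n−1})(1 − 1/q^n)/(2(q² − 1)), as an identity in ℚ. (Equivalently, the expected number of parts of size 2, i.e. of irreducible dimension-two subtori, of a uniformly random F-stable maximal torus of GL_n(F̄_q) is q²(1 − q^{1−n})(1 − q^{−n})/(2(q² − 1)).) -/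
open Finset

namespace ToriM2

/-- The factor of `w` for part size `j` with multiplicity `c`. -/
def g (x : ℚ) (j c : ℕ) : ℚ := (j : ℚ) ^ c * (Nat.factorial c : ℚ) * (x ^ j - 1) ^ c

/-- The weight `w_q` as a product over `Icc 1 N`. -/
def w (x : ℚ) (N : ℕ) (s : Multiset ℕ) : ℚ := ∏ j ∈ Icc 1 N, g x j (s.count j)

/-- Sum over partitions of the reciprocal weights. -/
def T (x : ℚ) (m : ℕ) : ℚ := ∑ P : Nat.Partition m, (w x m P.parts)⁻¹

lemma xpow_sub_one_pos {x : ℚ} (hx : 1 < x) {j : ℕ} (hj : 1 ≤ j) : 0 < x ^ j - 1 := by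
  have := one_lt_pow₀ hx (Nat.one_le_iff_ne_zero.mp hj)
  linarith

lemma g_pos {x : ℚ} (hx : 1 < x) {j : ℕ} (hj : 1 ≤ j) (c : ℕ) : 0 < g x j c := by
  have h1 : (0:ℚ) < (j:ℚ) := by exact_mod_cast hj
  have h2 : (0:ℚ) < (Nat.factorial c : ℚ) := by exact_mod_cast c.factorial_pos
  have h3 := xpow_sub_one_pos hx hj
  have := pow_pos h1 c
  have := pow_pos h3 c
  unfold g
  positivity

lemma w_pos {x : ℚ} (hx : 1 < x) (N : ℕ) (s : Multiset ℕ) : 0 < w x N s := by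
  apply Finset.prod_pos
  intro j hj
  exact g_pos hx (mem_Icc.mp hj).1 _

lemma mem_le_sum {s : Multiset ℕ} {a : ℕ} (ha : a ∈ s) : a ≤ s.sum := by
  rw [← Multiset.cons_erase ha, Multiset.sum_cons]
  exact Nat.le_add_right _ _

lemma w_eq {x : ℚ} {N N' : ℕ} (hNN' : N ≤ N') {s : Multiset ℕ} (hs : ∀ a ∈ s, a ≤ N) :
    w x N' s = w x N s := by
  unfold w
  apply (Finset.prod_subset (Finset.Icc_subset_Icc_right hNN') ?_).symm
  intro j hj hj'
  have : j ∉ s := by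
    intro hmem
    exact hj' (mem_Icc.mpr ⟨(mem_Icc.mp hj).1, hs j hmem⟩)
  rw [Multiset.count_eq_zero_of_notMem this]
  simp [g]

lemma w_cons (x : ℚ) {N i : ℕ} (hi : i ∈ Icc 1 N) (s : Multiset ℕ) :
    w x N (i ::ₘ s) = ((i : ℚ) * ((s.count i : ℚ) + 1) * (x ^ i - 1)) * w x N s := by
  unfold w
  rw [← Finset.mul_prod_erase _ _ hi, ← Finset.mul_prod_erase _ (fun j => g x j (s.count j)) hi]
  have h1 : ∀ j ∈ (Icc 1 N).erase i, g x j ((i ::ₘ s).count j) = g x j (s.count j) := by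
    intro j hj
    rw [Multiset.count_cons_of_ne (Finset.ne_of_mem_erase hj)]
  rw [Finset.prod_congr rfl h1, Multiset.count_cons_self]
  have h2 : g x i (s.count i + 1)
      = ((i : ℚ) * ((s.count i : ℚ) + 1) * (x ^ i - 1)) * g x i (s.count i) := by
    unfold g
    rw [pow_succ, pow_succ, Nat.factorial_succ]
    push_cast
    ring
  rw [h2]
  ring

lemma sum_count_mul (s : Multiset ℕ) : ∀ (F : Finset ℕ), (∀ a ∈ s, a ∈ F) →
    ∑ i ∈ F, s.count i * i = s.sum := by
  induction s using Multiset.induction_on with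
  | empty => intro F _; simp
  | cons a t ih =>
    intro F hF
    have ha : a ∈ F := hF a (Multiset.mem_cons_self a t)
    have ht : ∀ b ∈ t, b ∈ F := fun b hb => hF b (Multiset.mem_cons_of_mem hb)
    simp only [Multiset.count_cons, Multiset.sum_cons]
    rw [Finset.sum_congr rfl (fun i _ => add_mul (t.count i) _ i), Finset.sum_add_distrib,
      ih F ht]
    have : ∑ i ∈ F, (if i = a then 1 else 0) * i = a := by
      have h1 : ∀ i ∈ F, (if i = a then 1 else 0) * i = (if i = a then i else 0) := by
        intro i _
        split <;> simp_all
      rw [Finset.sum_congr rfl h1, Finset.sum_ite_eq' F a (fun i => i)]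
      simp [ha]
    rw [this]
    omega


lemma removal (x : ℚ) (hx : 1 < x) {m i : ℕ} (hi1 : 1 ≤ i) (him : i ≤ m) :
    ∑ P : Nat.Partition m, (P.parts.count i : ℚ) * (w x m P.parts)⁻¹
      = ((i : ℚ) * (x ^ i - 1))⁻¹ * T x (m - i) := by
  classical
  rw [T, Finset.mul_sum]
  rw [← Finset.sum_filter_of_ne (s := Finset.univ)
      (p := fun P : Nat.Partition m => i ∈ P.parts) (fun P _ hP => ?_)]
  · refine Finset.sum_bij'
      (fun (P : Nat.Partition m) (hP : P ∈ Finset.univ.filter fun P => i ∈ P.parts) =>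
        (⟨P.parts.erase i,
          fun hj => P.parts_pos (Multiset.mem_of_mem_erase hj), ?_⟩ : Nat.Partition (m - i)))
      (fun (Q : Nat.Partition (m - i)) _ =>
        (⟨i ::ₘ Q.parts, ?_, ?_⟩ : Nat.Partition m))
      (fun P hP => Finset.mem_univ _)
      (fun Q hQ => Finset.mem_filter.mpr ⟨Finset.mem_univ _, Multiset.mem_cons_self i _⟩)
      ?_ ?_ ?_
    · -- sum of erase
      have hiP : i ∈ P.parts := (Finset.mem_filter.mp hP).2
      have := P.parts_sum
      have h2 : P.parts.sum = i + (P.parts.erase i).sum := by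
        conv_lhs => rw [← Multiset.cons_erase hiP]
        rw [Multiset.sum_cons]
      omega
    · -- positivity of cons
      intro j hj
      rcases Multiset.mem_cons.mp hj with h | h
      · omega
      · exact Q.parts_pos h
    · -- sum of cons
      rw [Multiset.sum_cons, Q.parts_sum]
      omega
    · -- left inverse
      intro P hP
      have hiP : i ∈ P.parts := (Finset.mem_filter.mp hP).2
      ext1
      exact Multiset.cons_erase hiP
    · -- right inverse
      intro Q hQ
      ext1
      exact Multiset.erase_cons_head i Q.parts
    · -- values
      intro P hP
      have hiP : i ∈ P.parts := (Finset.mem_filter.mp hP).2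
      set e := P.parts.erase i with he
      have hPe : P.parts = i ::ₘ e := (Multiset.cons_erase hiP).symm
      have hesum : e.sum = m - i := by
        have h2 : P.parts.sum = i + e.sum := by
          conv_lhs => rw [hPe]; rw [Multiset.sum_cons]
        have := P.parts_sum
        omega
      have hiIcc : i ∈ Icc 1 m := mem_Icc.mpr ⟨hi1, him⟩
      have hwcons : w x m P.parts
          = ((i : ℚ) * ((e.count i : ℚ) + 1) * (x ^ i - 1)) * w x m e := by
        rw [hPe]; exact w_cons x hiIcc e
      have hwe : w x m e = w x (m - i) e := by
        refine w_eq (Nat.sub_le m i) ?_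
        intro a ha
        have := mem_le_sum ha
        omega
      have hcount : (P.parts.count i : ℚ) = (e.count i : ℚ) + 1 := by
        rw [hPe, Multiset.count_cons_self]
        push_cast
        ring
      rw [hwcons, hwe, hcount]
      have hW : w x (m - i) e ≠ 0 := ne_of_gt (w_pos hx _ _)
      have hx1 : (x ^ i - 1) ≠ 0 := ne_of_gt (xpow_sub_one_pos hx hi1)
      have hi0 : (i : ℚ) ≠ 0 := Nat.cast_ne_zero.mpr (by omega)
      have hc : ((e.count i : ℚ) + 1) ≠ 0 := by positivity
      show ((e.count i : ℚ) + 1)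
            * ((i : ℚ) * ((e.count i : ℚ) + 1) * (x ^ i - 1) * w x (m - i) e)⁻¹
          = ((i : ℚ) * (x ^ i - 1))⁻¹ * (w x (m - i) e)⁻¹
      field_simp
  · -- zero terms
    by_contra hmem
    exact hP (by rw [Multiset.count_eq_zero_of_notMem hmem]; simp)


lemma recursion (x : ℚ) (hx : 1 < x) (m : ℕ) :
    (m : ℚ) * T x m = ∑ i ∈ Icc 1 m, (x ^ i - 1)⁻¹ * T x (m - i) := by
  have hstep : ∀ i ∈ Icc 1 m, (x ^ i - 1)⁻¹ * T x (m - i)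
      = ∑ P : Nat.Partition m, (i : ℚ) * ((P.parts.count i : ℚ) * (w x m P.parts)⁻¹) := by
    intro i hi
    obtain ⟨hi1, him⟩ := mem_Icc.mp hi
    rw [← Finset.mul_sum, removal x hx hi1 him, mul_inv]
    rw [← mul_assoc, ← mul_assoc, mul_inv_cancel₀ (Nat.cast_ne_zero.mpr (by omega : i ≠ 0)),
      one_mul]
  rw [Finset.sum_congr rfl hstep, Finset.sum_comm]
  rw [T, Finset.mul_sum]
  refine Finset.sum_congr rfl fun P _ => ?_
  have h1 : ∀ i ∈ Icc 1 m, (i : ℚ) * ((P.parts.count i : ℚ) * (w x m P.parts)⁻¹)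
      = ((P.parts.count i * i : ℕ) : ℚ) * (w x m P.parts)⁻¹ := by
    intro i _
    push_cast
    ring
  rw [Finset.sum_congr rfl h1, ← Finset.sum_mul, ← Nat.cast_sum]
  have h2 : ∑ i ∈ Icc 1 m, P.parts.count i * i = m := by
    rw [sum_count_mul P.parts (Icc 1 m) ?_, P.parts_sum]
    intro a ha
    have h3 := mem_le_sum ha
    rw [P.parts_sum] at h3
    exact mem_Icc.mpr ⟨P.parts_pos ha, h3⟩
  rw [h2]

instance : Unique (Nat.Partition 0) where
  default := ⟨0, by simp, rfl⟩
  uniq := by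
    intro P
    ext1
    by_contra h
    obtain ⟨a, ha⟩ := Multiset.exists_mem_of_ne_zero h
    have h1 := P.parts_pos ha
    have h2 := mem_le_sum ha
    rw [P.parts_sum] at h2
    omega

lemma T_zero (x : ℚ) : T x 0 = 1 := by
  rw [T, Fintype.sum_unique]
  show (w x 0 (0 : Multiset ℕ))⁻¹ = 1
  rw [w]
  simp


/-- `Q N = ∏_{j=1}^N (1 - y^j)` -/
def QQ (y : ℚ) (N : ℕ) : ℚ := ∏ j ∈ Ioc 0 N, (1 - y ^ j)

lemma one_sub_pow_pos {y : ℚ} (hy0 : 0 < y) (hy1 : y < 1) {j : ℕ} (hj : 1 ≤ j) :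
    0 < 1 - y ^ j := by
  have := pow_lt_one₀ (le_of_lt hy0) hy1 (by omega : j ≠ 0)
  linarith

lemma QQ_pos {y : ℚ} (hy0 : 0 < y) (hy1 : y < 1) (N : ℕ) : 0 < QQ y N := by
  apply Finset.prod_pos
  intro j hj
  exact one_sub_pow_pos hy0 hy1 (mem_Ioc.mp hj).1

lemma tele {y : ℚ} (N : ℕ) :
    ∑ k ∈ Ioc 0 N, y ^ k * ∏ j ∈ Ioc k N, (1 - y ^ j) = 1 - QQ y N := by
  induction N with
  | zero => simp [QQ]
  | succ N ih =>
    rw [Finset.sum_Ioc_succ_top (Nat.zero_le _)]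
    have h1 : ∀ k ∈ Ioc 0 N, y ^ k * ∏ j ∈ Ioc k (N + 1), (1 - y ^ j)
        = (1 - y ^ (N + 1)) * (y ^ k * ∏ j ∈ Ioc k N, (1 - y ^ j)) := by
      intro k hk
      rw [Finset.prod_Ioc_succ_top (mem_Ioc.mp hk).2]
      ring
    have hQ : QQ y (N + 1) = QQ y N * (1 - y ^ (N + 1)) :=
      Finset.prod_Ioc_succ_top (Nat.zero_le _) _
    rw [Finset.sum_congr rfl h1, ← Finset.mul_sum, ih, Finset.Ioc_self, Finset.prod_empty,
      mul_one, hQ]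
    ring

lemma Cid {y : ℚ} (hy0 : 0 < y) (hy1 : y < 1) (m : ℕ) :
    ∑ i ∈ Ioc 0 m, (∏ j ∈ Ioc (m - i) m, (1 - y ^ j)) * (1 - y ^ i)⁻¹ = (m : ℚ) := by
  induction m with
  | zero => simp
  | succ m ih =>
    rw [Finset.sum_Ioc_succ_top (Nat.zero_le _)]
    have htop : (∏ j ∈ Ioc (m + 1 - (m + 1)) (m + 1), (1 - y ^ j)) * (1 - y ^ (m + 1))⁻¹
        = QQ y m := by
      rw [Nat.sub_self, Finset.prod_Ioc_succ_top (Nat.zero_le _), mul_assoc,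
        mul_inv_cancel₀ (ne_of_gt (one_sub_pow_pos hy0 hy1 (by omega))), mul_one]
      rfl
    have hmain : ∀ i ∈ Ioc 0 m, (∏ j ∈ Ioc (m + 1 - i) (m + 1), (1 - y ^ j)) * (1 - y ^ i)⁻¹
        = (∏ j ∈ Ioc (m - i) m, (1 - y ^ j)) * (1 - y ^ i)⁻¹
          + y ^ (m + 1 - i) * ∏ j ∈ Ioc (m + 1 - i) m, (1 - y ^ j) := by
      intro i hi
      obtain ⟨hi0, him⟩ := mem_Ioc.mp hi
      have hsplit1 : ∏ j ∈ Ioc (m + 1 - i) (m + 1), (1 - y ^ j)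
          = (∏ j ∈ Ioc (m + 1 - i) m, (1 - y ^ j)) * (1 - y ^ (m + 1)) :=
        Finset.prod_Ioc_succ_top (by omega) _
      have hsplit2 : ∏ j ∈ Ioc (m - i) m, (1 - y ^ j)
          = (1 - y ^ (m + 1 - i)) * ∏ j ∈ Ioc (m + 1 - i) m, (1 - y ^ j) := by
        rw [← Finset.prod_Ioc_consecutive (fun j => 1 - y ^ j)
          (by omega : m - i ≤ m + 1 - i) (by omega : m + 1 - i ≤ m)]
        congr 1
        have : m + 1 - i = (m - i) + 1 := by omega
        rw [this, Nat.Ioc_succ_singleton, Finset.prod_singleton]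
      have hpow : y ^ (m + 1 - i) * y ^ i = y ^ (m + 1) := by
        rw [← pow_add]
        congr 1
        omega
      have hne : (1 - y ^ i) ≠ 0 := ne_of_gt (one_sub_pow_pos hy0 hy1 hi0)
      rw [hsplit1, hsplit2]
      field_simp
      linear_combination (∏ j ∈ Ioc (m + 1 - i) m, (1 - y ^ j)) * hpow
    rw [Finset.sum_congr rfl hmain, Finset.sum_add_distrib, ih, htop]
    have hre : ∑ i ∈ Ioc 0 m, y ^ (m + 1 - i) * ∏ j ∈ Ioc (m + 1 - i) m, (1 - y ^ j)
        = ∑ k ∈ Ioc 0 m, y ^ k * ∏ j ∈ Ioc k m, (1 - y ^ j) := by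
      refine Finset.sum_bij' (fun i _ => m + 1 - i) (fun k _ => m + 1 - k) ?_ ?_ ?_ ?_ ?_
      · intro a ha
        obtain ⟨h1, h2⟩ := mem_Ioc.mp ha
        simp only [mem_Ioc]
        omega
      · intro a ha
        obtain ⟨h1, h2⟩ := mem_Ioc.mp ha
        simp only [mem_Ioc]
        omega
      · intro a ha
        obtain ⟨h1, h2⟩ := mem_Ioc.mp ha
        omega
      · intro a ha
        obtain ⟨h1, h2⟩ := mem_Ioc.mp ha
        omega
      · intro a ha
        rfl
    rw [hre, tele]
    push_cast
    ring


/-- The closed form `F x m = x^(m(m-1)/2) / ∏_{j=1}^m (x^j - 1)`, factor by factor. -/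
def F (x : ℚ) (m : ℕ) : ℚ := ∏ j ∈ Ioc 0 m, (x ^ (j - 1) * (x ^ j - 1)⁻¹)

lemma factor_eq_y {x : ℚ} (hx : 1 < x) {j : ℕ} (hj : 1 ≤ j) :
    x ^ (j - 1) * (x ^ j - 1)⁻¹ = x⁻¹ * (1 - x⁻¹ ^ j)⁻¹ := by
  have hx0 : x ≠ 0 := by linarith
  have hxj : (x : ℚ) ^ j ≠ 0 := pow_ne_zero _ hx0
  have h1 : x ^ j - 1 = (1 - x⁻¹ ^ j) * x ^ j := by
    rw [sub_mul, one_mul, inv_pow, inv_mul_cancel₀ hxj]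
  have h2 : x ^ (j - 1) * (x ^ j)⁻¹ = x⁻¹ := by
    field_simp
    rw [← pow_succ]
    congr 1
    omega
  rw [h1, mul_inv, ← h2]
  ring

lemma xinv_sub_one {x : ℚ} (hx : 1 < x) {i : ℕ} (hi : 1 ≤ i) :
    (x ^ i - 1)⁻¹ = x⁻¹ ^ i * (1 - x⁻¹ ^ i)⁻¹ := by
  have hx0 : x ≠ 0 := by linarith
  have hxj : (x : ℚ) ^ i ≠ 0 := pow_ne_zero _ hx0
  have h1 : x ^ i - 1 = (1 - x⁻¹ ^ i) * x ^ i := by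
    rw [sub_mul, one_mul, inv_pow, inv_mul_cancel₀ hxj]
  rw [h1, mul_inv, inv_pow]
  ring

lemma F_eq_y {x : ℚ} (hx : 1 < x) (m : ℕ) : F x m = x⁻¹ ^ m * (QQ x⁻¹ m)⁻¹ := by
  rw [F, Finset.prod_congr rfl (fun j hj => factor_eq_y hx (mem_Ioc.mp hj).1),
    Finset.prod_mul_distrib, Finset.prod_const, Nat.card_Ioc, Nat.sub_zero, QQ,
    ← Finset.prod_inv_distrib]

lemma hy0 {x : ℚ} (hx : 1 < x) : 0 < x⁻¹ := by
  have : (0:ℚ) < x := by linarith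
  positivity

lemma hy1 {x : ℚ} (hx : 1 < x) : x⁻¹ < 1 := by
  rw [inv_lt_one_iff₀]
  right
  exact hx

lemma keyid {x : ℚ} (hx : 1 < x) (m : ℕ) :
    ∑ i ∈ Ioc 0 m, (x ^ i - 1)⁻¹ * F x (m - i) = (m : ℚ) * F x m := by
  have h0 := hy0 hx
  have h1 := hy1 hx
  have hQne : ∀ N, QQ x⁻¹ N ≠ 0 := fun N => ne_of_gt (QQ_pos h0 h1 N)
  have hterm : ∀ i ∈ Ioc 0 m, (x ^ i - 1)⁻¹ * F x (m - i)
      = x⁻¹ ^ m * (QQ x⁻¹ m)⁻¹ * ((∏ j ∈ Ioc (m - i) m, (1 - x⁻¹ ^ j)) * (1 - x⁻¹ ^ i)⁻¹) := by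
    intro i hi
    obtain ⟨hi1, him⟩ := mem_Ioc.mp hi
    have hpow : x⁻¹ ^ i * x⁻¹ ^ (m - i) = x⁻¹ ^ m := by
      rw [← pow_add]
      congr 1
      omega
    have hsplit : QQ x⁻¹ m = QQ x⁻¹ (m - i) * ∏ j ∈ Ioc (m - i) m, (1 - x⁻¹ ^ j) :=
      (Finset.prod_Ioc_consecutive _ (Nat.zero_le _) (Nat.sub_le m i)).symm
    have hprodne : (∏ j ∈ Ioc (m - i) m, (1 - x⁻¹ ^ j)) ≠ 0 := by
      intro h
      have h2 := hQne m
      rw [hsplit, h, mul_zero] at h2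
      exact h2 rfl
    have h1i : (1 - x⁻¹ ^ i) ≠ 0 := ne_of_gt (one_sub_pow_pos h0 h1 hi1)
    rw [xinv_sub_one hx hi1, F_eq_y hx, hsplit, mul_inv, ← hpow]
    linear_combination
      (-(x⁻¹ ^ i * x⁻¹ ^ (m - i) * (QQ x⁻¹ (m - i))⁻¹ * (1 - x⁻¹ ^ i)⁻¹)) *
        inv_mul_cancel₀ hprodne
  rw [Finset.sum_congr rfl hterm, ← Finset.mul_sum, Cid h0 h1, F_eq_y hx]
  ring

lemma Tclosed {x : ℚ} (hx : 1 < x) (m : ℕ) : T x m = F x m := by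
  induction m using Nat.strong_induction_on with
  | _ m ih =>
    rcases Nat.eq_zero_or_pos m with hm | hm
    · subst hm
      rw [T_zero, F]
      simp
    · have hrec := recursion x hx m
      have hIoc : Icc 1 m = Ioc 0 m := Finset.Icc_add_one_left_eq_Ioc 0 m
      rw [hIoc] at hrec
      have hsub : ∀ i ∈ Ioc 0 m, (x ^ i - 1)⁻¹ * T x (m - i) = (x ^ i - 1)⁻¹ * F x (m - i) := by
        intro i hi
        rw [ih (m - i) (by have := (mem_Ioc.mp hi).1; omega)]
      rw [Finset.sum_congr rfl hsub, keyid hx] at hrec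
      have hm0 : (m : ℚ) ≠ 0 := Nat.cast_ne_zero.mpr (by omega)
      exact mul_left_cancel₀ hm0 hrec

end ToriM2

/-- The expected number of parts of size 2 (irreducible dimension-two subtori) of a
uniformly random `F`-stable maximal torus of `GL_n(F̄_q)`:
`∑_{λ ⊢ n} m₂(λ) |GL_n(q)| / w_q(λ) = q^(n²-n) q²(1-1/q^(n-1))(1-1/q^n)/(2(q²-1))`. -/
theorem sum_tori_m2 (q : ℕ) (hq : 2 ≤ q) (n : ℕ) (hn : 2 ≤ n) :
    ∑ P : Nat.Partition n,
        (P.parts.count 2 : ℚ) *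
          ((∏ i ∈ range n, ((q : ℚ) ^ n - (q : ℚ) ^ i)) /
            (∏ i ∈ Icc 1 n,
              ((i : ℚ) ^ (P.parts.count i) * (Nat.factorial (P.parts.count i) : ℚ) *
                ((q : ℚ) ^ i - 1) ^ (P.parts.count i))))
      = (q : ℚ) ^ (n ^ 2 - n) *
          ((q : ℚ) ^ 2 * (1 - 1 / (q : ℚ) ^ (n - 1)) * (1 - 1 / (q : ℚ) ^ n)
            / (2 * ((q : ℚ) ^ 2 - 1))) := by
  have hx : (1 : ℚ) < (q : ℚ) := by
    have h : (2 : ℚ) ≤ (q : ℚ) := by exact_mod_cast hq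
    linarith
  have step1 : ∑ P : Nat.Partition n, (P.parts.count 2 : ℚ)
        * ((∏ i ∈ range n, ((q : ℚ) ^ n - (q : ℚ) ^ i)) / ToriM2.w (q : ℚ) n P.parts)
      = (∏ i ∈ range n, ((q : ℚ) ^ n - (q : ℚ) ^ i))
        * ((((2 : ℕ) : ℚ) * ((q : ℚ) ^ 2 - 1))⁻¹ * ToriM2.T (q : ℚ) (n - 2)) := by
    rw [← ToriM2.removal (q : ℚ) hx (by omega : 1 ≤ 2) hn, Finset.mul_sum]
    refine Finset.sum_congr rfl fun P _ => ?_
    rw [div_eq_mul_inv]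
    ring
  show ∑ P : Nat.Partition n, (P.parts.count 2 : ℚ)
        * ((∏ i ∈ range n, ((q : ℚ) ^ n - (q : ℚ) ^ i)) / ToriM2.w (q : ℚ) n P.parts) = _
  rw [step1, ToriM2.Tclosed hx]
  obtain ⟨k, rfl⟩ : ∃ k, n = k + 2 := ⟨n - 2, by omega⟩
  have hx0 : (q : ℚ) ≠ 0 := by positivity
  have hGL : ∏ i ∈ range (k + 2), ((q : ℚ) ^ (k + 2) - (q : ℚ) ^ i)
      = (q : ℚ) ^ (∑ i ∈ range (k + 2), i) * ∏ j ∈ Ioc 0 (k + 2), ((q : ℚ) ^ j - 1) := by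
    have h1 : ∀ i ∈ range (k + 2),
        (q : ℚ) ^ (k + 2) - (q : ℚ) ^ i = (q : ℚ) ^ i * ((q : ℚ) ^ (k + 2 - i) - 1) := by
      intro i hi
      have hi' := mem_range.mp hi
      rw [mul_sub, mul_one, ← pow_add]
      congr 2
      omega
    rw [Finset.prod_congr rfl h1, Finset.prod_mul_distrib, Finset.prod_pow_eq_pow_sum]
    congr 1
    refine Finset.prod_bij' (fun i _ => k + 2 - i) (fun j _ => k + 2 - j) ?_ ?_ ?_ ?_ ?_
    · intro a ha
      have := mem_range.mp ha
      simp only [mem_Ioc]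
      omega
    · intro a ha
      have := (mem_Ioc.mp ha).1
      simp only [mem_range]
      omega
    · intro a ha
      have := mem_range.mp ha
      omega
    · intro a ha
      have := (mem_Ioc.mp ha).2
      omega
    · intro a ha
      rfl
  have hFk : ToriM2.F (q : ℚ) k
      = (q : ℚ) ^ (∑ j ∈ Ioc 0 k, (j - 1)) * (∏ j ∈ Ioc 0 k, ((q : ℚ) ^ j - 1))⁻¹ := by
    rw [ToriM2.F, Finset.prod_mul_distrib, Finset.prod_pow_eq_pow_sum, Finset.prod_inv_distrib]
  have hsplit : ∏ j ∈ Ioc 0 (k + 2), ((q : ℚ) ^ j - 1)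
      = ((∏ j ∈ Ioc 0 k, ((q : ℚ) ^ j - 1)) * ((q : ℚ) ^ (k + 1) - 1))
          * ((q : ℚ) ^ (k + 2) - 1) := by
    rw [Finset.prod_Ioc_succ_top (Nat.zero_le _), Finset.prod_Ioc_succ_top (Nat.zero_le _)]
  have hk2 : k + 2 - 2 = k := rfl
  have hk1 : k + 2 - 1 = k + 1 := rfl
  rw [hk2, hk1, hGL, hFk, hsplit]
  -- nonvanishing
  have hPK : (∏ j ∈ Ioc 0 k, ((q : ℚ) ^ j - 1)) ≠ 0 := by
    apply ne_of_gt
    apply Finset.prod_pos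
    intro j hj
    exact ToriM2.xpow_sub_one_pos hx (mem_Ioc.mp hj).1
  have hP1 : ((q : ℚ) ^ (k + 1) - 1) ≠ 0 := ne_of_gt (ToriM2.xpow_sub_one_pos hx (by omega))
  have hP2 : ((q : ℚ) ^ (k + 2) - 1) ≠ 0 := ne_of_gt (ToriM2.xpow_sub_one_pos hx (by omega))
  have hD : ((2 : ℚ) * ((q : ℚ) ^ 2 - 1)) ≠ 0 := by
    have := ToriM2.xpow_sub_one_pos hx (by omega : 1 ≤ 2)
    positivity
  have hsq : (k + 2) ^ 2 - (k + 2) = k * k + 3 * k + 2 := by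
    have h : (k + 2) ^ 2 = k * k + 4 * k + 4 := by ring
    omega
  have hA : (∑ i ∈ range (k + 2), i) * 2 = k * k + 3 * k + 2 := by
    have h := Finset.sum_range_id_mul_two (k + 2)
    have h2 : (k + 2) * (k + 2 - 1) = k * k + 3 * k + 2 := by
      rw [hk1]; ring
    omega
  have hB : (∑ j ∈ Ioc 0 k, (j - 1)) * 2 + 2 * k = k * k + k := by
    have h : ∑ j ∈ Ioc 0 k, (j - 1) = ∑ i ∈ range k, i := by
      refine Finset.sum_bij' (fun j _ => j - 1) (fun i _ => i + 1) ?_ ?_ ?_ ?_ ?_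
      · intro a ha
        have := mem_Ioc.mp ha
        simp only [mem_range]
        omega
      · intro a ha
        have := mem_range.mp ha
        simp only [mem_Ioc]
        omega
      · intro a ha
        have := (mem_Ioc.mp ha).1
        omega
      · intro a ha
        omega
      · intro a ha
        rfl
    have h2 := Finset.sum_range_id_mul_two k
    have h3 : k * (k - 1) + k = k * k := by
      cases k with
      | zero => simp
      | succ t =>
        rw [Nat.succ_sub_one]
        ring
    omega
  rw [hsq]
  set A := ∑ i ∈ range (k + 2), i with hAdef
  set B := ∑ j ∈ Ioc 0 k, (j - 1) with hBdef
  have hpows : (q : ℚ) ^ A * (q : ℚ) ^ B * ((q : ℚ) ^ (k + 1) * (q : ℚ) ^ (k + 2))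
      = (q : ℚ) ^ (k * k + 3 * k + 2) * (q : ℚ) ^ 2 := by
    rw [← pow_add, ← pow_add, ← pow_add, ← pow_add]
    congr 1
    obtain ⟨K, hK⟩ : ∃ K, k * k = K := ⟨_, rfl⟩
    rw [hK] at hA ⊢
    omega
  have hq1 : ((q : ℚ) ^ (k + 1)) ≠ 0 := pow_ne_zero _ hx0
  have hq2 : ((q : ℚ) ^ (k + 2)) ≠ 0 := pow_ne_zero _ hx0
  have e1 : 1 - 1 / (q : ℚ) ^ (k + 1) = ((q : ℚ) ^ (k + 1) - 1) / (q : ℚ) ^ (k + 1) := by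
    field_simp
  have e2 : 1 - 1 / (q : ℚ) ^ (k + 2) = ((q : ℚ) ^ (k + 2) - 1) / (q : ℚ) ^ (k + 2) := by
    field_simp
  rw [e1, e2]
  have hc2 : ((2 : ℕ) : ℚ) = (2 : ℚ) := by norm_num
  rw [hc2]
  field_simp
  linear_combination hpows / ((q : ℚ) ^ 2 - 1)
end

section
/- Let q ≥ 2 be an integer (e.g. a prime power) and n ≥ 2. Then ∑_{λ ⊢ n} (m₁(λ)(m₁(λ)−1)/2 − m₂(λ)) · |GL_n(q)| / w_q(λ) = q^{n²−n} · (1/q) · (1 − 1/q^{n−1})(1 − 1/q^n) / ((1 − 1/q)(1 − 1/q²)), as an identity in ℚ. (Equivalently, for a uniformly random F-stable maximal torus of GL_n(F̄_q), the expected number of reducible dimension-two subtori minus the expected number of irreducible dimension-two subtori equals (1/q)(1 − q^{1−n})(1 − q^{−n})/((1 − 1/q)(1 − 1/q²)).) -/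
open Finset

namespace ToriAux

/-- numerator product `∏_{j<i} (1 - u^(m-j))` -/
def tN (u : ℚ) (m i : ℕ) : ℚ := ∏ j ∈ range i, (1 - u ^ (m - j))

/-- `t(m,i) = tN m i / (1-u^i)` -/
def tt (u : ℚ) (m i : ℕ) : ℚ := tN u m i / (1 - u ^ i)

variable {u : ℚ} (hu0 : 0 < u) (hu1 : u < 1)

lemma one_sub_pow_ne (hu0 : 0 < u) (hu1 : u < 1) {i : ℕ} (hi : i ≠ 0) : 1 - u ^ i ≠ 0 :=
  ne_of_gt (sub_pos.mpr (pow_lt_one₀ hu0.le hu1 hi))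

lemma tN_succ (m i : ℕ) : tN u m (i + 1) = tN u m i * (1 - u ^ (m - i)) :=
  prod_range_succ _ _

lemma tN_top (m i : ℕ) : tN u (m + 1) (i + 1) = (1 - u ^ (m + 1)) * tN u m i := by
  rw [tN, prod_range_succ', tN]
  simp only [Nat.succ_sub_succ_eq_sub, Nat.sub_zero]
  ring

lemma tt_one (hu0 : 0 < u) (hu1 : u < 1) (m : ℕ) :
    tt u (m + 1) 1 = 1 + u * tt u m 1 := by
  have h1 : (1 : ℚ) - u ≠ 0 := by
    have := one_sub_pow_ne hu0 hu1 (i := 1) one_ne_zero; simpa using this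
  rcases Nat.eq_zero_or_pos m with rfl | hm
  · simp [tt, tN, div_self h1]
  · have hN : tN u (m+1) 1 = 1 - u ^ (m+1) := by simp [tN]
    have hN' : tN u m 1 = 1 - u ^ m := by simp [tN]
    rw [tt, tt, hN, hN', pow_one]
    field_simp
    ring

lemma tt_rel (hu0 : 0 < u) (hu1 : u < 1) {m k : ℕ} (hk : 1 ≤ k) (hkm : k ≤ m) :
    tt u (m + 1) (k + 1) = (1 - u ^ k) * tt u m k + u ^ (k + 1) * tt u m (k + 1) := by
  have h1 : 1 - u ^ k ≠ 0 := one_sub_pow_ne hu0 hu1 (by omega)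
  have h2 : 1 - u ^ (k + 1) ≠ 0 := one_sub_pow_ne hu0 hu1 (by omega)
  have hm1 : m + 1 = (k + 1) + (m - k) := by omega
  have hmk : m - k + 1 = m - (k - 1) := by omega
  simp only [tt]
  rw [tN_top, tN_succ, hm1, pow_add]
  field_simp
  ring

lemma tt_self_succ (m : ℕ) : tt u m (m + 1) = 0 := by
  have : tN u m (m + 1) = 0 := by
    refine Finset.prod_eq_zero (Finset.self_mem_range_succ m) ?_
    simp
  rw [tt, this, zero_div]

lemma tt_sum (hu0 : 0 < u) (hu1 : u < 1) (m : ℕ) :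
    ∑ k ∈ range m, tt u m (k + 1) = m := by
  induction m with
  | zero => simp
  | succ m ih =>
    rw [Finset.sum_range_succ' (fun k => tt u (m + 1) (k + 1)) m]
    have key : ∀ k ∈ range m, tt u (m + 1) (k + 1 + 1) =
        (1 - u ^ (k + 1)) * tt u m (k + 1) + u ^ (k + 2) * tt u m (k + 2) := by
      intro k hk
      exact tt_rel hu0 hu1 (by omega) (by have := Finset.mem_range.mp hk; omega)
    rw [Finset.sum_congr rfl key, Finset.sum_add_distrib]
    have h3 := Finset.sum_range_succ (fun k => u ^ (k + 1) * tt u m (k + 1)) m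
    have h4 := Finset.sum_range_succ' (fun k => u ^ (k + 1) * tt u m (k + 1)) m
    have h2 : ∑ k ∈ range m, u ^ (k + 2) * tt u m (k + 2)
        = (∑ k ∈ range m, u ^ (k + 1) * tt u m (k + 1))
          + u ^ (m + 1) * tt u m (m + 1) - u ^ 1 * tt u m 1 := by
      have : ∑ k ∈ range m, u ^ (k + 1 + 1) * tt u m (k + 1 + 1)
          = ∑ k ∈ range m, u ^ (k + 2) * tt u m (k + 2) := by
        apply Finset.sum_congr rfl; intro k _; norm_num
      rw [← this]
      rw [h4] at h3
      norm_num at h3 ⊢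
      linarith [h3]
    rw [h2, tt_self_succ, tt_one hu0 hu1]
    have hcomb : ∑ k ∈ range m, (1 - u ^ (k + 1)) * tt u m (k + 1)
        + (∑ k ∈ range m, u ^ (k + 1) * tt u m (k + 1))
        = ∑ k ∈ range m, tt u m (k + 1) := by
      rw [← Finset.sum_add_distrib]
      apply Finset.sum_congr rfl; intro k _; ring
    push_cast
    linarith [hcomb]


/-! ### The closed form `T` -/

def TT (q : ℚ) (m : ℕ) : ℚ := q ^ (Nat.choose m 2) / ∏ j ∈ Icc 1 m, (q ^ j - 1)

variable {q : ℚ}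

lemma q_pos (hq : (2:ℚ) ≤ q) : 0 < q := by linarith
lemma q_ne (hq : (2:ℚ) ≤ q) : q ≠ 0 := ne_of_gt (q_pos hq)
lemma one_lt_q (hq : (2:ℚ) ≤ q) : 1 < q := by linarith

lemma qpow_sub_one_ne (hq : (2:ℚ) ≤ q) {i : ℕ} (hi : i ≠ 0) : q ^ i - 1 ≠ 0 := by
  have : 1 < q ^ i := one_lt_pow₀ (one_lt_q hq) hi
  linarith

lemma prod_qpow_sub_one_ne (hq : (2:ℚ) ≤ q) (m : ℕ) :
    ∏ j ∈ Icc 1 m, (q ^ j - 1) ≠ 0 := by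
  apply Finset.prod_ne_zero_iff.mpr
  intro j hj
  exact qpow_sub_one_ne hq (by have := (Finset.mem_Icc.mp hj).1; omega)

lemma inv_pos_q (hq : (2:ℚ) ≤ q) : 0 < q⁻¹ := inv_pos.mpr (q_pos hq)
lemma inv_lt_one_q (hq : (2:ℚ) ≤ q) : q⁻¹ < 1 := by
  rw [inv_lt_one_iff₀]; right; exact one_lt_q hq

lemma q_mul_one_sub_inv (hq : (2:ℚ) ≤ q) {j : ℕ} (hj : j ≠ 0) :
    q * (1 - (q⁻¹) ^ j) = (q ^ j - 1) / q ^ (j - 1) := by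
  obtain ⟨l, rfl⟩ : ∃ l, j = l + 1 := ⟨j - 1, by omega⟩
  have hq0 := q_ne hq
  rw [inv_pow, Nat.add_sub_cancel]
  field_simp
  ring

lemma TT_succ (hq : (2:ℚ) ≤ q) (m : ℕ) :
    TT q (m + 1) = TT q m * q ^ m / (q ^ (m + 1) - 1) := by
  have h1 := prod_qpow_sub_one_ne hq m
  have h2 := qpow_sub_one_ne hq (i := m + 1) (by omega)
  rw [TT, TT, Nat.choose_succ_succ, Nat.choose_one_right, pow_add,
    Finset.prod_Icc_succ_top (Nat.le_add_left 1 m)]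
  field_simp

lemma TT_sub (hq : (2:ℚ) ≤ q) {m i : ℕ} (him : i ≤ m) :
    TT q (m - i) = TT q m * q ^ i * tN q⁻¹ m i := by
  induction i with
  | zero => simp [tN]
  | succ i ih =>
    have hi : i ≤ m := by omega
    have ihe := ih hi
    have h1 : q ^ (m - i - 1) ≠ 0 := pow_ne_zero _ (q_ne hq)
    have h2 : q ^ (m - i) - 1 ≠ 0 := qpow_sub_one_ne hq (by omega)
    have hs := TT_succ hq (m - i - 1)
    rw [show m - i - 1 + 1 = m - i by omega] at hs
    have hstep : TT q (m - (i + 1)) = TT q (m - i) * (q ^ (m - i) - 1) / q ^ (m - i - 1) := by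
      rw [show m - (i + 1) = m - i - 1 by omega]
      rw [hs]
      field_simp
    have e2 : i + (m - i) = m := by omega
    have e1 : (i + 1) + (m - i - 1) = m := by omega
    have hqp : (q:ℚ) ^ (m - i) ≠ 0 := pow_ne_zero _ (q_ne hq)
    have hident : q ^ (i+1) * (1 - (q⁻¹) ^ (m - i)) * q ^ (m - i - 1)
        = q ^ i * (q ^ (m - i) - 1) := by
      calc q ^ (i+1) * (1 - (q⁻¹) ^ (m - i)) * q ^ (m - i - 1)
          = q ^ ((i+1) + (m-i-1)) * (1 - (q⁻¹)^(m-i)) := by rw [pow_add]; ring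
        _ = q ^ (i + (m-i)) * (1 - (q⁻¹)^(m-i)) := by rw [e1, e2]
        _ = q ^ i * (q ^ (m-i) - 1) := by rw [pow_add, inv_pow]; field_simp [hqp]
    rw [hstep, ihe, tN_succ, div_eq_iff h1]
    linear_combination (-(TT q m * tN q⁻¹ m i)) * hident

lemma TT_rec (hq : (2:ℚ) ≤ q) (m : ℕ) :
    ∑ k ∈ range m, TT q (m - (k + 1)) / (q ^ (k + 1) - 1) = m * TT q m := by
  have step : ∀ k ∈ range m, TT q (m - (k + 1)) / (q ^ (k + 1) - 1)
      = TT q m * tt q⁻¹ m (k + 1) := by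
    intro k hk
    have hk1 : k + 1 ≤ m := Finset.mem_range.mp hk
    rw [TT_sub hq hk1, tt]
    have h2 : q ^ (k + 1) - 1 ≠ 0 := qpow_sub_one_ne hq (by omega)
    have h3 : 1 - (q⁻¹ : ℚ) ^ (k + 1) ≠ 0 :=
      one_sub_pow_ne (inv_pos_q hq) (inv_lt_one_q hq) (by omega)
    have hq0 := q_ne hq
    rw [inv_pow] at h3 ⊢
    field_simp
  rw [Finset.sum_congr rfl step, ← Finset.mul_sum,
    tt_sum (inv_pos_q hq) (inv_lt_one_q hq) m, mul_comm]


/-! ### The weight `w` and sums over partitions -/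

open Multiset in
/-- the weight `w_q` of a partition, as a product over its distinct parts -/
def w (q : ℚ) (s : Multiset ℕ) : ℚ :=
  ∏ i ∈ s.toFinset, ((i : ℚ) ^ (s.count i) * (Nat.factorial (s.count i) : ℚ)
      * (q ^ i - 1) ^ (s.count i))

lemma w_zero : w q 0 = 1 := by simp [w]

open Multiset in
lemma w_cons (i : ℕ) (s : Multiset ℕ) :
    w q (i ::ₘ s) = (i : ℚ) * (s.count i + 1) * (q ^ i - 1) * w q s := by
  classical
  rw [w, w, toFinset_cons]
  by_cases hi : i ∈ s.toFinset
  · rw [Finset.insert_eq_self.mpr hi, ← Finset.mul_prod_erase _ _ hi,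
      ← Finset.mul_prod_erase _ _ hi]
    have hfix : ∏ j ∈ s.toFinset.erase i,
        ((j : ℚ) ^ ((i ::ₘ s).count j) * (Nat.factorial ((i ::ₘ s).count j) : ℚ)
          * (q ^ j - 1) ^ ((i ::ₘ s).count j))
        = ∏ j ∈ s.toFinset.erase i,
        ((j : ℚ) ^ (s.count j) * (Nat.factorial (s.count j) : ℚ)
          * (q ^ j - 1) ^ (s.count j)) := by
      apply Finset.prod_congr rfl
      intro j hj
      rw [count_cons_of_ne (Finset.ne_of_mem_erase hj) _]
    rw [hfix, count_cons_self, Nat.factorial_succ]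
    push_cast
    ring
  · rw [Finset.prod_insert hi]
    have hc0 : s.count i = 0 := by
      rw [Multiset.count_eq_zero]
      intro h; exact hi (mem_toFinset.mpr h)
    have hfix : ∏ j ∈ s.toFinset,
        ((j : ℚ) ^ ((i ::ₘ s).count j) * (Nat.factorial ((i ::ₘ s).count j) : ℚ)
          * (q ^ j - 1) ^ ((i ::ₘ s).count j))
        = ∏ j ∈ s.toFinset,
        ((j : ℚ) ^ (s.count j) * (Nat.factorial (s.count j) : ℚ)
          * (q ^ j - 1) ^ (s.count j)) := by
      apply Finset.prod_congr rfl
      intro j hj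
      rw [count_cons_of_ne (by rintro rfl; exact hi hj) _]
    rw [hfix, count_cons_self, hc0]
    simp [Nat.factorial]


open Multiset in
lemma w_ne_zero (hq : (2:ℚ) ≤ q) {s : Multiset ℕ} (hs : ∀ p ∈ s, 0 < p) :
    w q s ≠ 0 := by
  rw [w]
  apply Finset.prod_ne_zero_iff.mpr
  intro i hi
  have hipos : 0 < i := hs i (mem_toFinset.mp hi)
  have h1 : (i : ℚ) ≠ 0 := by positivity
  have h2 : (Nat.factorial (s.count i) : ℚ) ≠ 0 := by
    exact_mod_cast Nat.factorial_ne_zero _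
  have h3 : q ^ i - 1 ≠ 0 := qpow_sub_one_ne hq (by omega)
  positivity

lemma w_parts_ne_zero (hq : (2:ℚ) ≤ q) {m : ℕ} (P : Nat.Partition m) :
    w q P.parts ≠ 0 :=
  w_ne_zero hq fun _ hp => P.parts_pos hp

/-- The key removal bijection: if `F` vanishes on multisets not containing `i`, then summing
`F` over partitions of `m` is the same as summing `F (i ::ₘ ·)` over partitions of `m - i`. -/
lemma sum_remove {i m : ℕ} (hi : 0 < i) (him : i ≤ m) (F : Multiset ℕ → ℚ)
    (h0 : ∀ s : Multiset ℕ, i ∉ s → F s = 0) :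
    ∑ P : Nat.Partition m, F P.parts = ∑ Q : Nat.Partition (m - i), F (i ::ₘ Q.parts) := by
  classical
  rw [← Finset.sum_filter_of_ne (p := fun P : Nat.Partition m => i ∈ P.parts)
    (fun P _ hF => by by_contra h; exact hF (h0 _ h))]
  refine Finset.sum_bij' (fun P hP => ?_) (fun Q hQ => ?_) ?_ ?_ ?_ ?_ ?_
  · -- forward map : partition of m with i ∈ parts → partition of m - i
    refine ⟨P.parts.erase i, fun hj => P.parts_pos (Multiset.mem_of_mem_erase hj), ?_⟩
    have hmem : i ∈ P.parts := (Finset.mem_filter.mp hP).2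
    have := P.parts_sum
    have hce : i ::ₘ P.parts.erase i = P.parts := Multiset.cons_erase hmem
    have : (i ::ₘ P.parts.erase i).sum = m := by rw [hce, P.parts_sum]
    rw [Multiset.sum_cons] at this
    omega
  · -- backward map
    refine ⟨i ::ₘ Q.parts, fun hj => ?_, ?_⟩
    · rcases Multiset.mem_cons.mp hj with rfl | hj
      · exact hi
      · exact Q.parts_pos hj
    · rw [Multiset.sum_cons, Q.parts_sum]; omega
  · intro P hP; exact Finset.mem_univ _
  · intro Q hQ
    refine Finset.mem_filter.mpr ⟨Finset.mem_univ _, ?_⟩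
    exact Multiset.mem_cons_self i Q.parts
  · intro P hP
    apply Nat.Partition.ext
    exact Multiset.cons_erase (Finset.mem_filter.mp hP).2
  · intro Q hQ
    apply Nat.Partition.ext
    simp [Multiset.erase_cons_head]
  · intro P hP
    rw [Multiset.cons_erase (Finset.mem_filter.mp hP).2]

/-- the sum `A q m = ∑_{λ ⊢ m} 1 / w_q(λ)` -/
def A (q : ℚ) (m : ℕ) : ℚ := ∑ P : Nat.Partition m, 1 / w q P.parts


lemma sum_remove_count (hq : (2:ℚ) ≤ q) {i m m' : ℕ} (hi : 0 < i) (him : i ≤ m)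
    (hm' : m - i = m') (f : ℕ → ℚ) (hf0 : f 0 = 0) :
    ∑ P : Nat.Partition m, f (P.parts.count i) / w q P.parts
      = ∑ Q : Nat.Partition m', f (Q.parts.count i + 1) /
          ((i : ℚ) * ((Q.parts.count i : ℚ) + 1) * (q ^ i - 1) * w q Q.parts) := by
  subst hm'
  rw [sum_remove hi him (fun s => f (s.count i) / w q s) (fun s hs => by
    simp only [Multiset.count_eq_zero.mpr hs, hf0, zero_div])]
  apply Finset.sum_congr rfl
  intro Q _
  simp only [Multiset.count_cons_self, w_cons]

open Multiset in
lemma parts_count_sum {m : ℕ} (P : Nat.Partition m) :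
    ∑ k ∈ range m, (k + 1) * P.parts.count (k + 1) = m := by
  classical
  have h1 : ∑ a ∈ P.parts.toFinset, P.parts.count a * a = m := by
    have := Finset.sum_multiset_map_count P.parts (id : ℕ → ℕ)
    simp only [smul_eq_mul, id] at this
    rw [← this, Multiset.map_id', P.parts_sum]
  have hsub : P.parts.toFinset ⊆ Icc 1 m := by
    intro a ha
    rw [mem_toFinset] at ha
    refine Finset.mem_Icc.mpr ⟨P.parts_pos ha, ?_⟩
    rw [← P.parts_sum]
    exact Multiset.single_le_sum (fun x _ => Nat.zero_le x) a ha
  have h2 : ∑ a ∈ Icc 1 m, P.parts.count a * a = m := by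
    rw [← Finset.sum_subset hsub (fun x _ hx => by
      rw [Multiset.count_eq_zero.mpr (fun h => hx (mem_toFinset.mpr h)), zero_mul])]
    exact h1
  have h3 : ∑ a ∈ Icc 1 m, P.parts.count a * a
      = ∑ k ∈ range m, (k + 1) * P.parts.count (k + 1) := by
    rw [← Finset.Ico_add_one_right_eq_Icc, Finset.sum_Ico_eq_sum_range]
    try simp only [Nat.add_sub_cancel]
    apply Finset.sum_congr rfl
    intro k _
    rw [Nat.add_comm 1 k, Nat.mul_comm]
  rw [← h3, h2]

lemma R1 (hq : (2:ℚ) ≤ q) (m : ℕ) :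
    (m : ℚ) * A q m = ∑ k ∈ range m, A q (m - (k + 1)) / (q ^ (k + 1) - 1) := by
  have hstep1 : (m : ℚ) * A q m
      = ∑ P : Nat.Partition m, ∑ k ∈ range m,
          ((k + 1 : ℚ) * (P.parts.count (k + 1) : ℚ)) / w q P.parts := by
    rw [A, Finset.mul_sum]
    apply Finset.sum_congr rfl
    intro P _
    rw [← Finset.sum_div]
    rw [mul_one_div]
    congr 1
    have h := parts_count_sum P
    calc (m : ℚ) = ((∑ k ∈ range m, (k + 1) * P.parts.count (k + 1) : ℕ) : ℚ) := by rw [h]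
      _ = ∑ k ∈ range m, ((k : ℚ) + 1) * (P.parts.count (k + 1) : ℚ) := by push_cast; rfl
  rw [hstep1, Finset.sum_comm]
  apply Finset.sum_congr rfl
  intro k hk
  have hk1 : k + 1 ≤ m := Finset.mem_range.mp hk
  have := sum_remove_count hq (i := k + 1) (by omega) hk1 rfl
    (fun c => ((k : ℚ) + 1) * (c : ℚ)) (by simp)
  push_cast at this
  rw [this]
  rw [A, Finset.sum_div]
  apply Finset.sum_congr rfl
  intro Q _
  have hw := w_parts_ne_zero hq Q
  have hc1 : ((Q.parts.count (k+1) : ℚ) + 1) ≠ 0 := by positivity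
  have hk0 : ((k : ℚ) + 1) ≠ 0 := by positivity
  have hq1 : q ^ (k + 1) - 1 ≠ 0 := qpow_sub_one_ne hq (by omega)
  field_simp

lemma A_eq_TT (hq : (2:ℚ) ≤ q) (m : ℕ) : A q m = TT q m := by
  induction m using Nat.strong_induction_on with
  | _ m ih =>
    match m with
    | 0 =>
      have hdef : ∀ P : Nat.Partition 0, P.parts = 0 := by
        intro P
        rw [Multiset.eq_zero_iff_forall_notMem]
        intro a ha
        have h1 := P.parts_pos ha
        have h2 := P.parts_sum
        have := Multiset.single_le_sum (fun x _ => Nat.zero_le x) a ha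
        omega
      rw [A, Fintype.sum_unique]
      rw [hdef, w_zero]
      simp [TT]
    | (m + 1) =>
      have h1 := R1 hq (m + 1)
      have h2 : ∑ k ∈ range (m + 1), A q (m + 1 - (k + 1)) / (q ^ (k + 1) - 1)
          = ∑ k ∈ range (m + 1), TT q (m + 1 - (k + 1)) / (q ^ (k + 1) - 1) := by
        apply Finset.sum_congr rfl
        intro k hk
        rw [ih _ (by omega)]
      rw [h2, TT_rec hq] at h1
      have hm : ((m : ℚ) + 1) ≠ 0 := by positivity
      push_cast at h1
      field_simp at h1
      linarith [h1]


lemma two_mul_choose_two (n : ℕ) : 2 * Nat.choose n 2 = n * (n - 1) := by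
  induction n with
  | zero => simp
  | succ n ih =>
    rw [Nat.choose_succ_succ, Nat.choose_one_right, Nat.succ_sub_one]
    match n, ih with
    | 0, _ => simp
    | (j + 1), ih =>
      rw [Nat.succ_sub_one] at ih
      nlinarith [ih]

lemma GL_fact (q : ℚ) (n : ℕ) :
    ∏ i ∈ range n, (q ^ n - q ^ i) = q ^ (Nat.choose n 2) * ∏ j ∈ Icc 1 n, (q ^ j - 1) := by
  have h1 : ∀ i ∈ range n, q ^ n - q ^ i = q ^ i * (q ^ (n - i) - 1) := by
    intro i hi
    have hin : i ≤ n := le_of_lt (Finset.mem_range.mp hi)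
    rw [mul_sub, mul_one, ← pow_add, show i + (n - i) = n by omega]
  rw [Finset.prod_congr rfl h1, Finset.prod_mul_distrib, Finset.prod_pow_eq_pow_sum]
  have h2 : ∑ i ∈ range n, i = Nat.choose n 2 := by
    have h3 := Finset.sum_range_id_mul_two n
    have h4 := two_mul_choose_two n
    omega
  rw [h2]
  congr 1
  have h5 : ∏ j ∈ Icc 1 n, (q ^ j - 1) = ∏ i ∈ range n, (q ^ (1 + i) - 1) := by
    rw [← Finset.Ico_add_one_right_eq_Icc, Finset.prod_Ico_eq_prod_range, Nat.add_sub_cancel]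
  rw [h5, ← Finset.prod_range_reflect]
  apply Finset.prod_congr rfl
  intro j hj
  have hjn : j < n := Finset.mem_range.mp hj
  rw [show n - (n - 1 - j) = 1 + j by omega]

lemma prod_Icc_split (q : ℚ) (k : ℕ) :
    ∏ j ∈ Icc 1 (k + 2), (q ^ j - 1)
      = (∏ j ∈ Icc 1 k, (q ^ j - 1)) * (q ^ (k + 1) - 1) * (q ^ (k + 2) - 1) := by
  rw [Finset.prod_Icc_succ_top (by omega : 1 ≤ k + 2),
    Finset.prod_Icc_succ_top (by omega : 1 ≤ k + 1)]

lemma GL_mul_TT (hq : (2:ℚ) ≤ q) (k : ℕ) :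
    (∏ i ∈ range (k + 2), (q ^ (k + 2) - q ^ i)) * TT q k
      = q ^ (k * k + k + 1) * ((q ^ (k + 1) - 1) * (q ^ (k + 2) - 1)) := by
  have hPP := prod_qpow_sub_one_ne hq k
  have hch : Nat.choose (k + 2) 2 + Nat.choose k 2 = k * k + k + 1 := by
    have h1 := two_mul_choose_two (k + 2)
    have h2 := two_mul_choose_two k
    match k, h2 with
    | 0, _ => decide
    | (j + 1), h2 =>
      rw [Nat.succ_sub_one] at h2
      rw [show j + 1 + 2 - 1 = j + 2 by omega] at h1
      nlinarith [h1, h2]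
  rw [GL_fact, TT, prod_Icc_split]
  field_simp
  rw [← hch, pow_add]
  ring


open Multiset in
lemma prod_Icc_eq_w {n : ℕ} (P : Nat.Partition n) :
    ∏ i ∈ Icc 1 n, ((i : ℚ) ^ (P.parts.count i) * (Nat.factorial (P.parts.count i) : ℚ)
      * (q ^ i - 1) ^ (P.parts.count i)) = w q P.parts := by
  rw [w]
  symm
  apply Finset.prod_subset
  · intro a ha
    rw [mem_toFinset] at ha
    refine Finset.mem_Icc.mpr ⟨P.parts_pos ha, ?_⟩
    rw [← P.parts_sum]
    exact Multiset.single_le_sum (fun x _ => Nat.zero_le x) a ha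
  · intro x _ hx
    rw [Multiset.count_eq_zero.mpr (fun h => hx (mem_toFinset.mpr h))]
    simp [Nat.factorial]

end ToriAux

set_option maxHeartbeats 1600000 in
open ToriAux in
/-- The expected excess of reducible over irreducible dimension-two subtori of a
uniformly random `F`-stable maximal torus of `GL_n(F̄_q)`:
`∑_{λ ⊢ n} (m₁(m₁-1)/2 - m₂) |GL_n(q)| / w_q(λ)
  = q^(n²-n) (1/q)(1-1/q^(n-1))(1-1/q^n)/((1-1/q)(1-1/q²))`. -/
theorem sum_tori_excess_dim_two (q : ℕ) (hq : 2 ≤ q) (n : ℕ) (hn : 2 ≤ n) :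
    ∑ P : Nat.Partition n,
        ((P.parts.count 1 : ℚ) * ((P.parts.count 1 : ℚ) - 1) / 2
            - (P.parts.count 2 : ℚ)) *
          ((∏ i ∈ range n, ((q : ℚ) ^ n - (q : ℚ) ^ i)) /
            (∏ i ∈ Icc 1 n,
              ((i : ℚ) ^ (P.parts.count i) * (Nat.factorial (P.parts.count i) : ℚ) *
                ((q : ℚ) ^ i - 1) ^ (P.parts.count i))))
      = (q : ℚ) ^ (n ^ 2 - n) *
          ((1 / (q : ℚ)) * (1 - 1 / (q : ℚ) ^ (n - 1)) * (1 - 1 / (q : ℚ) ^ n)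
            / ((1 - 1 / (q : ℚ)) * (1 - 1 / (q : ℚ) ^ 2))) := by
  obtain ⟨k, rfl⟩ : ∃ k, n = k + 2 := ⟨n - 2, by omega⟩
  have hq2 : (2:ℚ) ≤ (q:ℚ) := by exact_mod_cast hq
  have hqQ : (q:ℚ) ≠ 0 := q_ne hq2
  have hq1 : (q:ℚ) - 1 ≠ 0 := by
    have := qpow_sub_one_ne hq2 (i := 1) one_ne_zero; simpa using this
  have hq2' : (q:ℚ)^2 - 1 ≠ 0 := qpow_sub_one_ne hq2 (by omega)
  have hqk1 : (q:ℚ)^(k+1) - 1 ≠ 0 := qpow_sub_one_ne hq2 (by omega)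
  have hqk2 : (q:ℚ)^(k+2) - 1 ≠ 0 := qpow_sub_one_ne hq2 (by omega)
  set G : ℚ := ∏ i ∈ range (k+2), ((q:ℚ)^(k+2) - (q:ℚ)^i) with hG
  -- Step 1 : split the sum
  have hsplit : ∑ P : Nat.Partition (k+2),
        ((P.parts.count 1 : ℚ) * ((P.parts.count 1 : ℚ) - 1) / 2
            - (P.parts.count 2 : ℚ)) *
          (G / (∏ i ∈ Icc 1 (k+2),
              ((i : ℚ) ^ (P.parts.count i) * (Nat.factorial (P.parts.count i) : ℚ) *
                ((q : ℚ) ^ i - 1) ^ (P.parts.count i))))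
      = G * (∑ P : Nat.Partition (k+2),
            ((P.parts.count 1 : ℚ) * ((P.parts.count 1 : ℚ) - 1) / 2) / w (q:ℚ) P.parts)
        - G * (∑ P : Nat.Partition (k+2), (P.parts.count 2 : ℚ) / w (q:ℚ) P.parts) := by
    rw [Finset.mul_sum, Finset.mul_sum, ← Finset.sum_sub_distrib]
    apply Finset.sum_congr rfl
    intro P _
    rw [prod_Icc_eq_w]
    ring
  -- Step 2 : the first sum
  have hS1 : (∑ P : Nat.Partition (k+2),
        ((P.parts.count 1 : ℚ) * ((P.parts.count 1 : ℚ) - 1) / 2) / w (q:ℚ) P.parts)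
      = (1 / (2 * ((q:ℚ) - 1)^2)) * A (q:ℚ) k := by
    have step1 := sum_remove_count (q := (q:ℚ)) hq2 (i := 1) (m := k+2) one_pos (by omega)
      (by omega : k + 2 - 1 = k + 1) (fun c => (c:ℚ) * ((c:ℚ) - 1) / 2) (by norm_num)
    rw [step1]
    have step2 := sum_remove_count (q := (q:ℚ)) hq2 (i := 1) (m := k+1) one_pos (by omega)
      (by omega : k + 1 - 1 = k) (fun c => (c:ℚ) / (2 * ((q:ℚ) - 1))) (by norm_num)
    have mid : ∑ Q : Nat.Partition (k+1), ((Q.parts.count 1 + 1 : ℕ) : ℚ)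
          * (((Q.parts.count 1 + 1 : ℕ) : ℚ) - 1) / 2 /
          (((1:ℕ) : ℚ) * ((Q.parts.count 1 : ℚ) + 1) * ((q:ℚ)^1 - 1) * w (q:ℚ) Q.parts)
        = ∑ Q : Nat.Partition (k+1), ((Q.parts.count 1 : ℚ) / (2 * ((q:ℚ) - 1))) / w (q:ℚ) Q.parts := by
      apply Finset.sum_congr rfl
      intro Q _
      have hw := w_parts_ne_zero hq2 Q
      have hc : ((Q.parts.count 1 : ℚ) + 1) ≠ 0 := by positivity
      push_cast
      rw [pow_one]
      field_simp
      ring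
    rw [mid, step2]
    rw [A, Finset.mul_sum]
    apply Finset.sum_congr rfl
    intro R _
    have hw := w_parts_ne_zero hq2 R
    have hc : ((R.parts.count 1 : ℚ) + 1) ≠ 0 := by positivity
    push_cast
    rw [pow_one]
    field_simp
  -- Step 3 : the second sum
  have hS2 : (∑ P : Nat.Partition (k+2), (P.parts.count 2 : ℚ) / w (q:ℚ) P.parts)
      = (1 / (2 * ((q:ℚ)^2 - 1))) * A (q:ℚ) k := by
    have step1 := sum_remove_count (q := (q:ℚ)) hq2 (i := 2) (m := k+2) (by omega) (by omega)
      (by omega : k + 2 - 2 = k) (fun c => (c:ℚ)) (by norm_num)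
    rw [step1]
    rw [A, Finset.mul_sum]
    apply Finset.sum_congr rfl
    intro R _
    have hw := w_parts_ne_zero hq2 R
    have hc : ((R.parts.count 2 : ℚ) + 1) ≠ 0 := by positivity
    push_cast
    field_simp
  rw [hsplit, hS1, hS2, A_eq_TT hq2 k]
  have hGA := GL_mul_TT hq2 k
  have hexp : (k+2)^2 - (k+2) = k*k + 3*k + 2 := by
    have h : (k+2)^2 = k*k + 4*k + 4 := by ring
    omega
  rw [hexp, show k + 2 - 1 = k + 1 by omega]
  calc G * ((1 / (2 * ((q:ℚ) - 1)^2)) * TT (q:ℚ) k)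
        - G * ((1 / (2 * ((q:ℚ)^2 - 1))) * TT (q:ℚ) k)
      = (G * TT (q:ℚ) k) * ((1 / (2 * ((q:ℚ) - 1)^2)) - (1 / (2 * ((q:ℚ)^2 - 1)))) := by ring
    _ = ((q:ℚ) ^ (k*k+k+1) * (((q:ℚ)^(k+1) - 1) * ((q:ℚ)^(k+2) - 1)))
          * ((1 / (2 * ((q:ℚ) - 1)^2)) - (1 / (2 * ((q:ℚ)^2 - 1)))) := by rw [hGA]
    _ = (q : ℚ) ^ (k*k + 3*k + 2) *
          ((1 / (q : ℚ)) * (1 - 1 / (q : ℚ) ^ (k+1)) * (1 - 1 / (q : ℚ) ^ (k+2))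
            / ((1 - 1 / (q : ℚ)) * (1 - 1 / (q : ℚ) ^ 2))) := by
        have hk1 : ((q:ℚ))^(k+1) ≠ 0 := pow_ne_zero _ hqQ
        have hk2 : ((q:ℚ))^(k+2) ≠ 0 := pow_ne_zero _ hqQ
        field_simp
        ring
end
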